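/- arXiv:2403.16843 — 8 statements merged into one kernel-verified Lean document; each statement's English description precedes it below -/
import Mathlib

section
/- For any d, Δ ∈ ℕ+ and any vectors ℓ_1, …, ℓ_Δ ∈ ℝ^d, min_{j ∈ [d]} Σ_{t=1}^Δ ℓ_t(j) − Σ_{t=1}^Δ min_{j ∈ [d]} ℓ_t(j) ≤ 2Δ · Σ_{t=1}^{Δ−1} ‖ℓ_{t+1} − ℓ_t‖_∞. -/
open Finset

/-- Within a window of `Δ` rounds, the gap between the best fixed action in hindsight and
the per-round best actions is bounded by `2Δ` times the total variation of the losses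
(in sup-norm) within the window. -/
theorem stmt_4 (d Δ : ℕ) (hd : 0 < d) (hΔ : 0 < Δ) (ℓ : ℕ → Fin d → ℝ) :
    (⨅ j : Fin d, ∑ t ∈ range Δ, ℓ t j) - ∑ t ∈ range Δ, ⨅ j : Fin d, ℓ t j ≤
      2 * Δ * ∑ t ∈ range (Δ - 1), ‖ℓ (t + 1) - ℓ t‖ := by
  haveI : Nonempty (Fin d) := ⟨⟨0, hd⟩⟩
  set V := ∑ t ∈ range (Δ - 1), ‖ℓ (t + 1) - ℓ t‖ with hV
  have hVnonneg : 0 ≤ V := Finset.sum_nonneg fun _ _ => norm_nonneg _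
  have key : ∀ t < Δ, ∀ j, |ℓ t j - ℓ 0 j| ≤ V := by
    intro t ht j
    have h1 : ℓ t j - ℓ 0 j = ∑ s ∈ range t, (ℓ (s+1) j - ℓ s j) :=
      (Finset.sum_range_sub (fun s => ℓ s j) t).symm
    rw [h1]
    calc |∑ s ∈ range t, (ℓ (s+1) j - ℓ s j)| ≤ ∑ s ∈ range t, |ℓ (s+1) j - ℓ s j| :=
          Finset.abs_sum_le_sum_abs _ _
      _ ≤ ∑ s ∈ range t, ‖ℓ (s+1) - ℓ s‖ := Finset.sum_le_sum fun s _ => by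
          simpa using norm_le_pi_norm (ℓ (s+1) - ℓ s) j
      _ ≤ V := Finset.sum_le_sum_of_subset_of_nonneg
          (Finset.range_subset_range.mpr (by omega)) (fun _ _ _ => norm_nonneg _)
  obtain ⟨j₀, hj₀⟩ := Finite.exists_min (ℓ 0)
  have h2 : (⨅ j : Fin d, ∑ t ∈ range Δ, ℓ t j) ≤ ∑ t ∈ range Δ, (ℓ 0 j₀ + V) := by
    refine le_trans (ciInf_le (Finite.bddBelow_range _) j₀) ?_
    refine Finset.sum_le_sum fun t ht => ?_
    have h := (abs_le.mp (key t (Finset.mem_range.mp ht) j₀)).2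
    linarith
  have h3 : ∀ t ∈ range Δ, (ℓ 0 j₀ - V) ≤ ⨅ j : Fin d, ℓ t j := by
    intro t ht
    refine le_ciInf fun j => ?_
    have h4 := (abs_le.mp (key t (Finset.mem_range.mp ht) j)).1
    have h5 := hj₀ j
    linarith
  have h5 : ∑ t ∈ range Δ, (ℓ 0 j₀ - V) ≤ ∑ t ∈ range Δ, ⨅ j : Fin d, ℓ t j :=
    Finset.sum_le_sum h3
  simp only [Finset.sum_const, Finset.card_range, nsmul_eq_mul] at h2 h5
  have hring : (Δ:ℝ) * (ℓ 0 j₀ + V) - Δ * (ℓ 0 j₀ - V) = 2 * Δ * V := by ring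
  linarith
end

section
/- Let d, T, Δ ∈ ℕ+ with Δ ≤ T, let ℓ_1, …, ℓ_T ∈ ℝ^d, and partition [T] into m = ⌈T/Δ⌉ consecutive batches T_1, …, T_m, each of size at most Δ. Let π_1, …, π_T ∈ Δ([d]) be policies, and suppose there is F ≥ 0 such that for every batch k ∈ [m] one has Σ_{t∈T_k} ⟨ℓ_t, π_t⟩ − min_{j∈[d]} Σ_{t∈T_k} ℓ_t(j) ≤ F. Then the dynamic regret satisfies Σ_{t=1}^T ⟨ℓ_t, π_t⟩ − Σ_{t=1}^T min_{j∈[d]} ℓ_t(j) ≤ (T/Δ + 1)·F + 2Δ·V_T, where V_T := Σ_{t=1}^{T−1} ‖ℓ_{t+1} − ℓ_t‖_∞. -/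
open Finset

lemma batch_set (a b N : ℕ) :
    Finset.Ico a (min b N) = (Finset.Ico a b).filter (· < N) := by
  ext t
  simp only [Finset.mem_Ico, Finset.mem_filter]
  omega

lemma sum_blocks (g : ℕ → ℝ) (m Δ : ℕ) :
    ∑ k ∈ range m, ∑ t ∈ Ico (k*Δ) ((k+1)*Δ), g t = ∑ t ∈ range (m*Δ), g t := by
  induction m with
  | zero => simp
  | succ m ih =>
    rw [sum_range_succ, ih, range_eq_Ico, range_eq_Ico]
    exact Finset.sum_Ico_consecutive g (Nat.zero_le (m*Δ))
      (Nat.mul_le_mul_right Δ (Nat.le_succ m))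

lemma sum_blocks_trunc (g : ℕ → ℝ) (m Δ N : ℕ) (h : N ≤ m*Δ) :
    ∑ k ∈ range m, ∑ t ∈ Ico (k*Δ) (min ((k+1)*Δ) N), g t = ∑ t ∈ range N, g t := by
  have h1 : ∀ k, ∑ t ∈ Ico (k*Δ) (min ((k+1)*Δ) N), g t
      = ∑ t ∈ Ico (k*Δ) ((k+1)*Δ), (if t < N then g t else 0) := by
    intro k; rw [batch_set, Finset.sum_filter]
  simp_rw [h1]
  rw [sum_blocks, range_eq_Ico, ← Finset.sum_Ico_consecutive _ (Nat.zero_le N) h, range_eq_Ico]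
  have h2 : ∑ t ∈ Ico N (m*Δ), (if t < N then g t else 0) = 0 :=
    Finset.sum_eq_zero (fun t ht => by
      rw [Finset.mem_Ico] at ht; rw [if_neg (by omega)])
  rw [h2, add_zero]
  exact Finset.sum_congr rfl (fun t ht => by
    rw [Finset.mem_Ico] at ht; rw [if_pos (by omega)])

lemma norm_tele {d : ℕ} (ℓ : ℕ → Fin d → ℝ) (a : ℕ) :
    ∀ t, a ≤ t → ‖ℓ t - ℓ a‖ ≤ ∑ s ∈ Ico a t, ‖ℓ (s+1) - ℓ s‖ := by
  intro t h
  induction t, h using Nat.le_induction with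
  | base => simp
  | succ t ht ih =>
    rw [Finset.sum_Ico_succ_top (by omega)]
    calc ‖ℓ (t+1) - ℓ a‖ = ‖(ℓ (t+1) - ℓ t) + (ℓ t - ℓ a)‖ := by rw [sub_add_sub_cancel]
      _ ≤ ‖ℓ (t+1) - ℓ t‖ + ‖ℓ t - ℓ a‖ := norm_add_le _ _
      _ ≤ _ := by linarith


/-- Restarting lemma: if over each of the `m = ⌈T/Δ⌉` consecutive batches of size at most
`Δ` the (static) regret is at most `F`, then the dynamic regret over the whole horizon is
at most `(T/Δ + 1)F + 2Δ·V_T`, where `V_T` is the total variation of the losses. -/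
theorem stmt_5 (d T Δ : ℕ) (hd : 0 < d) (hT : 0 < T) (hΔ0 : 0 < Δ) (hΔT : Δ ≤ T)
    (ℓ : ℕ → Fin d → ℝ) (π : ℕ → Fin d → ℝ)
    (hπ0 : ∀ t j, 0 ≤ π t j) (hπ1 : ∀ t, ∑ j, π t j = 1)
    (F : ℝ) (hF : 0 ≤ F)
    (hbatch : ∀ k < (T + Δ - 1) / Δ,
      (∑ t ∈ Finset.Ico (k * Δ) (min ((k + 1) * Δ) T), ∑ j, ℓ t j * π t j) -
        (⨅ j : Fin d, ∑ t ∈ Finset.Ico (k * Δ) (min ((k + 1) * Δ) T), ℓ t j) ≤ F) :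
    (∑ t ∈ range T, ∑ j, ℓ t j * π t j) - ∑ t ∈ range T, ⨅ j : Fin d, ℓ t j ≤
      ((T : ℝ) / (Δ : ℝ) + 1) * F + 2 * Δ * ∑ t ∈ range (T - 1), ‖ℓ (t + 1) - ℓ t‖ := by
  have hdFin : Nonempty (Fin d) := ⟨⟨0, hd⟩⟩
  set m := (T + Δ - 1) / Δ with hm
  have hmd : m * Δ ≤ T + Δ - 1 := Nat.div_mul_le_self _ _
  have hTm : T ≤ m * Δ := by
    have h2 : T + Δ - 1 < (m + 1) * Δ := (Nat.div_lt_iff_lt_mul hΔ0).1 (Nat.lt_succ_self _)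
    have h3 : (m+1) * Δ = m * Δ + Δ := by ring
    rw [h3] at h2
    omega
  -- gap bound per batch
  have hgap : ∀ k, (⨅ j : Fin d, ∑ t ∈ Ico (k*Δ) (min ((k+1)*Δ) T), ℓ t j)
      - ∑ t ∈ Ico (k*Δ) (min ((k+1)*Δ) T), (⨅ j : Fin d, ℓ t j)
      ≤ 2 * (Δ:ℝ) * ∑ s ∈ Ico (k*Δ) (min ((k+1)*Δ) (T-1)), ‖ℓ (s+1) - ℓ s‖ := by
    intro k
    set a := k*Δ with ha
    set b := min ((k+1)*Δ) T with hb
    set W : ℝ := ∑ s ∈ Ico a (min ((k+1)*Δ) (T-1)), ‖ℓ (s+1) - ℓ s‖ with hW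
    have hab : (k+1)*Δ = a + Δ := by rw [ha]; ring
    have hW0 : (0:ℝ) ≤ W := Finset.sum_nonneg fun s _ => norm_nonneg _
    obtain ⟨j₀, hj₀⟩ := Finite.exists_min (ℓ a)
    have key : ∀ t ∈ Ico a b, ℓ t j₀ - 2 * W ≤ ⨅ j : Fin d, ℓ t j := by
      intro t ht
      rw [Finset.mem_Ico] at ht
      have htel : ‖ℓ t - ℓ a‖ ≤ W := by
        refine (norm_tele ℓ a t ht.1).trans ?_
        refine Finset.sum_le_sum_of_subset_of_nonneg
          (Finset.Ico_subset_Ico_right ?_) (fun _ _ _ => norm_nonneg _)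
        rw [hab]
        rw [hab] at hb
        omega
      apply le_ciInf
      intro j
      have h1 : |ℓ t j₀ - ℓ a j₀| ≤ ‖ℓ t - ℓ a‖ := by
        simpa using norm_le_pi_norm (ℓ t - ℓ a) j₀
      have h2 : |ℓ t j - ℓ a j| ≤ ‖ℓ t - ℓ a‖ := by
        simpa using norm_le_pi_norm (ℓ t - ℓ a) j
      have h3 := hj₀ j
      rw [abs_le] at h1 h2
      linarith
    have hIle : (⨅ j : Fin d, ∑ t ∈ Ico a b, ℓ t j) ≤ ∑ t ∈ Ico a b, ℓ t j₀ :=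
      ciInf_le (Finite.bddBelow_range _) j₀
    have hSle : ∑ t ∈ Ico a b, (ℓ t j₀ - 2 * W) ≤ ∑ t ∈ Ico a b, (⨅ j : Fin d, ℓ t j) :=
      Finset.sum_le_sum key
    rw [Finset.sum_sub_distrib, Finset.sum_const, Nat.card_Ico, nsmul_eq_mul] at hSle
    have hcard : (b - a : ℕ) ≤ Δ := by
      rw [hab] at hb
      omega
    have hcardR : ((b - a : ℕ) : ℝ) * (2 * W) ≤ (Δ:ℝ) * (2 * W) :=
      mul_le_mul_of_nonneg_right (by exact_mod_cast hcard) (by linarith)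
    linarith
  -- decomposition of sums over the horizon into batches
  have e1 : ∑ k ∈ range m, ∑ t ∈ Ico (k*Δ) (min ((k+1)*Δ) T), (∑ j, ℓ t j * π t j)
      = ∑ t ∈ range T, ∑ j, ℓ t j * π t j := sum_blocks_trunc _ m Δ T hTm
  have e2 : ∑ k ∈ range m, ∑ t ∈ Ico (k*Δ) (min ((k+1)*Δ) T), (⨅ j : Fin d, ℓ t j)
      = ∑ t ∈ range T, ⨅ j : Fin d, ℓ t j := sum_blocks_trunc _ m Δ T hTm
  have e3 : ∑ k ∈ range m, ∑ s ∈ Ico (k*Δ) (min ((k+1)*Δ) (T-1)), ‖ℓ (s+1) - ℓ s‖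
      = ∑ t ∈ range (T-1), ‖ℓ (t+1) - ℓ t‖ :=
    sum_blocks_trunc _ m Δ (T-1) (by omega)
  rw [← e1, ← e2, ← Finset.sum_sub_distrib]
  have step : ∑ k ∈ range m,
      ((∑ t ∈ Ico (k*Δ) (min ((k+1)*Δ) T), ∑ j, ℓ t j * π t j)
        - ∑ t ∈ Ico (k*Δ) (min ((k+1)*Δ) T), (⨅ j : Fin d, ℓ t j))
      ≤ ∑ k ∈ range m,
        (F + 2 * (Δ:ℝ) * ∑ s ∈ Ico (k*Δ) (min ((k+1)*Δ) (T-1)), ‖ℓ (s+1) - ℓ s‖) := by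
    refine Finset.sum_le_sum fun k hk => ?_
    have h1 := hbatch k (Finset.mem_range.1 hk)
    have h2 := hgap k
    linarith
  refine step.trans ?_
  rw [Finset.sum_add_distrib, Finset.sum_const, Finset.card_range, nsmul_eq_mul,
    ← Finset.mul_sum, e3]
  have hmR : (m:ℝ) ≤ (T:ℝ)/(Δ:ℝ) + 1 := by
    have h4 : m * Δ ≤ T + Δ := by omega
    have h5 : (m:ℝ) * (Δ:ℝ) ≤ (T:ℝ) + (Δ:ℝ) := by exact_mod_cast h4
    have hΔR : (0:ℝ) < (Δ:ℝ) := by exact_mod_cast hΔ0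
    rw [show (T:ℝ)/(Δ:ℝ) + 1 = ((T:ℝ)+(Δ:ℝ))/(Δ:ℝ) by field_simp, le_div_iff₀ hΔR]
    linarith
  have hVar : (0:ℝ) ≤ ∑ t ∈ range (T-1), ‖ℓ (t+1) - ℓ t‖ :=
    Finset.sum_nonneg fun s _ => norm_nonneg _
  have : (m:ℝ) * F ≤ ((T:ℝ)/(Δ:ℝ) + 1) * F := mul_le_mul_of_nonneg_right hmR hF
  linarith
end

section
/- Let (X_j)_{j∈ℕ} be i.i.d. bounded real random variables with essential supremum M := esssup X₁. Let h: ℝ → [0, ∞) be continuous and nondecreasing, and let f: ℝ × ℕ → (0, ∞) be such that f(·, k) is nondecreasing for every k ∈ ℕ and lim_{k→∞} f(r₁, k)/f(r₂, k) = +∞ whenever r₁ > r₂. Then E[ (Σ_{j=1}^N h(X_j) f(X_j, k)) / (Σ_{j=1}^N f(X_j, k)) ] converges to h(M) as N and k tend to infinity jointly; that is, for every η > 0 there exist N₀ and k₀ such that this expectation lies within η of h(M) for all N ≥ N₀ and k ≥ k₀. -/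
open MeasureTheory ProbabilityTheory Finset

lemma aux_upper {N : ℕ} (x w : ℕ → ℝ) (hw : ∀ j, 0 < w j)
    (B : ℝ) (hB : 0 ≤ B) (hxB : ∀ j ∈ range N, x j ≤ B) :
    (∑ j ∈ range N, x j * w j) / (∑ j ∈ range N, w j) ≤ B := by
  rcases Nat.eq_zero_or_pos N with rfl | hN
  · simpa using hB
  have hden : 0 < ∑ j ∈ range N, w j :=
    Finset.sum_pos (fun j _ => hw j) (by simp [hN.ne'])
  rw [div_le_iff₀ hden]
  calc ∑ j ∈ range N, x j * w j ≤ ∑ j ∈ range N, B * w j :=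
        Finset.sum_le_sum fun j hj => mul_le_mul_of_nonneg_right (hxB j hj) (hw j).le
    _ = B * ∑ j ∈ range N, w j := by rw [Finset.mul_sum]

lemma aux_nonneg {N : ℕ} (x w : ℕ → ℝ) (hw : ∀ j, 0 ≤ w j) (hx : ∀ j, 0 ≤ x j) :
    0 ≤ (∑ j ∈ range N, x j * w j) / (∑ j ∈ range N, w j) :=
  div_nonneg (Finset.sum_nonneg fun j _ => mul_nonneg (hx j) (hw j))
    (Finset.sum_nonneg fun j _ => hw j)

lemma aux_lower (h : ℝ → ℝ) (hh_mono : Monotone h) (hh_nonneg : ∀ r, 0 ≤ h r)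
    (g : ℝ → ℝ) (hg_pos : ∀ r, 0 < g r) (hg_mono : Monotone g)
    (a : ℝ) (N : ℕ) (x : ℕ → ℝ) (m : ℝ) (hm : 0 < m)
    (hden2 : m ≤ ∑ j ∈ range N, g (x j)) :
    h a * (1 - (N * g a) / m) ≤
      (∑ j ∈ range N, h (x j) * g (x j)) / (∑ j ∈ range N, g (x j)) := by
  set den := ∑ j ∈ range N, g (x j) with hdendef
  have hden : 0 < den := lt_of_lt_of_le hm hden2
  have key : h a * (den - N * g a) ≤ ∑ j ∈ range N, h (x j) * g (x j) := by
    have : h a * (den - N * g a) = ∑ j ∈ range N, h a * (g (x j) - g a) := by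
      rw [← Finset.mul_sum, Finset.sum_sub_distrib, Finset.sum_const, card_range,
        nsmul_eq_mul]
    rw [this]
    refine Finset.sum_le_sum fun j _ => ?_
    rcases le_or_gt a (x j) with hc | hc
    · have h1 : h a ≤ h (x j) := hh_mono hc
      have h2 : g (x j) - g a ≤ g (x j) := by linarith [(hg_pos a).le]
      calc h a * (g (x j) - g a) ≤ h a * g (x j) :=
            mul_le_mul_of_nonneg_left h2 (hh_nonneg a)
        _ ≤ h (x j) * g (x j) := mul_le_mul_of_nonneg_right h1 (hg_pos (x j)).le
    · have h2 : g (x j) ≤ g a := hg_mono hc.le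
      nlinarith [hh_nonneg a, hh_nonneg (x j), (hg_pos (x j)).le]
  have hNga : (0:ℝ) ≤ N * g a := mul_nonneg (Nat.cast_nonneg N) (hg_pos a).le
  calc h a * (1 - N * g a / m) ≤ h a * (1 - N * g a / den) := by
        have : N * g a / den ≤ N * g a / m := div_le_div_of_nonneg_left hNga hm hden2
        nlinarith [hh_nonneg a]
    _ = h a * (den - N * g a) / den := by field_simp
    _ ≤ (∑ j ∈ range N, h (x j) * g (x j)) / den :=
        div_le_div_of_nonneg_right key hden.le |>.trans_eq rfl

set_option maxHeartbeats 1000000 in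
/-- The surrogate regret-loss converges, jointly in `N, k → ∞`, to `h` of the essential
supremum: for i.i.d. bounded `X_j`, the expectation of the `f(·,k)`-weighted average of
`h(X_j)` over `N` samples converges to `h(esssup X₁)`. -/
theorem stmt_6 {Ω : Type*} [MeasurableSpace Ω] (μ : Measure Ω) [IsProbabilityMeasure μ]
    (X : ℕ → Ω → ℝ) (hmeas : ∀ j, Measurable (X j))
    (hindep : iIndepFun X μ)
    (hident : ∀ j, Measure.map (X j) μ = Measure.map (X 0) μ)
    (C : ℝ) (hbdd : ∀ j ω, |X j ω| ≤ C)
    (h : ℝ → ℝ) (hh_cont : Continuous h) (hh_mono : Monotone h) (hh_nonneg : ∀ r, 0 ≤ h r)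
    (f : ℝ → ℕ → ℝ) (hf_pos : ∀ r k, 0 < f r k)
    (hf_cont : ∀ k, Continuous fun r => f r k)
    (hf_mono : ∀ k, Monotone fun r => f r k)
    (hf_lim : ∀ r₁ r₂ : ℝ, r₂ < r₁ →
      Filter.Tendsto (fun k => f r₁ k / f r₂ k) Filter.atTop Filter.atTop) :
    ∀ η > 0, ∃ N₀ k₀ : ℕ, ∀ N ≥ N₀, ∀ k ≥ k₀,
      |(∫ ω, (∑ j ∈ range N, h (X j ω) * f (X j ω) k) /
          (∑ j ∈ range N, f (X j ω) k) ∂μ) - h (essSup (X 0) μ)| ≤ η := by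
  intro η hη
  classical
  set M : ℝ := essSup (X 0) μ with hMdef
  -- basic facts
  have hXC : ∀ j ω, X j ω ≤ C := fun j ω => (abs_le.1 (hbdd j ω)).2
  have hbound0 : Filter.IsBoundedUnder (· ≤ ·) (ae μ) (X 0) :=
    ⟨C, Filter.eventually_map.2 (Filter.Eventually.of_forall fun ω => hXC 0 ω)⟩
  have hae0 : ∀ᵐ ω ∂μ, X 0 ω ≤ M := ae_le_essSup hbound0
  -- a.e. the samples are all below M
  have haeM : ∀ᵐ ω ∂μ, ∀ j, X j ω ≤ M := by
    rw [MeasureTheory.ae_all_iff]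
    intro j
    have h0 : μ (X 0 ⁻¹' Set.Ioi M) = 0 := by
      have := hae0
      rw [MeasureTheory.ae_iff] at this
      convert this using 2
      ext ω; simp [Set.mem_Ioi]
    have hj : μ (X j ⁻¹' Set.Ioi M) = 0 := by
      rw [← Measure.map_apply (hmeas j) measurableSet_Ioi, hident j,
        Measure.map_apply (hmeas 0) measurableSet_Ioi]
      exact h0
    rw [MeasureTheory.ae_iff]
    convert hj using 2
    ext ω; simp [Set.mem_Ioi]
  -- measurability and integrability of the weighted average
  set W : ℕ → ℕ → Ω → ℝ := fun N k ω =>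
    (∑ j ∈ range N, h (X j ω) * f (X j ω) k) / (∑ j ∈ range N, f (X j ω) k) with hWdef
  have hWmeas : ∀ N k, Measurable (W N k) := by
    intro N k
    exact Measurable.div
      (Finset.measurable_sum _ fun j _ =>
        ((hh_cont.measurable.comp (hmeas j)).mul ((hf_cont k).measurable.comp (hmeas j))))
      (Finset.measurable_sum _ fun j _ => (hf_cont k).measurable.comp (hmeas j))
  have hWnonneg : ∀ N k ω, 0 ≤ W N k ω := fun N k ω =>
    aux_nonneg _ _ (fun j => (hf_pos _ k).le) (fun j => hh_nonneg _)
  have hWle : ∀ N k ω, W N k ω ≤ h C := fun N k ω =>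
    aux_upper _ _ (fun j => hf_pos _ k) (h C) (hh_nonneg C)
      (fun j _ => hh_mono (hXC j ω))
  have hWint : ∀ N k, Integrable (W N k) μ := by
    intro N k
    refine (integrable_const (h C)).mono' ((hWmeas N k).aestronglyMeasurable)
      (Filter.Eventually.of_forall fun ω => ?_)
    rw [Real.norm_eq_abs, abs_of_nonneg (hWnonneg N k ω)]
    exact hWle N k ω
  -- upper bound of the integral
  have hupper : ∀ N k, (∫ ω, W N k ω ∂μ) ≤ h M := by
    intro N k
    have : (∫ ω, W N k ω ∂μ) ≤ ∫ _, h M ∂μ := by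
      refine integral_mono_ae (hWint N k) (integrable_const _) ?_
      filter_upwards [haeM] with ω hω
      exact aux_upper _ _ (fun j => hf_pos _ k) (h M) (hh_nonneg M)
        (fun j _ => hh_mono (hω j))
    simpa using this
  -- choose ε, δ, a, b
  set ε : ℝ := η / 3 with hεdef
  have hε : 0 < ε := by positivity
  obtain ⟨δ, hδ, hδh⟩ := Metric.continuous_iff.1 hh_cont M ε hε
  set a : ℝ := M - δ / 2 with hadef
  set b : ℝ := M - δ / 4 with hbdef
  have hab : a < b := by simp only [hadef, hbdef]; linarith
  have hbM : b < M := by simp only [hbdef]; linarith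
  have hha : h M - ε ≤ h a := by
    have hd : dist a M < δ := by
      rw [Real.dist_eq, hadef, show M - δ / 2 - M = -(δ / 2) by ring, abs_neg,
        abs_of_pos (by linarith : (0:ℝ) < δ / 2)]
      linarith
    have := hδh a hd
    rw [Real.dist_eq] at this
    have h12 := abs_lt.1 this
    linarith [h12.1]
  have haM : h a ≤ h M := hh_mono (by simp only [hadef]; linarith)
  -- the probability p
  set s0 : Set Ω := X 0 ⁻¹' Set.Ioi b with hs0def
  have hs0meas : MeasurableSet s0 := (hmeas 0) measurableSet_Ioi
  have hs0pos : 0 < μ s0 := by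
    rcases eq_or_lt_of_le (show (0:ENNReal) ≤ μ s0 from zero_le) with h0 | h0
    · exfalso
      have hab0 : ∀ᵐ ω ∂μ, X 0 ω ≤ b := by
        rw [MeasureTheory.ae_iff]
        convert h0.symm using 2
        ext ω; simp [hs0def, Set.mem_Ioi]
      haveI : (ae μ).NeBot := ae_neBot.2 (IsProbabilityMeasure.ne_zero μ)
      have hcob : Filter.IsCoboundedUnder (· ≤ ·) (ae μ) (X 0) :=
        Filter.IsBoundedUnder.isCoboundedUnder_le
          ⟨-C, Filter.eventually_map.2
            (Filter.Eventually.of_forall fun ω => (abs_le.1 (hbdd 0 ω)).1)⟩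
      have hMb : M ≤ b := Filter.limsup_le_of_le hcob hab0
      exact absurd hMb (not_le.2 hbM)
    · exact h0
  set p : ℝ := (μ s0).toReal with hpdef
  have hp : 0 < p := ENNReal.toReal_pos hs0pos.ne' (measure_ne_top μ s0)
  -- indicator variables
  set Y : ℕ → Ω → ℝ := fun j => (X j ⁻¹' Set.Ioi b).indicator (fun _ => (1:ℝ)) with hYdef
  have hYmeas : ∀ j, Measurable (Y j) := fun j =>
    measurable_const.indicator ((hmeas j) measurableSet_Ioi)
  have hYint : Integrable (Y 0) μ := (integrable_const (1:ℝ)).indicator hs0meas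
  have hYval : ∀ j ω, Y j ω = if b < X j ω then (1:ℝ) else 0 := by
    intro j ω
    by_cases hc : b < X j ω
    · rw [if_pos hc]
      exact Set.indicator_of_mem (by simpa [Set.mem_preimage, Set.mem_Ioi] using hc) _
    · rw [if_neg hc]
      exact Set.indicator_of_notMem (by simpa [Set.mem_preimage, Set.mem_Ioi] using hc) _
  have hYnonneg : ∀ j ω, 0 ≤ Y j ω := by
    intro j ω; rw [hYval]; split <;> norm_num
  have hYcomp : ∀ j, Y j = (Set.Ioi b).indicator (fun _ => (1:ℝ)) ∘ X j := by
    intro j; funext ω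
    rw [hYval j ω]
    simp only [Function.comp_apply, Set.indicator_apply, Set.mem_Ioi]
  have hgmeas : Measurable ((Set.Ioi b).indicator (fun _ => (1:ℝ))) :=
    measurable_const.indicator measurableSet_Ioi
  have hYident : ∀ i, IdentDistrib (Y i) (Y 0) μ μ := by
    intro i
    rw [hYcomp i, hYcomp 0]
    exact IdentDistrib.comp ⟨(hmeas i).aemeasurable, (hmeas 0).aemeasurable, hident i⟩ hgmeas
  have hYindep : Pairwise (Function.onFun (IndepFun · · μ) Y) := by
    intro i j hij
    have h1 := (hindep.indepFun hij).comp hgmeas hgmeas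
    show IndepFun (Y i) (Y j) μ
    rw [hYcomp i, hYcomp j]
    exact h1
  have hEY : (∫ ω, Y 0 ω ∂μ) = p := by
    rw [hYdef]
    rw [MeasureTheory.integral_indicator_const (1:ℝ) hs0meas]
    simp [hpdef, hs0def, Measure.real]
  -- strong law of large numbers
  have hSLLN : ∀ᵐ ω ∂μ, Filter.Tendsto
      (fun n : ℕ => (n : ℝ)⁻¹ • (∑ i ∈ range n, Y i ω)) Filter.atTop (nhds p) := by
    have := ProbabilityTheory.strong_law_ae Y hYint hYindep hYident
    rwa [hEY] at this
  -- the good events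
  set D : ℕ → Set Ω := fun N =>
    {ω | ∀ n, N ≤ n → p / 2 * n ≤ ∑ j ∈ range n, Y j ω} with hDdef
  have hDmeas : ∀ N, MeasurableSet (D N) := by
    intro N
    have : D N = ⋂ (n : ℕ) (_ : N ≤ n), {ω | p / 2 * n ≤ ∑ j ∈ range n, Y j ω} := by
      ext ω; simp [hDdef, Set.mem_iInter]
    rw [this]
    exact MeasurableSet.iInter fun n => MeasurableSet.iInter fun _ =>
      measurableSet_le measurable_const (Finset.measurable_sum _ fun j _ => hYmeas j)
  have hDmono : Monotone D := by
    intro N N' hNN' ω hω n hn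
    exact hω n (le_trans hNN' hn)
  have hDunion : ∀ᵐ ω ∂μ, ω ∈ ⋃ N, D N := by
    filter_upwards [hSLLN] with ω hω
    have hev : ∀ᶠ n : ℕ in Filter.atTop, p / 2 < (n : ℝ)⁻¹ • (∑ i ∈ range n, Y i ω) :=
      hω.eventually (eventually_gt_nhds (by linarith))
    obtain ⟨N, hN⟩ := Filter.eventually_atTop.1 hev
    refine Set.mem_iUnion.2 ⟨N + 1, fun n hn => ?_⟩
    have hn1 : 1 ≤ n := le_trans (Nat.le_add_left 1 N) hn
    have hnpos : (0:ℝ) < n := by exact_mod_cast hn1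
    have := hN n (le_trans (Nat.le_succ N) hn)
    rw [smul_eq_mul, inv_mul_eq_div] at this
    rw [lt_div_iff₀ hnpos] at this
    exact this.le
  have hDunion1 : μ (⋃ N, D N) = 1 := by
    rw [← prob_compl_eq_zero_iff (MeasurableSet.iUnion hDmeas)]
    rw [MeasureTheory.ae_iff] at hDunion
    convert hDunion using 2
    rfl
  have hDtend : Filter.Tendsto (fun N => (μ (D N)).toReal) Filter.atTop (nhds 1) := by
    have h1 : Filter.Tendsto (fun N => μ (D N)) Filter.atTop (nhds (μ (⋃ N, D N))) :=
      tendsto_measure_iUnion_atTop hDmono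
    rw [hDunion1] at h1
    have := (ENNReal.tendsto_toReal (by norm_num : (1:ENNReal) ≠ ⊤)).comp h1
    exact this
  -- choose ε', ε₃, N₁
  set ε' : ℝ := ε / (h M + 1) with hε'def
  have hε' : 0 < ε' := div_pos hε (by linarith [hh_nonneg M])
  set ε₃ : ℝ := min 1 (ε / (h M + 1)) with hε₃def
  have hε₃ : 0 < ε₃ := lt_min one_pos (div_pos hε (by linarith [hh_nonneg M]))
  have hε₃1 : ε₃ ≤ 1 := min_le_left _ _
  obtain ⟨N₁, hN₁⟩ := Filter.eventually_atTop.1 (hDtend.eventually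
    (eventually_gt_nhds (by linarith : 1 - ε' < 1)))
  -- choose k₀
  have hTpos : (0:ℝ) < 2 / (p * ε₃) := div_pos two_pos (mul_pos hp hε₃)
  obtain ⟨k₀, hk₀⟩ := Filter.eventually_atTop.1 ((hf_lim b a hab).eventually
    (Filter.eventually_ge_atTop (2 / (p * ε₃))))
  refine ⟨max N₁ 1, k₀, fun N hN k hk => ?_⟩
  have hN1 : 1 ≤ N := le_trans (le_max_right _ _) hN
  have hNN₁ : N₁ ≤ N := le_trans (le_max_left _ _) hN
  have hNpos : (0:ℝ) < N := by exact_mod_cast hN1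
  -- the ratio bound for this k
  have hfa : 0 < f a k := hf_pos a k
  have hfb : 0 < f b k := hf_pos b k
  have hratio : f a k ≤ p * ε₃ / 2 * f b k := by
    have h1 : 2 / (p * ε₃) ≤ f b k / f a k := hk₀ k hk
    rw [le_div_iff₀ hfa] at h1
    have h2 := mul_le_mul_of_nonneg_left h1 (div_pos (mul_pos hp hε₃) two_pos).le
    have h3 : p * ε₃ / 2 * (2 / (p * ε₃) * f a k) = f a k := by
      field_simp
    rw [h3] at h2
    linarith
  -- pointwise lower bound on D N₁
  have hlow : ∀ ω ∈ D N₁, h a * (1 - ε₃) ≤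
      (∑ j ∈ range N, h (X j ω) * f (X j ω) k) / (∑ j ∈ range N, f (X j ω) k) := by
    intro ω hω
    have hcount : p / 2 * N ≤ ∑ j ∈ range N, Y j ω := hω N hNN₁
    have hden2 : p / 2 * N * f b k ≤ ∑ j ∈ range N, f (X j ω) k := by
      have step : ∀ j ∈ range N, Y j ω * f b k ≤ f (X j ω) k := by
        intro j _
        rw [hYval]
        split
        · rw [one_mul]; exact hf_mono k (by linarith)
        · rw [zero_mul]; exact (hf_pos _ k).le
      calc p / 2 * N * f b k ≤ (∑ j ∈ range N, Y j ω) * f b k :=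
            mul_le_mul_of_nonneg_right hcount hfb.le
        _ = ∑ j ∈ range N, Y j ω * f b k := by rw [Finset.sum_mul]
        _ ≤ ∑ j ∈ range N, f (X j ω) k := Finset.sum_le_sum step
    have hm : 0 < p / 2 * N * f b k :=
      mul_pos (mul_pos (by linarith : (0:ℝ) < p / 2) hNpos) hfb
    have key := aux_lower h hh_mono hh_nonneg (fun r => f r k) (fun r => hf_pos r k)
      (hf_mono k) a N (fun j => X j ω) (p / 2 * N * f b k) hm hden2
    have hfrac : (N : ℝ) * f a k / (p / 2 * N * f b k) ≤ ε₃ := by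
      rw [div_le_iff₀ hm]
      calc (N : ℝ) * f a k ≤ (N : ℝ) * (p * ε₃ / 2 * f b k) :=
            mul_le_mul_of_nonneg_left hratio hNpos.le
        _ = ε₃ * (p / 2 * N * f b k) := by ring
    calc h a * (1 - ε₃) ≤ h a * (1 - (N : ℝ) * f a k / (p / 2 * N * f b k)) := by
          nlinarith [hh_nonneg a]
      _ ≤ _ := key
  -- lower bound of the integral
  set c : ℝ := h a * (1 - ε₃) with hcdef
  have hc0 : 0 ≤ c := mul_nonneg (hh_nonneg a) (by linarith)
  have hcle : c ≤ h M := by nlinarith [hh_nonneg a]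
  have hind : ∀ ω, (D N₁).indicator (fun _ => c) ω ≤ W N k ω := by
    intro ω
    rw [Set.indicator_apply]
    split
    · exact hlow ω ‹_›
    · exact hWnonneg N k ω
  have hintind : (∫ ω, (D N₁).indicator (fun _ => c) ω ∂μ) = (μ (D N₁)).toReal * c := by
    rw [MeasureTheory.integral_indicator_const c (hDmeas N₁)]
    simp [smul_eq_mul, Measure.real]
  have hlower : (μ (D N₁)).toReal * c ≤ ∫ ω, W N k ω ∂μ := by
    rw [← hintind]
    exact integral_mono ((integrable_const c).indicator (hDmeas N₁)) (hWint N k)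
      hind
  have hμD : 1 - ε' < (μ (D N₁)).toReal := hN₁ N₁ le_rfl
  have hμD1 : (μ (D N₁)).toReal ≤ 1 := by
    rw [← ENNReal.toReal_one]
    exact ENNReal.toReal_mono (by norm_num) prob_le_one
  -- final arithmetic
  have hfinal : h M - η ≤ ∫ ω, W N k ω ∂μ := by
    have h1 : (1 - ε') * c ≤ (μ (D N₁)).toReal * c :=
      mul_le_mul_of_nonneg_right hμD.le hc0
    have hε'hM : ε' * h M ≤ ε := by
      rw [hε'def]
      rw [div_mul_eq_mul_div, div_le_iff₀ (by linarith [hh_nonneg M] : (0:ℝ) < h M + 1)]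
      nlinarith [hh_nonneg M, hε.le]
    have hε₃hM : h a * ε₃ ≤ ε := by
      have h2 : ε₃ ≤ ε / (h M + 1) := min_le_right _ _
      have h3 : h a * ε₃ ≤ h M * (ε / (h M + 1)) := by
        apply mul_le_mul haM h2 hε₃.le (hh_nonneg M)
      have h4 : h M * (ε / (h M + 1)) ≤ ε := by
        rw [mul_div_assoc', div_le_iff₀ (by linarith [hh_nonneg M] : (0:ℝ) < h M + 1)]
        nlinarith [hh_nonneg M, hε.le]
      linarith
    have h5 : c ≥ h M - 2 * ε := by
      have : c = h a - h a * ε₃ := by rw [hcdef]; ring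
      linarith [hha]
    have h6 : ε' * c ≤ ε := by
      calc ε' * c ≤ ε' * h M := mul_le_mul_of_nonneg_left hcle hε'.le
        _ ≤ ε := hε'hM
    have h7 : (1 - ε') * c = c - ε' * c := by ring
    have := le_trans h1 hlower
    rw [h7] at this
    have : c - ε ≤ ∫ ω, W N k ω ∂μ := by linarith
    have heps : ε = η / 3 := hεdef
    linarith
  have habs : |(∫ ω, W N k ω ∂μ) - h M| ≤ η := by
    rw [abs_le]
    constructor
    · linarith [hfinal]
    · linarith [hupper N k]
  exact habs
end

section
/- Let (X_i)_{i∈ℕ} be i.i.d. real random variables, let H: ℝ → [0, ∞) be continuous and nondecreasing with esssup H(X₁) = 1, and let f: ℝ × ℕ → (0, ∞) be such that f(·, k) is nondecreasing for every k and lim_{k→∞} f(r₁, k)/f(r₂, k) = +∞ whenever r₁ > r₂. Then for every 0 < ε < 1, almost surely, as N and k tend to infinity jointly, both ratios (Σ_{i=1}^N f(X_i, k) H(X_i) 1{H(X_i) < 1−ε}) / (Σ_{i=1}^N f(X_i, k) H(X_i) 1{H(X_i) > 1−ε/2}) and (Σ_{i=1}^N f(X_i, k) 1{H(X_i) < 1−ε})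 / (Σ_{i=1}^N f(X_i, k) 1{H(X_i) > 1−ε/2}) converge to 0 (the denominators are almost surely positive for all large N). -/
open MeasureTheory ProbabilityTheory Finset

set_option maxHeartbeats 1000000

/-- Almost surely, in the joint limit `N, k → ∞`, the `f(·,k)`-weight carried by samples
with `H`-value below `1 − ε` is negligible compared with that carried by samples with
`H`-value above `1 − ε/2` (both with and without the extra `H` factor); the denominators
are almost surely positive for all large `N`. -/
theorem stmt_7 {Ω : Type*} [MeasurableSpace Ω] (μ : Measure Ω) [IsProbabilityMeasure μ]
    (X : ℕ → Ω → ℝ) (hmeas : ∀ i, Measurable (X i))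
    (hindep : iIndepFun X μ)
    (hident : ∀ i, Measure.map (X i) μ = Measure.map (X 0) μ)
    (H : ℝ → ℝ) (hH_cont : Continuous H) (hH_mono : Monotone H) (hH_nonneg : ∀ r, 0 ≤ H r)
    (hH_ess : essSup (fun ω => H (X 0 ω)) μ = 1)
    (f : ℝ → ℕ → ℝ) (hf_pos : ∀ r k, 0 < f r k)
    (hf_mono : ∀ k, Monotone fun r => f r k)
    (hf_lim : ∀ r₁ r₂ : ℝ, r₂ < r₁ →
      Filter.Tendsto (fun k => f r₁ k / f r₂ k) Filter.atTop Filter.atTop)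
    (ε : ℝ) (hε0 : 0 < ε) (hε1 : ε < 1) :
    ∀ᵐ ω ∂μ,
      (∃ N₁ : ℕ, ∀ N ≥ N₁, ∀ k : ℕ,
        (0 < ∑ i ∈ range N,
            (if 1 - ε / 2 < H (X i ω) then f (X i ω) k * H (X i ω) else 0)) ∧
        (0 < ∑ i ∈ range N, (if 1 - ε / 2 < H (X i ω) then f (X i ω) k else 0))) ∧
      (∀ η > 0, ∃ N₀ k₀ : ℕ, ∀ N ≥ N₀, ∀ k ≥ k₀,
        |(∑ i ∈ range N, if H (X i ω) < 1 - ε then f (X i ω) k * H (X i ω) else 0) /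
            (∑ i ∈ range N,
              if 1 - ε / 2 < H (X i ω) then f (X i ω) k * H (X i ω) else 0)| ≤ η ∧
        |(∑ i ∈ range N, if H (X i ω) < 1 - ε then f (X i ω) k else 0) /
            (∑ i ∈ range N,
              if 1 - ε / 2 < H (X i ω) then f (X i ω) k else 0)| ≤ η) := by
  classical
  set c : ℝ := 1 - ε / 2 with hc_def
  have hc_pos : 0 < c := by rw [hc_def]; linarith
  have hc_lt1 : c < 1 := by rw [hc_def]; linarith
  have hεc : 1 - ε < c := by rw [hc_def]; linarith
  -- the high set has positive measure
  have hposA : 0 < μ {ω | c < H (X 0 ω)} := by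
    rcases eq_zero_or_pos (μ {ω | c < H (X 0 ω)}) with h0 | h
    · exfalso
      have hsInf := essSup_eq_sInf μ (fun ω => H (X 0 ω))
      rw [hH_ess] at hsInf
      by_cases hbdd : BddBelow {a : ℝ | μ {ω | a < H (X 0 ω)} = 0}
      · have hle : sInf {a : ℝ | μ {ω | a < H (X 0 ω)} = 0} ≤ c := csInf_le hbdd h0
        rw [← hsInf] at hle
        linarith
      · rw [Real.sInf_of_not_bddBelow hbdd] at hsInf
        linarith
    · exact h
  -- find r₂ with `c < H r₂` and positive tail measure
  obtain ⟨r₂, hr₂S, hr₂pos⟩ : ∃ r₂ : ℝ, c < H r₂ ∧ 0 < μ {ω | r₂ < X 0 ω} := by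
    by_contra hcon
    push_neg at hcon
    have hsub : {ω | c < H (X 0 ω)} ⊆
        ⋃ q : {q : ℚ // c < H (q : ℝ)}, {ω | (q.1 : ℝ) < X 0 ω} := by
      intro ω hω
      have hopen : IsOpen (H ⁻¹' Set.Ioi c) := isOpen_Ioi.preimage hH_cont
      have hmem : X 0 ω ∈ H ⁻¹' Set.Ioi c := hω
      obtain ⟨δ, hδ, hball⟩ := Metric.isOpen_iff.mp hopen _ hmem
      obtain ⟨q, hq1, hq2⟩ := exists_rat_btwn (show X 0 ω - δ < X 0 ω by linarith)
      have hqS : c < H (q : ℝ) := by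
        have : (q : ℝ) ∈ Metric.ball (X 0 ω) δ := by
          rw [Metric.mem_ball, Real.dist_eq, abs_lt]
          constructor <;> linarith
        exact hball this
      exact Set.mem_iUnion.2 ⟨⟨q, hqS⟩, hq2⟩
    have h0 : μ {ω | c < H (X 0 ω)} = 0 := by
      refine measure_mono_null hsub (measure_iUnion_null fun q => ?_)
      exact le_antisymm (hcon q.1 q.2) zero_le
    exact absurd h0 hposA.ne'
  -- find r₁ > r₂ with positive tail measure
  obtain ⟨n, hn⟩ : ∃ n : ℕ, 0 < μ {ω | r₂ + 1 / (n + 1) < X 0 ω} := by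
    by_contra hcon
    push_neg at hcon
    have hsub : {ω | r₂ < X 0 ω} ⊆ ⋃ n : ℕ, {ω | r₂ + 1 / (n + 1) < X 0 ω} := by
      intro ω hω
      obtain ⟨m, hm⟩ := exists_nat_one_div_lt (show (0:ℝ) < X 0 ω - r₂ by
        simpa [sub_pos] using hω)
      exact Set.mem_iUnion.2 ⟨m, by simp only [Set.mem_setOf_eq]; linarith⟩
    have h0 : μ {ω | r₂ < X 0 ω} = 0 :=
      measure_mono_null hsub (measure_iUnion_null fun m =>
        le_antisymm (hcon m) zero_le)
    exact absurd h0 hr₂pos.ne'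
  set r₁ : ℝ := r₂ + 1 / (n + 1) with hr₁def
  have hr₁r₂ : r₂ < r₁ := by
    have h1 : (0:ℝ) < 1 / (n + 1) := by positivity
    rw [hr₁def]; linarith
  set p : ℝ := (μ {ω | r₁ < X 0 ω}).toReal with hpdef
  have hp : 0 < p := ENNReal.toReal_pos hn.ne' (measure_ne_top μ _)
  -- every low sample is below r₂
  have hlow : ∀ x : ℝ, H x < 1 - ε → x < r₂ := by
    intro x hx
    by_contra hcontra
    push_neg at hcontra
    have := hH_mono hcontra
    linarith
  -- strong law for the indicator of the tail above r₁
  set g : ℝ → ℝ := fun x => if r₁ < x then 1 else 0 with hgdef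
  have hgmeas : Measurable g :=
    Measurable.ite measurableSet_Ioi measurable_const measurable_const
  have hgint : Integrable (g ∘ X 0) μ := by
    refine Integrable.mono' (integrable_const (1:ℝ))
      ((hgmeas.comp (hmeas 0)).aestronglyMeasurable) (Filter.Eventually.of_forall fun ω => ?_)
    simp only [Function.comp, hgdef]
    split <;> simp
  have hgindep : Pairwise (Function.onFun (IndepFun · · μ) fun i => g ∘ X i) :=
    fun i j hij => (hindep.indepFun hij).comp hgmeas hgmeas
  have hgident : ∀ i, IdentDistrib (g ∘ X i) (g ∘ X 0) μ μ := fun i =>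
    IdentDistrib.comp ⟨(hmeas i).aemeasurable, (hmeas 0).aemeasurable, hident i⟩ hgmeas
  have hmean : μ[g ∘ X 0] = p := by
    have heq : g ∘ X 0 = Set.indicator {ω | r₁ < X 0 ω} (fun _ => (1:ℝ)) := by
      funext ω
      simp [Set.indicator_apply, hgdef, Function.comp, Set.mem_setOf_eq]
    rw [heq, integral_indicator_const (1:ℝ) (measurableSet_lt measurable_const (hmeas 0)),
      smul_eq_mul, mul_one, hpdef]; rfl
  have hslln := strong_law_ae_real (fun i => g ∘ X i) hgint hgindep hgident
  rw [hmean] at hslln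
  filter_upwards [hslln] with ω hω
  -- extract eventual count lower bound
  obtain ⟨N₁, hN₁⟩ : ∃ N₁ : ℕ, ∀ N ≥ N₁,
      (p / 2 < (∑ i ∈ range N, g (X i ω)) / N ∧ 1 ≤ N) := by
    have h2 : ∀ᶠ N : ℕ in Filter.atTop,
        p / 2 < (∑ i ∈ range N, g (X i ω)) / N :=
      hω.eventually (eventually_gt_nhds (by linarith))
    exact Filter.eventually_atTop.1 (h2.and (Filter.eventually_ge_atTop 1))
  have hcount : ∀ N ≥ N₁, p / 2 * N ≤ ∑ i ∈ range N, g (X i ω) := by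
    intro N hN
    obtain ⟨h1, h2⟩ := hN₁ N hN
    have hN0 : (0:ℝ) < N := by exact_mod_cast Nat.lt_of_lt_of_le Nat.zero_lt_one h2
    exact le_of_lt ((lt_div_iff₀ hN0).mp h1)
  -- termwise lower bounds for the denominators
  have htermD1 : ∀ (k : ℕ) (i : ℕ), g (X i ω) * (f r₁ k * c) ≤
      (if c < H (X i ω) then f (X i ω) k * H (X i ω) else 0) := by
    intro k i
    by_cases hi : r₁ < X i ω
    · have hgi : g (X i ω) = 1 := if_pos hi
      have hXr₂ : r₂ ≤ X i ω := le_of_lt (lt_trans hr₁r₂ hi)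
      have hHi : c < H (X i ω) := lt_of_lt_of_le hr₂S (hH_mono hXr₂)
      rw [hgi, if_pos hHi, one_mul]
      exact mul_le_mul (hf_mono k (le_of_lt hi)) hHi.le hc_pos.le (hf_pos _ _).le
    · have hgi : g (X i ω) = 0 := if_neg hi
      rw [hgi, zero_mul]
      split_ifs with h
      · exact mul_nonneg (hf_pos _ _).le (hH_nonneg _)
      · exact le_rfl
  have htermD2 : ∀ (k : ℕ) (i : ℕ), g (X i ω) * f r₁ k ≤
      (if c < H (X i ω) then f (X i ω) k else 0) := by
    intro k i
    by_cases hi : r₁ < X i ω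
    · have hgi : g (X i ω) = 1 := if_pos hi
      have hXr₂ : r₂ ≤ X i ω := le_of_lt (lt_trans hr₁r₂ hi)
      have hHi : c < H (X i ω) := lt_of_lt_of_le hr₂S (hH_mono hXr₂)
      rw [hgi, if_pos hHi, one_mul]
      exact hf_mono k (le_of_lt hi)
    · have hgi : g (X i ω) = 0 := if_neg hi
      rw [hgi, zero_mul]
      split_ifs with h
      · exact (hf_pos _ _).le
      · exact le_rfl
  have hD1 : ∀ (N k : ℕ), (∑ i ∈ range N, g (X i ω)) * (f r₁ k * c) ≤
      ∑ i ∈ range N, (if c < H (X i ω) then f (X i ω) k * H (X i ω) else 0) := by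
    intro N k
    rw [Finset.sum_mul]
    exact Finset.sum_le_sum fun i _ => htermD1 k i
  have hD2 : ∀ (N k : ℕ), (∑ i ∈ range N, g (X i ω)) * f r₁ k ≤
      ∑ i ∈ range N, (if c < H (X i ω) then f (X i ω) k else 0) := by
    intro N k
    rw [Finset.sum_mul]
    exact Finset.sum_le_sum fun i _ => htermD2 k i
  -- upper bounds for the numerators
  have hU1 : ∀ (N k : ℕ),
      (∑ i ∈ range N, if H (X i ω) < 1 - ε then f (X i ω) k * H (X i ω) else 0) ≤
        N * f r₂ k := by
    intro N k
    calc (∑ i ∈ range N, if H (X i ω) < 1 - ε then f (X i ω) k * H (X i ω) else 0)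
        ≤ ∑ _i ∈ range N, f r₂ k := by
          refine Finset.sum_le_sum fun i _ => ?_
          split_ifs with h
          · have hx : X i ω < r₂ := hlow _ h
            have hH1 : H (X i ω) ≤ 1 := by linarith
            calc f (X i ω) k * H (X i ω) ≤ f r₂ k * 1 :=
                  mul_le_mul (hf_mono k hx.le) hH1 (hH_nonneg _) (hf_pos _ _).le
              _ = f r₂ k := mul_one _
          · exact (hf_pos _ _).le
      _ = N * f r₂ k := by
          rw [Finset.sum_const, card_range, nsmul_eq_mul]
  have hU2 : ∀ (N k : ℕ),
      (∑ i ∈ range N, if H (X i ω) < 1 - ε then f (X i ω) k else 0) ≤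
        N * f r₂ k := by
    intro N k
    calc (∑ i ∈ range N, if H (X i ω) < 1 - ε then f (X i ω) k else 0)
        ≤ ∑ _i ∈ range N, f r₂ k := by
          refine Finset.sum_le_sum fun i _ => ?_
          split_ifs with h
          · exact hf_mono k (hlow _ h).le
          · exact (hf_pos _ _).le
      _ = N * f r₂ k := by
          rw [Finset.sum_const, card_range, nsmul_eq_mul]
  have hU1nn : ∀ (N k : ℕ),
      0 ≤ ∑ i ∈ range N, if H (X i ω) < 1 - ε then f (X i ω) k * H (X i ω) else 0 := by
    intro N k
    refine Finset.sum_nonneg fun i _ => ?_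
    split_ifs with h
    · exact mul_nonneg (hf_pos _ _).le (hH_nonneg _)
    · exact le_rfl
  have hU2nn : ∀ (N k : ℕ),
      0 ≤ ∑ i ∈ range N, if H (X i ω) < 1 - ε then f (X i ω) k else 0 := by
    intro N k
    refine Finset.sum_nonneg fun i _ => ?_
    split_ifs with h
    · exact (hf_pos _ _).le
    · exact le_rfl
  constructor
  · -- positivity of the denominators
    refine ⟨N₁ + 1, fun N hN k => ?_⟩
    have hNN₁ : N ≥ N₁ := le_trans (Nat.le_succ N₁) hN
    have hN0 : (0:ℝ) < N := by
      have : 1 ≤ N := le_trans (Nat.succ_le_succ (Nat.zero_le _)) hN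
      exact_mod_cast Nat.lt_of_lt_of_le Nat.zero_lt_one this
    have hSg := hcount N hNN₁
    constructor
    · calc (0:ℝ) < (p / 2 * N) * (f r₁ k * c) :=
            mul_pos (mul_pos (half_pos hp) hN0) (mul_pos (hf_pos _ _) hc_pos)
        _ ≤ (∑ i ∈ range N, g (X i ω)) * (f r₁ k * c) :=
            mul_le_mul_of_nonneg_right hSg (mul_pos (hf_pos _ _) hc_pos).le
        _ ≤ _ := hD1 N k
    · calc (0:ℝ) < (p / 2 * N) * f r₁ k :=
            mul_pos (mul_pos (half_pos hp) hN0) (hf_pos _ _)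
        _ ≤ (∑ i ∈ range N, g (X i ω)) * f r₁ k :=
            mul_le_mul_of_nonneg_right hSg (hf_pos _ _).le
        _ ≤ _ := hD2 N k
  · -- the ratios tend to 0
    intro η hη
    have hratio : Filter.Tendsto (fun k => f r₂ k / f r₁ k) Filter.atTop (nhds 0) := by
      have h1 := (hf_lim r₁ r₂ hr₁r₂).inv_tendsto_atTop
      refine h1.congr fun k => ?_
      simp [Pi.inv_apply, inv_div]
    obtain ⟨k₀, hk₀⟩ : ∃ k₀ : ℕ, ∀ k ≥ k₀, f r₂ k / f r₁ k ≤ η * (p / 2) * c :=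
      Filter.eventually_atTop.1
        (hratio.eventually (eventually_le_nhds (mul_pos (mul_pos hη (half_pos hp)) hc_pos)))
    refine ⟨N₁ + 1, k₀, fun N hN k hk => ?_⟩
    have hNN₁ : N ≥ N₁ := le_trans (Nat.le_succ N₁) hN
    have hN0 : (0:ℝ) < N := by
      have : 1 ≤ N := le_trans (Nat.succ_le_succ (Nat.zero_le _)) hN
      exact_mod_cast Nat.lt_of_lt_of_le Nat.zero_lt_one this
    have hSg := hcount N hNN₁
    have hfk : f r₂ k ≤ η * (p / 2) * c * f r₁ k := by
      have h1 := hk₀ k hk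
      have h2 : (0:ℝ) < f r₁ k := hf_pos _ _
      calc f r₂ k = f r₂ k / f r₁ k * f r₁ k := by field_simp
        _ ≤ η * (p / 2) * c * f r₁ k := mul_le_mul_of_nonneg_right h1 h2.le
    have hD1' : p / 2 * N * (f r₁ k * c) ≤
        ∑ i ∈ range N, (if c < H (X i ω) then f (X i ω) k * H (X i ω) else 0) :=
      le_trans (mul_le_mul_of_nonneg_right hSg (mul_pos (hf_pos _ _) hc_pos).le) (hD1 N k)
    have hD1pos : (0:ℝ) <
        ∑ i ∈ range N, (if c < H (X i ω) then f (X i ω) k * H (X i ω) else 0) :=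
      lt_of_lt_of_le
        (mul_pos (mul_pos (half_pos hp) hN0) (mul_pos (hf_pos _ _) hc_pos)) hD1'
    have hD2' : p / 2 * N * f r₁ k ≤
        ∑ i ∈ range N, (if c < H (X i ω) then f (X i ω) k else 0) :=
      le_trans (mul_le_mul_of_nonneg_right hSg (hf_pos _ _).le) (hD2 N k)
    have hD2pos : (0:ℝ) < ∑ i ∈ range N, (if c < H (X i ω) then f (X i ω) k else 0) :=
      lt_of_lt_of_le (mul_pos (mul_pos (half_pos hp) hN0) (hf_pos _ _)) hD2'
    constructor
    · rw [abs_of_nonneg (div_nonneg (hU1nn N k) hD1pos.le), div_le_iff₀ hD1pos]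
      calc (∑ i ∈ range N, if H (X i ω) < 1 - ε then f (X i ω) k * H (X i ω) else 0)
          ≤ N * f r₂ k := hU1 N k
        _ ≤ N * (η * (p / 2) * c * f r₁ k) := mul_le_mul_of_nonneg_left hfk hN0.le
        _ = η * (p / 2 * N * (f r₁ k * c)) := by ring
        _ ≤ η * _ := mul_le_mul_of_nonneg_left hD1' hη.le
    · rw [abs_of_nonneg (div_nonneg (hU2nn N k) hD2pos.le), div_le_iff₀ hD2pos]
      have hfk2 : f r₂ k ≤ η * (p / 2) * f r₁ k := by
        refine le_trans hfk ?_
        have h1 : η * (p / 2) * c ≤ η * (p / 2) :=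
          mul_le_of_le_one_right (mul_nonneg hη.le (half_pos hp).le) hc_lt1.le
        exact mul_le_mul_of_nonneg_right h1 (hf_pos _ _).le
      calc (∑ i ∈ range N, if H (X i ω) < 1 - ε then f (X i ω) k else 0)
          ≤ N * f r₂ k := hU2 N k
        _ ≤ N * (η * (p / 2) * f r₁ k) := mul_le_mul_of_nonneg_left hfk2 hN0.le
        _ = η * (p / 2 * N * f r₁ k) := by ring
        _ ≤ η * _ := mul_le_mul_of_nonneg_left hD2' hη.le
end

section
/- Let N ∈ ℕ+, let h: ℝ → ℝ be nondecreasing, and let f: ℝ × ℕ+ → (0, ∞) be log-supermodular in the sense that f(R₁, k₁)·f(R₂, k₂) ≥ f(R₂, k₁)·f(R₁, k₂) whenever R₁ ≥ R₂ and k₁ ≥ k₂. Then for all k₁ ≤ k₂ in ℕ+ and all real numbers X_1, …, X_N, (Σ_{i=1}^N f(X_i, k₁) h(X_i)) / (Σ_{i=1}^N f(X_i, k₁)) ≤ (Σ_{i=1}^N f(X_i, k₂) h(X_i)) / (Σ_{i=1}^N f(X_i, k₂)). -/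
open Finset

/-- If `log f` is supermodular, the `f(·,k)`-weighted average of the nondecreasing
function `h` over any fixed finite sample is nondecreasing in `k`. -/
theorem stmt_8 (N : ℕ) (hN : 0 < N)
    (h : ℝ → ℝ) (hh : Monotone h)
    (f : ℝ → ℕ → ℝ) (hf_pos : ∀ r k, 0 < f r k)
    (hf_lsm : ∀ R₁ R₂ : ℝ, ∀ k₁ k₂ : ℕ, R₂ ≤ R₁ → k₂ ≤ k₁ →
      f R₂ k₁ * f R₁ k₂ ≤ f R₁ k₁ * f R₂ k₂)
    (k₁ k₂ : ℕ) (hk₁ : 0 < k₁) (hk : k₁ ≤ k₂) (X : ℕ → ℝ) :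
    (∑ i ∈ range N, f (X i) k₁ * h (X i)) / (∑ i ∈ range N, f (X i) k₁) ≤
      (∑ i ∈ range N, f (X i) k₂ * h (X i)) / (∑ i ∈ range N, f (X i) k₂) := by
  have hne : (range N).Nonempty := nonempty_range_iff.mpr hN.ne'
  have hB1 : 0 < ∑ i ∈ range N, f (X i) k₁ :=
    Finset.sum_pos (fun i _ => hf_pos _ _) hne
  have hB2 : 0 < ∑ i ∈ range N, f (X i) k₂ :=
    Finset.sum_pos (fun i _ => hf_pos _ _) hne
  rw [div_le_div_iff₀ hB1 hB2]
  -- reduce to a double-sum inequality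
  have key : ∀ x y : ℝ,
      0 ≤ (h x - h y) * (f x k₂ * f y k₁ - f x k₁ * f y k₂) := by
    intro x y
    rcases le_total y x with hxy | hxy
    · have h1 : h y ≤ h x := hh hxy
      have h2 : f y k₂ * f x k₁ ≤ f x k₂ * f y k₁ := hf_lsm x y k₂ k₁ hxy hk
      nlinarith [mul_nonneg (sub_nonneg.mpr h1)
        (sub_nonneg.mpr (show f x k₁ * f y k₂ ≤ f x k₂ * f y k₁ by linarith))]
    · have h1 : h x ≤ h y := hh hxy
      have h2 : f x k₂ * f y k₁ ≤ f y k₂ * f x k₁ := hf_lsm y x k₂ k₁ hxy hk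
      nlinarith [mul_nonneg (sub_nonneg.mpr h1)
        (sub_nonneg.mpr (show f x k₂ * f y k₁ ≤ f x k₁ * f y k₂ by linarith))]
  set g : ℕ → ℕ → ℝ := fun i j =>
    h (X i) * (f (X i) k₂ * f (X j) k₁ - f (X i) k₁ * f (X j) k₂) with hg
  have hS : 0 ≤ ∑ i ∈ range N, ∑ j ∈ range N, g i j := by
    have hcomm : (∑ i ∈ range N, ∑ j ∈ range N, g i j)
        = ∑ i ∈ range N, ∑ j ∈ range N, g j i := Finset.sum_comm
    have htwo : 0 ≤ ∑ i ∈ range N, ∑ j ∈ range N, (g i j + g j i) := by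
      refine Finset.sum_nonneg fun i _ => Finset.sum_nonneg fun j _ => ?_
      have := key (X i) (X j)
      simp only [hg]
      nlinarith [this]
    have : (∑ i ∈ range N, ∑ j ∈ range N, (g i j + g j i))
        = 2 * ∑ i ∈ range N, ∑ j ∈ range N, g i j := by
      simp_rw [Finset.sum_add_distrib]
      rw [← hcomm]; ring
    linarith [htwo, this ▸ htwo]
  have expand : (∑ i ∈ range N, f (X i) k₂ * h (X i)) * (∑ i ∈ range N, f (X i) k₁)
      - (∑ i ∈ range N, f (X i) k₁ * h (X i)) * (∑ i ∈ range N, f (X i) k₂)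
      = ∑ i ∈ range N, ∑ j ∈ range N, g i j := by
    rw [Finset.sum_mul_sum, Finset.sum_mul_sum, ← Finset.sum_sub_distrib]
    refine Finset.sum_congr rfl fun i _ => ?_
    rw [← Finset.sum_sub_distrib]
    refine Finset.sum_congr rfl fun j _ => ?_
    simp only [hg]; ring
  linarith [expand ▸ hS]
end

section
/- Let T ≥ 2 and let ℓ_1, …, ℓ_T be i.i.d. bounded ℝ^d-valued random vectors, symmetric about the origin (ℓ₁ and −ℓ₁ have the same distribution), with covariance Σ := E[ℓ₁ℓ₁ᵀ]. Then for all A, C ∈ ℝ^{d×d}, all β, δ ∈ ℝ^d and all R ≥ 0, E[ ( Σ_{t=1}^T (t−1) ℓ_t ) · ( Σ_{t=1}^T Σ_{i=1}^{t−1} ℓ_tᵀ (A ℓ_i ℓ_iᵀ β + C ℓ_i + δ) + R ‖Σ_{t=1}^T ℓ_t‖₂ ) ] = (T(T−1)(2T−1)/6) · ( Σ A Σ β + Σ δ ), where the left-hand side is the expectation of the ℝ^d-valued random vector obtained by multiplying the vector Σ_t (t−1)ℓ_t by the scalar in parentheses. -/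
open MeasureTheory ProbabilityTheory Finset Matrix

private lemma bdd_integrable {Ω : Type*} [MeasurableSpace Ω] {μ : Measure Ω}
    [IsProbabilityMeasure μ] {f : Ω → ℝ} (hf : Measurable f) (M : ℝ)
    (h : ∀ ω, |f ω| ≤ M) : Integrable f μ := by
  refine Integrable.mono' (integrable_const M) hf.aestronglyMeasurable ?_
  filter_upwards with ω
  simpa [Real.norm_eq_abs] using h ω

private lemma joint_map_pi {Ω : Type*} [MeasurableSpace Ω] (μ : Measure Ω)
    [IsProbabilityMeasure μ] (d T : ℕ) (f : ℕ → Ω → Fin d → ℝ)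
    (hmeas : ∀ i, Measurable (f i))
    (hindep : iIndepFun f μ) :
    Measure.map (fun ω (k : Fin T) => f k ω) μ
      = Measure.pi (fun k : Fin T => Measure.map (f k) μ) := by
  haveI : ∀ k : Fin T, IsProbabilityMeasure (Measure.map (f k) μ) :=
    fun k => Measure.isProbabilityMeasure_map (hmeas k).aemeasurable
  refine (Measure.pi_eq fun s hs => ?_).symm
  have hL : Measurable (fun ω (k : Fin T) => f k ω) :=
    measurable_pi_lambda _ (fun k => hmeas k)
  rw [Measure.map_apply hL (MeasurableSet.univ_pi hs)]
  set E : ℕ → Set (Fin d → ℝ) :=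
    fun n => if h : n < T then s ⟨n, h⟩ else Set.univ with hE
  have hpre : (fun ω (k : Fin T) => f k ω) ⁻¹' Set.pi Set.univ s
      = ⋂ n ∈ Finset.range T, f n ⁻¹' E n := by
    ext ω
    simp only [Set.mem_preimage, Set.mem_pi, Set.mem_univ, forall_true_left,
      Set.mem_iInter, Finset.mem_range]
    constructor
    · intro h n hn
      simp only [hE, dif_pos hn]
      exact h ⟨n, hn⟩
    · intro h k
      have := h k.1 k.2
      simpa only [hE, dif_pos k.2] using this
  rw [hpre, hindep.meas_biInter (fun n hn => ⟨E n, by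
      by_cases h : n < T
      · simpa [hE, dif_pos h] using (hs ⟨n, h⟩)
      · simp [hE, dif_neg h], rfl⟩)]
  rw [Finset.prod_range (fun n => μ (f n ⁻¹' E n))]
  refine Finset.prod_congr rfl fun k _ => ?_
  rw [Measure.map_apply (hmeas k) (hs k)]
  congr 1
  simp [hE, dif_pos k.2]

private lemma sum_sq_range (n : ℕ) :
    ∑ s ∈ Finset.range n, (s : ℝ) * (s : ℝ)
      = (n : ℝ) * ((n : ℝ) - 1) * (2 * (n : ℝ) - 1) / 6 := by
  induction n with
  | zero => simp
  | succ n ih => rw [Finset.sum_range_succ, ih]; push_cast; ring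

/-- Gradient computation with respect to the bias parameter `δ`: for i.i.d. bounded
symmetric losses, `E[(Σ_t (t−1)ℓ_t)·(Σ_t Σ_{i<t} ℓ_tᵀ(Aℓ_iℓ_iᵀβ + Cℓ_i + δ) + R‖Σ_t ℓ_t‖₂)]
= (T(T−1)(2T−1)/6)·(ΣAΣβ + Σδ)` coordinatewise. -/
theorem stmt_13 {Ω : Type*} [MeasurableSpace Ω] (μ : Measure Ω) [IsProbabilityMeasure μ]
    (d T : ℕ) (hd : 0 < d) (hT : 2 ≤ T)
    (ℓ : ℕ → Ω → Fin d → ℝ) (hmeas : ∀ i, Measurable (ℓ i))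
    (hindep : iIndepFun ℓ μ)
    (hident : ∀ i, Measure.map (ℓ i) μ = Measure.map (ℓ 0) μ)
    (hsymm : ∀ i, Measure.map (ℓ i) μ = Measure.map (fun ω => -ℓ i ω) μ)
    (Cb : ℝ) (hbdd : ∀ i ω a, |ℓ i ω a| ≤ Cb)
    (S : Matrix (Fin d) (Fin d) ℝ) (hS : ∀ a b, S a b = ∫ ω, ℓ 0 ω a * ℓ 0 ω b ∂μ)
    (A C : Matrix (Fin d) (Fin d) ℝ) (β δ : Fin d → ℝ) (R : ℝ) (hR : 0 ≤ R) :
    (fun a : Fin d => ∫ ω, (∑ t ∈ range T, (t : ℝ) * ℓ t ω a) *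
        ((∑ t ∈ range T, ∑ i ∈ range t,
            ℓ t ω ⬝ᵥ ((ℓ i ω ⬝ᵥ β) • (A *ᵥ ℓ i ω) + C *ᵥ ℓ i ω + δ)) +
          R * Real.sqrt (∑ c, (∑ t ∈ range T, ℓ t ω c) ^ 2)) ∂μ) =
      (fun a : Fin d => ((T : ℝ) * ((T : ℝ) - 1) * (2 * (T : ℝ) - 1) / 6) *
        (((S * A * S) *ᵥ β) a + (S *ᵥ δ) a)) := by
  have hCb : 0 ≤ Cb := by
    have hne : μ Set.univ ≠ 0 := by simp
    obtain ⟨ω0, -⟩ := MeasureTheory.nonempty_of_measure_ne_zero hne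
    exact (abs_nonneg _).trans (hbdd 0 ω0 ⟨0, hd⟩)
  -- coordinate measurability
  have hmc : ∀ (s : ℕ) (b : Fin d), Measurable fun ω => ℓ s ω b :=
    fun s b => (measurable_pi_apply b).comp (hmeas s)
  -- mean zero
  have hmean : ∀ (s : ℕ) (b : Fin d), ∫ ω, ℓ s ω b ∂μ = 0 := by
    intro s b
    have h1 : ∫ ω, ℓ s ω b ∂μ = ∫ x : Fin d → ℝ, x b ∂(Measure.map (ℓ s) μ) :=
      (integral_map (hmeas s).aemeasurable
        (measurable_pi_apply b).aestronglyMeasurable).symm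
    have h2 : ∫ x : Fin d → ℝ, x b ∂(Measure.map (fun ω => -ℓ s ω) μ)
        = ∫ ω, -(ℓ s ω b) ∂μ := by
      rw [integral_map (show Measurable (fun ω => -ℓ s ω) from (hmeas s).neg).aemeasurable
        (measurable_pi_apply b).aestronglyMeasurable]
      simp
    have h3 : ∫ x : Fin d → ℝ, x b ∂(Measure.map (ℓ s) μ)
        = -∫ x : Fin d → ℝ, x b ∂(Measure.map (ℓ s) μ) := by
      calc ∫ x : Fin d → ℝ, x b ∂(Measure.map (ℓ s) μ)
          = ∫ ω, -(ℓ s ω b) ∂μ := by rw [hsymm s]; exact h2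
        _ = -∫ ω, ℓ s ω b ∂μ := by rw [integral_neg]
        _ = -∫ x : Fin d → ℝ, x b ∂(Measure.map (ℓ s) μ) := by rw [h1]
    rw [h1]
    linarith
  -- second moments
  have hmom : ∀ (s : ℕ) (a b : Fin d), ∫ ω, ℓ s ω a * ℓ s ω b ∂μ = S a b := by
    intro s a b
    have hφ : Measurable fun x : Fin d → ℝ => x a * x b :=
      (measurable_pi_apply a).mul (measurable_pi_apply b)
    rw [hS a b,
      ← integral_map (hmeas s).aemeasurable hφ.aestronglyMeasurable,
      ← integral_map (hmeas 0).aemeasurable hφ.aestronglyMeasurable, hident s]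
  have hSsymm : ∀ a b, S a b = S b a := by
    intro a b; rw [hS, hS]; simp_rw [mul_comm]
  -- independence: product of a function of ℓ u and a function of ℓ v
  have hprod : ∀ (u v : ℕ), u ≠ v → ∀ {F G : (Fin d → ℝ) → ℝ},
      Measurable F → Measurable G →
      ∫ ω, F (ℓ u ω) * G (ℓ v ω) ∂μ
        = (∫ ω, F (ℓ u ω) ∂μ) * ∫ ω, G (ℓ v ω) ∂μ := by
    intro u v huv F G hF hG
    have h := ((hindep.indepFun huv).comp hF hG).integral_mul_eq_mul_integral
      ((hF.comp (hmeas u)).aestronglyMeasurable)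
      ((hG.comp (hmeas v)).aestronglyMeasurable)
    simpa [Function.comp] using h
  have htriple : ∀ (u v w : ℕ), u ≠ v → u ≠ w →
      ∀ {F : (Fin d → ℝ) → ℝ} {G : (Fin d → ℝ) × (Fin d → ℝ) → ℝ},
      Measurable F → Measurable G →
      ∫ ω, F (ℓ u ω) * G (ℓ v ω, ℓ w ω) ∂μ
        = (∫ ω, F (ℓ u ω) ∂μ) * ∫ ω, G (ℓ v ω, ℓ w ω) ∂μ := by
    intro u v w huv huw F G hF hG
    have h0 : IndepFun (fun ω => (ℓ v ω, ℓ w ω)) (ℓ u) μ :=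
      hindep.indepFun_prodMk hmeas v w u huv.symm huw.symm
    have h := (h0.symm.comp hF hG).integral_mul_eq_mul_integral
      ((hF.comp (hmeas u)).aestronglyMeasurable)
      ((hG.comp ((hmeas v).prodMk (hmeas w))).aestronglyMeasurable)
    simpa [Function.comp] using h
  funext a
  set K : ℝ := ((S * A * S) *ᵥ β) a + (S *ᵥ δ) a with hK
  -- the coefficient-vector function of z
  set v : (Fin d → ℝ) → Fin d → ℝ :=
    fun z b => (z ⬝ᵥ β) * (A *ᵥ z) b + (C *ᵥ z) b + δ b with hv
  have hv_apply : ∀ (z : Fin d → ℝ) (b : Fin d),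
      ((z ⬝ᵥ β) • (A *ᵥ z) + C *ᵥ z + δ) b = v z b := by
    intro z b; simp [hv, Pi.add_apply, Pi.smul_apply, smul_eq_mul]
  -- measurability of v b
  have hmv : ∀ b : Fin d, Measurable fun z : Fin d → ℝ => v z b := by
    intro b
    have h1 : Measurable fun z : Fin d → ℝ => z ⬝ᵥ β := by
      simp only [dotProduct]
      exact Finset.measurable_sum _ fun e _ => (show Measurable fun z : Fin d → ℝ => z e from measurable_pi_apply e).mul_const (β e)
    have h2 : Measurable fun z : Fin d → ℝ => (A *ᵥ z) b := by
      simp only [mulVec, dotProduct]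
      exact Finset.measurable_sum _ fun c _ => (show Measurable fun z : Fin d → ℝ => z c from measurable_pi_apply c).const_mul (A b c)
    have h3 : Measurable fun z : Fin d → ℝ => (C *ᵥ z) b := by
      simp only [mulVec, dotProduct]
      exact Finset.measurable_sum _ fun c _ => (show Measurable fun z : Fin d → ℝ => z c from measurable_pi_apply c).const_mul (C b c)
    exact ((h1.mul h2).add h3).add measurable_const
  -- bound for v b
  set Mv : Fin d → ℝ := fun b =>
    Cb * (∑ e, |β e|) * (Cb * ∑ c, |A b c|) + Cb * (∑ c, |C b c|) + |δ b| with hMv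
  have hv_bdd : ∀ (i : ℕ) (ω : Ω) (b : Fin d), |v (ℓ i ω) b| ≤ Mv b := by
    intro i ω b
    have h1 : |ℓ i ω ⬝ᵥ β| ≤ Cb * ∑ e, |β e| := by
      calc |ℓ i ω ⬝ᵥ β| ≤ ∑ e, |ℓ i ω e * β e| := Finset.abs_sum_le_sum_abs _ _
        _ ≤ ∑ e, Cb * |β e| := Finset.sum_le_sum fun e _ => by
            rw [abs_mul]
            exact mul_le_mul_of_nonneg_right (hbdd i ω e) (abs_nonneg _)
        _ = Cb * ∑ e, |β e| := (Finset.mul_sum _ _ _).symm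
    have h2 : |(A *ᵥ ℓ i ω) b| ≤ Cb * ∑ c, |A b c| := by
      calc |(A *ᵥ ℓ i ω) b| ≤ ∑ c, |A b c * ℓ i ω c| := by
            simpa [mulVec, dotProduct] using
              Finset.abs_sum_le_sum_abs (fun c => A b c * ℓ i ω c) Finset.univ
        _ ≤ ∑ c, |A b c| * Cb := Finset.sum_le_sum fun c _ => by
            rw [abs_mul]
            exact mul_le_mul_of_nonneg_left (hbdd i ω c) (abs_nonneg _)
        _ = Cb * ∑ c, |A b c| := by rw [← Finset.sum_mul, mul_comm]
    have h3 : |(C *ᵥ ℓ i ω) b| ≤ Cb * ∑ c, |C b c| := by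
      calc |(C *ᵥ ℓ i ω) b| ≤ ∑ c, |C b c * ℓ i ω c| := by
            simpa [mulVec, dotProduct] using
              Finset.abs_sum_le_sum_abs (fun c => C b c * ℓ i ω c) Finset.univ
        _ ≤ ∑ c, |C b c| * Cb := Finset.sum_le_sum fun c _ => by
            rw [abs_mul]
            exact mul_le_mul_of_nonneg_left (hbdd i ω c) (abs_nonneg _)
        _ = Cb * ∑ c, |C b c| := by rw [← Finset.sum_mul, mul_comm]
    have h12 : |(ℓ i ω ⬝ᵥ β) * (A *ᵥ ℓ i ω) b| ≤ Cb * (∑ e, |β e|) * (Cb * ∑ c, |A b c|) := by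
      rw [abs_mul]
      exact mul_le_mul h1 h2 (abs_nonneg _) (by positivity)
    calc |v (ℓ i ω) b| ≤ |(ℓ i ω ⬝ᵥ β) * (A *ᵥ ℓ i ω) b + (C *ᵥ ℓ i ω) b| + |δ b| :=
          abs_add_le _ _
      _ ≤ (|(ℓ i ω ⬝ᵥ β) * (A *ᵥ ℓ i ω) b| + |(C *ᵥ ℓ i ω) b|) + |δ b| := by
          exact add_le_add_left (abs_add_le _ _) _
      _ ≤ Mv b := by
          rw [hMv]
          exact add_le_add_left (add_le_add h12 h3) _
  -- expected value of v b at any index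
  have hEv : ∀ (i : ℕ) (b : Fin d),
      ∫ ω, v (ℓ i ω) b ∂μ = (A *ᵥ (S *ᵥ β)) b + δ b := by
    intro i b
    have hint2 : ∀ e c : Fin d, Integrable (fun ω => ℓ i ω e * ℓ i ω c) μ :=
      fun e c => bdd_integrable ((hmc i e).mul (hmc i c)) (Cb * Cb)
        (fun ω => by rw [abs_mul]; exact mul_le_mul (hbdd i ω e) (hbdd i ω c) (abs_nonneg _) hCb)
    have hintc : ∀ c : Fin d, Integrable (fun ω => ℓ i ω c) μ :=
      fun c => bdd_integrable (hmc i c) Cb (fun ω => hbdd i ω c)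
    have hpt : ∀ ω, v (ℓ i ω) b
        = (∑ c, ∑ e, (A b c * β e) * (ℓ i ω e * ℓ i ω c))
          + ((∑ c, C b c * ℓ i ω c) + δ b) := by
      intro ω
      simp only [hv, dotProduct, mulVec]
      rw [Finset.sum_mul_sum, Finset.sum_comm]
      rw [add_assoc]
      congr 1
      exact Finset.sum_congr rfl fun c _ => Finset.sum_congr rfl fun e _ => by ring
    have I1 : Integrable (fun ω => ∑ c, ∑ e, (A b c * β e) * (ℓ i ω e * ℓ i ω c)) μ :=
      integrable_finset_sum _ fun c _ =>
        integrable_finset_sum _ fun e _ => (hint2 e c).const_mul _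
    have I2 : Integrable (fun ω => ∑ c, C b c * ℓ i ω c) μ :=
      integrable_finset_sum _ fun c _ => (hintc c).const_mul _
    have I3 : Integrable (fun ω => (∑ c, C b c * ℓ i ω c) + δ b) μ :=
      I2.add (integrable_const _)
    simp only [hpt]
    rw [integral_add I1 I3, integral_add I2 (integrable_const _),
      integral_finset_sum _ (fun c _ => integrable_finset_sum _ fun e _ => (hint2 e c).const_mul _),
      integral_finset_sum _ (fun c _ => (hintc c).const_mul _)]
    have e1 : ∑ c, ∫ ω, ∑ e, (A b c * β e) * (ℓ i ω e * ℓ i ω c) ∂μ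
        = (A *ᵥ (S *ᵥ β)) b := by
      simp only [mulVec, dotProduct]
      refine Finset.sum_congr rfl fun c _ => ?_
      rw [integral_finset_sum _ (fun e _ => (hint2 e c).const_mul _), Finset.mul_sum]
      refine Finset.sum_congr rfl fun e _ => ?_
      rw [integral_const_mul, hmom i e c, hSsymm e c]
      ring
    have e2 : ∑ c, ∫ ω, C b c * ℓ i ω c ∂μ = 0 := by
      refine Finset.sum_eq_zero fun c _ => ?_
      rw [integral_const_mul, hmean i c, mul_zero]
    rw [e1, e2]
    simp [measure_univ]
  -- core computation for each (s, t, i) with i < t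
  have hcore : ∀ s t i : ℕ, i < t →
      ∫ ω, ℓ s ω a * (ℓ t ω ⬝ᵥ ((ℓ i ω ⬝ᵥ β) • (A *ᵥ ℓ i ω) + C *ᵥ ℓ i ω + δ)) ∂μ
        = if s = t then K else 0 := by
    intro s t i hit
    have hti : t ≠ i := (Nat.ne_of_gt hit)
    have hpt : ∀ ω, ℓ s ω a * (ℓ t ω ⬝ᵥ ((ℓ i ω ⬝ᵥ β) • (A *ᵥ ℓ i ω) + C *ᵥ ℓ i ω + δ))
        = ∑ b, ℓ s ω a * (ℓ t ω b * v (ℓ i ω) b) := by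
      intro ω
      rw [dotProduct, Finset.mul_sum]
      exact Finset.sum_congr rfl fun b _ => by rw [hv_apply]
    have hint : ∀ (s' : ℕ) (b : Fin d),
        Integrable (fun ω => ℓ s' ω a * (ℓ t ω b * v (ℓ i ω) b)) μ := by
      intro s' b
      refine bdd_integrable ((hmc s' a).mul ((hmc t b).mul ((hmv b).comp (hmeas i))))
        (Cb * (Cb * Mv b)) (fun ω => ?_)
      rw [abs_mul, abs_mul]
      have h1 : |ℓ t ω b * v (ℓ i ω) b| ≤ Cb * Mv b := by
        rw [abs_mul]
        exact mul_le_mul (hbdd t ω b) (hv_bdd i ω b) (abs_nonneg _)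
          hCb
      have := mul_le_mul (hbdd s' ω a) (le_of_eq (rfl : |ℓ t ω b * v (ℓ i ω) b| = _))
      rw [← abs_mul]
      exact mul_le_mul (hbdd s' ω a) h1 (abs_nonneg _) hCb
    simp only [hpt]
    rw [integral_finset_sum _ (fun b _ => hint s b)]
    by_cases hst : s = t
    · subst hst
      have hJ : ∀ b, ∫ ω, ℓ s ω a * (ℓ s ω b * v (ℓ i ω) b) ∂μ
          = S a b * ((A *ᵥ (S *ᵥ β)) b + δ b) := by
        intro b
        have hre : (fun ω => ℓ s ω a * (ℓ s ω b * v (ℓ i ω) b))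
            = fun ω => (fun z : Fin d → ℝ => z a * z b) (ℓ s ω)
              * (fun z : Fin d → ℝ => v z b) (ℓ i ω) := by
          funext ω; ring
        rw [hre, hprod s i hti (F := fun z : Fin d → ℝ => z a * z b) (G := fun z => v z b) ((measurable_pi_apply a).mul (measurable_pi_apply b)) (hmv b),
          hmom s a b, hEv i b]
      rw [if_pos rfl, hK]
      calc ∑ b, ∫ ω, ℓ s ω a * (ℓ s ω b * v (ℓ i ω) b) ∂μ
          = ∑ b, S a b * ((A *ᵥ (S *ᵥ β)) b + δ b) := Finset.sum_congr rfl fun b _ => hJ b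
        _ = (S *ᵥ (A *ᵥ (S *ᵥ β))) a + (S *ᵥ δ) a := by
            simp only [mulVec, dotProduct]
            rw [← Finset.sum_add_distrib]
            exact Finset.sum_congr rfl fun b _ => by ring
        _ = ((S * A * S) *ᵥ β) a + (S *ᵥ δ) a := by
            rw [Matrix.mulVec_mulVec, Matrix.mulVec_mulVec]
    · rw [if_neg hst]
      refine Finset.sum_eq_zero fun b _ => ?_
      by_cases hsi : s = i
      · subst hsi
        have hre : (fun ω => ℓ s ω a * (ℓ t ω b * v (ℓ s ω) b))
            = fun ω => (fun z : Fin d → ℝ => z b) (ℓ t ω)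
              * (fun z : Fin d → ℝ => z a * v z b) (ℓ s ω) := by
          funext ω; ring
        rw [hre, hprod t s (fun h => hst h.symm) (F := fun z : Fin d → ℝ => z b) (G := fun z => z a * v z b) (measurable_pi_apply b)
          ((measurable_pi_apply a).mul (hmv b)), hmean t b, zero_mul]
      · have h := htriple s t i hst hsi (F := fun z : Fin d → ℝ => z a)
          (G := fun p : (Fin d → ℝ) × (Fin d → ℝ) => p.1 b * v p.2 b)
          (measurable_pi_apply a)
          (((measurable_pi_apply b).comp measurable_fst).mul ((hmv b).comp measurable_snd))
        simp only [] at h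
        rw [hmean s a, zero_mul] at h
        rw [← h]
  -- the norm term vanishes
  have hN0 : ∀ s : ℕ, s < T →
      ∫ ω, ℓ s ω a * Real.sqrt (∑ c, (∑ t ∈ range T, ℓ t ω c) ^ 2) ∂μ = 0 := by
    intro s hs
    set F : (Fin T → Fin d → ℝ) → ℝ :=
      fun x => x ⟨s, hs⟩ a * Real.sqrt (∑ c, (∑ k : Fin T, x k c) ^ 2) with hF
    have hFmeas : Measurable F := by
      apply Measurable.mul
      · exact (measurable_pi_apply a).comp (measurable_pi_apply _)
      · apply Measurable.sqrt
        apply Finset.measurable_sum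
        intro c _
        exact (Finset.measurable_sum _ fun k _ =>
          (measurable_pi_apply c).comp (measurable_pi_apply k)).pow_const 2
    have hL : Measurable (fun ω (k : Fin T) => ℓ k ω) :=
      measurable_pi_lambda _ (fun k => hmeas (k : ℕ))
    have hL' : Measurable (fun ω (k : Fin T) => -ℓ k ω) :=
      measurable_pi_lambda _ (fun k => (hmeas (k : ℕ)).neg)
    have hindep' : iIndepFun (fun n ω => -ℓ n ω) μ := by
      have := hindep.comp (fun _ (x : Fin d → ℝ) => -x) (fun _ => measurable_neg)
      exact this
    have hmaps : Measure.map (fun ω (k : Fin T) => ℓ k ω) μ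
        = Measure.map (fun ω (k : Fin T) => -ℓ k ω) μ := by
      rw [joint_map_pi μ d T ℓ hmeas hindep,
        joint_map_pi μ d T (fun n ω => -ℓ n ω) (fun n => (hmeas n).neg) hindep']
      congr 1
      funext k
      rw [← hsymm (k : ℕ)]
    have key : ∫ ω, F (fun k : Fin T => ℓ k ω) ∂μ
        = ∫ ω, F (fun k : Fin T => -ℓ k ω) ∂μ := by
      rw [← integral_map hL.aemeasurable hFmeas.aestronglyMeasurable, hmaps,
        integral_map hL'.aemeasurable hFmeas.aestronglyMeasurable]
    have hodd : ∀ ω, F (fun k : Fin T => -ℓ k ω) = -F (fun k : Fin T => ℓ k ω) := by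
      intro ω
      simp only [hF, Pi.neg_apply]
      have h1 : ∀ c : Fin d, (∑ k : Fin T, -ℓ (k : ℕ) ω c) ^ 2
          = (∑ k : Fin T, ℓ (k : ℕ) ω c) ^ 2 := by
        intro c
        have : (∑ k : Fin T, -ℓ (k : ℕ) ω c) = -∑ k : Fin T, ℓ (k : ℕ) ω c := by
          simp
        rw [this]; ring
      simp only [h1]
      ring
    have hzero : ∫ ω, F (fun k : Fin T => ℓ k ω) ∂μ = 0 := by
      have h2 : ∫ ω, F (fun k : Fin T => ℓ k ω) ∂μ
          = -∫ ω, F (fun k : Fin T => ℓ k ω) ∂μ := by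
        conv_lhs => rw [key]
        simp only [hodd]
        rw [integral_neg]
      linarith
    have hFL : ∀ ω, F (fun k : Fin T => ℓ k ω)
        = ℓ s ω a * Real.sqrt (∑ c, (∑ t ∈ range T, ℓ t ω c) ^ 2) := by
      intro ω
      simp only [hF]
      congr 2
      refine Finset.sum_congr rfl fun c _ => ?_
      congr 1
      exact Fin.sum_univ_eq_sum_range (fun t => ℓ t ω c) T
    rw [← hzero]
    exact (integral_congr_ae (Filter.Eventually.of_forall fun ω => (hFL ω).symm))
  -- integrability pieces
  set N : Ω → ℝ := fun ω => Real.sqrt (∑ c, (∑ t ∈ range T, ℓ t ω c) ^ 2) with hNdef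
  have hNmeas : Measurable N := by
    apply Measurable.sqrt
    exact Finset.measurable_sum _ fun c _ =>
      (Finset.measurable_sum _ fun t _ => hmc t c).pow_const 2
  have hNbdd : ∀ ω, |N ω| ≤ Real.sqrt (d * (T * Cb) ^ 2) := by
    intro ω
    rw [abs_of_nonneg (Real.sqrt_nonneg _)]
    apply Real.sqrt_le_sqrt
    calc ∑ c, (∑ t ∈ range T, ℓ t ω c) ^ 2 ≤ ∑ _c : Fin d, (T * Cb) ^ 2 := by
          refine Finset.sum_le_sum fun c _ => ?_
          have h1 : |∑ t ∈ range T, ℓ t ω c| ≤ T * Cb := by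
            calc |∑ t ∈ range T, ℓ t ω c| ≤ ∑ t ∈ range T, |ℓ t ω c| :=
                Finset.abs_sum_le_sum_abs _ _
              _ ≤ ∑ _t ∈ range T, Cb := Finset.sum_le_sum fun t _ => hbdd t ω c
              _ = T * Cb := by simp [Finset.sum_const, mul_comm]
          calc (∑ t ∈ range T, ℓ t ω c) ^ 2 = |∑ t ∈ range T, ℓ t ω c| ^ 2 := (sq_abs _).symm
            _ ≤ (T * Cb) ^ 2 := by
                exact pow_le_pow_left₀ (abs_nonneg _) h1 2
      _ = d * (T * Cb) ^ 2 := by simp [Finset.sum_const, mul_comm]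
  have hTermMeas : ∀ t i : ℕ, Measurable fun ω =>
      ℓ t ω ⬝ᵥ ((ℓ i ω ⬝ᵥ β) • (A *ᵥ ℓ i ω) + C *ᵥ ℓ i ω + δ) := by
    intro t i
    have : (fun ω => ℓ t ω ⬝ᵥ ((ℓ i ω ⬝ᵥ β) • (A *ᵥ ℓ i ω) + C *ᵥ ℓ i ω + δ))
        = fun ω => ∑ b, ℓ t ω b * v (ℓ i ω) b := by
      funext ω
      rw [dotProduct]
      exact Finset.sum_congr rfl fun b _ => by rw [hv_apply]
    rw [this]
    exact Finset.measurable_sum _ fun b _ => (hmc t b).mul ((hmv b).comp (hmeas i))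
  have hTermBdd : ∀ (t i : ℕ) (ω : Ω),
      |ℓ t ω ⬝ᵥ ((ℓ i ω ⬝ᵥ β) • (A *ᵥ ℓ i ω) + C *ᵥ ℓ i ω + δ)| ≤ ∑ b, Cb * Mv b := by
    intro t i ω
    have : ℓ t ω ⬝ᵥ ((ℓ i ω ⬝ᵥ β) • (A *ᵥ ℓ i ω) + C *ᵥ ℓ i ω + δ)
        = ∑ b, ℓ t ω b * v (ℓ i ω) b := by
      rw [dotProduct]
      exact Finset.sum_congr rfl fun b _ => by rw [hv_apply]
    rw [this]
    calc |∑ b, ℓ t ω b * v (ℓ i ω) b| ≤ ∑ b, |ℓ t ω b * v (ℓ i ω) b| :=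
        Finset.abs_sum_le_sum_abs _ _
      _ ≤ ∑ b, Cb * Mv b := Finset.sum_le_sum fun b _ => by
          rw [abs_mul]
          exact mul_le_mul (hbdd t ω b) (hv_bdd i ω b) (abs_nonneg _) hCb
  have hintTerm : ∀ s t i : ℕ, Integrable (fun ω =>
      ℓ s ω a * (ℓ t ω ⬝ᵥ ((ℓ i ω ⬝ᵥ β) • (A *ᵥ ℓ i ω) + C *ᵥ ℓ i ω + δ))) μ := by
    intro s t i
    refine bdd_integrable ((hmc s a).mul (hTermMeas t i)) (Cb * ∑ b, Cb * Mv b) fun ω => ?_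
    rw [abs_mul]
    refine mul_le_mul (hbdd s ω a) (hTermBdd t i ω) (abs_nonneg _) hCb
  have hintN : ∀ s : ℕ, Integrable (fun ω => ℓ s ω a * N ω) μ := by
    intro s
    refine bdd_integrable ((hmc s a).mul hNmeas) (Cb * Real.sqrt (d * (T * Cb) ^ 2))
      fun ω => ?_
    rw [abs_mul]
    exact mul_le_mul (hbdd s ω a) (hNbdd ω) (abs_nonneg _) hCb
  -- assemble
  set Q : Ω → ℝ := fun ω => ∑ t ∈ range T, ∑ i ∈ range t,
      ℓ t ω ⬝ᵥ ((ℓ i ω ⬝ᵥ β) • (A *ᵥ ℓ i ω) + C *ᵥ ℓ i ω + δ) with hQdef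
  have hintQ : ∀ s : ℕ, Integrable (fun ω => ℓ s ω a * Q ω) μ := by
    intro s
    have : (fun ω => ℓ s ω a * Q ω) = fun ω => ∑ t ∈ range T, ∑ i ∈ range t,
        ℓ s ω a * (ℓ t ω ⬝ᵥ ((ℓ i ω ⬝ᵥ β) • (A *ᵥ ℓ i ω) + C *ᵥ ℓ i ω + δ)) := by
      funext ω
      rw [hQdef, Finset.mul_sum]
      exact Finset.sum_congr rfl fun t _ => Finset.mul_sum _ _ _
    rw [this]
    exact integrable_finset_sum _ fun t _ => integrable_finset_sum _ fun i _ => hintTerm s t i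
  have hexp : ∀ ω, (∑ t ∈ range T, (t : ℝ) * ℓ t ω a) * (Q ω + R * N ω)
      = ∑ s ∈ range T, ((s : ℝ) * (ℓ s ω a * Q ω) + ((s : ℝ) * R) * (ℓ s ω a * N ω)) := by
    intro ω
    rw [Finset.sum_mul]
    exact Finset.sum_congr rfl fun s _ => by ring
  have hQval : ∀ s : ℕ, s < T → ∫ ω, ℓ s ω a * Q ω ∂μ = (s : ℝ) * K := by
    intro s hs
    have h1 : (fun ω => ℓ s ω a * Q ω) = fun ω => ∑ t ∈ range T, ∑ i ∈ range t,
        ℓ s ω a * (ℓ t ω ⬝ᵥ ((ℓ i ω ⬝ᵥ β) • (A *ᵥ ℓ i ω) + C *ᵥ ℓ i ω + δ)) := by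
      funext ω
      rw [hQdef, Finset.mul_sum]
      exact Finset.sum_congr rfl fun t _ => Finset.mul_sum _ _ _
    rw [h1, integral_finset_sum _ fun t _ => integrable_finset_sum _ fun i _ => hintTerm s t i]
    have h2 : ∀ t ∈ range T, ∫ ω, ∑ i ∈ range t,
        ℓ s ω a * (ℓ t ω ⬝ᵥ ((ℓ i ω ⬝ᵥ β) • (A *ᵥ ℓ i ω) + C *ᵥ ℓ i ω + δ)) ∂μ
        = if s = t then (t : ℝ) * K else 0 := by
      intro t _
      rw [integral_finset_sum _ fun i _ => hintTerm s t i]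
      have : ∀ i ∈ range t, ∫ ω,
          ℓ s ω a * (ℓ t ω ⬝ᵥ ((ℓ i ω ⬝ᵥ β) • (A *ᵥ ℓ i ω) + C *ᵥ ℓ i ω + δ)) ∂μ
          = if s = t then K else 0 := fun i hi => hcore s t i (Finset.mem_range.mp hi)
      rw [Finset.sum_congr rfl this]
      by_cases hst : s = t
      · simp [hst, Finset.sum_const, mul_comm]
      · simp [hst]
    rw [Finset.sum_congr rfl h2, Finset.sum_ite_eq (range T) s (fun t => (t : ℝ) * K),
      if_pos (Finset.mem_range.mpr hs)]
  calc ∫ ω, (∑ t ∈ range T, (t : ℝ) * ℓ t ω a) *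
        ((∑ t ∈ range T, ∑ i ∈ range t,
            ℓ t ω ⬝ᵥ ((ℓ i ω ⬝ᵥ β) • (A *ᵥ ℓ i ω) + C *ᵥ ℓ i ω + δ)) +
          R * Real.sqrt (∑ c, (∑ t ∈ range T, ℓ t ω c) ^ 2)) ∂μ
      = ∫ ω, ∑ s ∈ range T,
          ((s : ℝ) * (ℓ s ω a * Q ω) + ((s : ℝ) * R) * (ℓ s ω a * N ω)) ∂μ := by
        exact integral_congr_ae (Filter.Eventually.of_forall fun ω => hexp ω)
    _ = ∑ s ∈ range T, ((s : ℝ) * ∫ ω, ℓ s ω a * Q ω ∂μ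
          + ((s : ℝ) * R) * ∫ ω, ℓ s ω a * N ω ∂μ) := by
        have hsummand : ∀ s : ℕ, Integrable (fun ω =>
            (s : ℝ) * (ℓ s ω a * Q ω) + ((s : ℝ) * R) * (ℓ s ω a * N ω)) μ :=
          fun s => ((hintQ s).const_mul _).add ((hintN s).const_mul _)
        rw [integral_finset_sum _ fun s _ => hsummand s]
        refine Finset.sum_congr rfl fun s _ => ?_
        have hA : Integrable (fun ω => (s : ℝ) * (ℓ s ω a * Q ω)) μ := (hintQ s).const_mul _
        have hB : Integrable (fun ω => ((s : ℝ) * R) * (ℓ s ω a * N ω)) μ :=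
          (hintN s).const_mul _
        rw [integral_add hA hB, integral_const_mul, integral_const_mul]
    _ = ∑ s ∈ range T, (s : ℝ) * ((s : ℝ) * K) := by
        refine Finset.sum_congr rfl fun s hs => ?_
        rw [hQval s (Finset.mem_range.mp hs), hN0 s (Finset.mem_range.mp hs), mul_zero, add_zero]
    _ = ((T : ℝ) * ((T : ℝ) - 1) * (2 * (T : ℝ) - 1) / 6) * K := by
        rw [← sum_sq_range T, Finset.sum_mul]
        exact Finset.sum_congr rfl fun s _ => by ring
end

section
/- Let T ≥ 2, R > 0, and let ℓ_1, …, ℓ_T be i.i.d. copies of a bounded random vector Z on ℝ^d that is symmetric about the origin (Z and −Z have the same distribution) with positive-definite covariance Σ := E[ZZᵀ]. For C ∈ ℝ^{d×d} define f(C) := E[ ( Σ_{t=1}^T Σ_{i=1}^{t−1} ℓ_tᵀ C ℓ_i + R ‖Σ_{t=1}^T ℓ_t‖₂ )² ]. Then f(C) = (T(T−1)/2) tr(Cᵀ Σ C Σ) + 2 tr(Cᵀ M) + R² E‖Σ_{t=1}^T ℓ_t‖₂², where M := R · E[ ‖Σ_{j=1}^T ℓ_j‖₂ · Σ_{t=1}^T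 Σ_{i=1}^{t−1} ℓ_t ℓ_iᵀ ], and f is uniquely minimized over ℝ^{d×d} at C* = −(2/(T(T−1))) Σ^{−1} M Σ^{−1}. -/
open MeasureTheory ProbabilityTheory Finset Matrix

set_option linter.unusedSectionVars false
set_option maxHeartbeats 1000000


section aux
variable {Ω : Type*} [MeasurableSpace Ω] {μ : Measure Ω} [IsProbabilityMeasure μ]
  {d : ℕ} {ℓ : ℕ → Ω → Fin d → ℝ}

lemma aux_int {g : Ω → ℝ} (hg : Measurable g) {K : ℝ} (hK : ∀ ω, |g ω| ≤ K) :
    Integrable g μ :=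
  Integrable.mono' (integrable_const K) hg.aestronglyMeasurable (Filter.Eventually.of_forall hK)

lemma aux_bdd_mul {g h : Ω → ℝ} {K L : ℝ} (hg : ∀ ω, |g ω| ≤ K) (hh : ∀ ω, |h ω| ≤ L) :
    ∀ ω, |g ω * h ω| ≤ K * L := fun ω => by
  rw [abs_mul]
  exact mul_le_mul (hg ω) (hh ω) (abs_nonneg _) ((abs_nonneg (g ω)).trans (hg ω))

lemma aux_mean_zero (hmeas : ∀ i, Measurable (ℓ i))
    (hsymm : ∀ i, Measure.map (ℓ i) μ = Measure.map (fun ω => -ℓ i ω) μ)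
    (i : ℕ) (a : Fin d) :
    ∫ ω, ℓ i ω a ∂μ = 0 := by
  have hg : Measurable (fun v : Fin d → ℝ => v a) := measurable_pi_apply a
  have h1 : ∫ ω, ℓ i ω a ∂μ = ∫ ω, -ℓ i ω a ∂μ := by
    rw [← integral_map (hmeas i).aemeasurable hg.aestronglyMeasurable, hsymm i,
      integral_map (φ := fun ω => -ℓ i ω) ((hmeas i).neg).aemeasurable hg.aestronglyMeasurable]
    rfl
  have h2 : ∫ ω, -ℓ i ω a ∂μ = -∫ ω, ℓ i ω a ∂μ := by rw [← integral_neg]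
  linarith [h1, h2]

lemma aux_factor_zero (hmeas : ∀ i, Measurable (ℓ i))
    (hindep : iIndepFun ℓ μ)
    (hsymm : ∀ i, Measure.map (ℓ i) μ = Measure.map (fun ω => -ℓ i ω) μ)
    {Cb : ℝ} (hbdd : ∀ i ω a, |ℓ i ω a| ≤ Cb)
    (k p q r : ℕ) (hp : k ≠ p) (hq : k ≠ q) (hr : k ≠ r) (a b c e : Fin d) :
    ∫ ω, ℓ k ω a * (ℓ p ω b * ℓ q ω c * ℓ r ω e) ∂μ = 0 := by
  have hbdd' : ∀ i ω a, |ℓ i ω a| ≤ |Cb| := fun i ω a => (hbdd i ω a).trans (le_abs_self Cb)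
  have hdisj : Disjoint ({k} : Finset ℕ) ({p, q, r} : Finset ℕ) := by
    simp [Finset.disjoint_left, hp, hq, hr]
  have hind := hindep.indepFun_finset {k} {p, q, r} hdisj hmeas
  have hkm : k ∈ ({k} : Finset ℕ) := Finset.mem_singleton_self k
  have hpm : p ∈ ({p, q, r} : Finset ℕ) := by simp
  have hqm : q ∈ ({p, q, r} : Finset ℕ) := by simp
  have hrm : r ∈ ({p, q, r} : Finset ℕ) := by simp
  have hφ : Measurable (fun v : (({k} : Finset ℕ) → Fin d → ℝ) => v ⟨k, hkm⟩ a) :=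
    (measurable_pi_apply a).comp (measurable_pi_apply _)
  have hψ : Measurable (fun v : (({p, q, r} : Finset ℕ) → Fin d → ℝ) =>
      v ⟨p, hpm⟩ b * v ⟨q, hqm⟩ c * v ⟨r, hrm⟩ e) := by
    apply Measurable.mul
    apply Measurable.mul
    · exact (measurable_pi_apply b).comp (measurable_pi_apply _)
    · exact (measurable_pi_apply c).comp (measurable_pi_apply _)
    · exact (measurable_pi_apply e).comp (measurable_pi_apply _)
  have hXY : IndepFun (fun ω => ℓ k ω a) (fun ω => ℓ p ω b * ℓ q ω c * ℓ r ω e) μ :=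
    hind.comp hφ hψ
  have hIX : Integrable (fun ω => ℓ k ω a) μ :=
    aux_int ((measurable_pi_apply a).comp (hmeas k)) (fun ω => hbdd' k ω a)
  have hIY : Integrable (fun ω => ℓ p ω b * ℓ q ω c * ℓ r ω e) μ := by
    apply aux_int
    · exact (((measurable_pi_apply b).comp (hmeas p)).mul
        ((measurable_pi_apply c).comp (hmeas q))).mul ((measurable_pi_apply e).comp (hmeas r))
    · exact aux_bdd_mul (aux_bdd_mul (fun ω => hbdd' p ω b) (fun ω => hbdd' q ω c))
        (fun ω => hbdd' r ω e)
  have hmul : ∫ ω, ℓ k ω a * (ℓ p ω b * ℓ q ω c * ℓ r ω e) ∂μ =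
      (∫ ω, ℓ k ω a ∂μ) * ∫ ω, ℓ p ω b * ℓ q ω c * ℓ r ω e ∂μ :=
    hXY.integral_mul_eq_mul_integral hIX.aestronglyMeasurable hIY.aestronglyMeasurable
  rw [hmul, aux_mean_zero hmeas hsymm k a, zero_mul]

lemma aux_pair (hmeas : ∀ i, Measurable (ℓ i))
    (hindep : iIndepFun ℓ μ)
    (hident : ∀ i, Measure.map (ℓ i) μ = Measure.map (ℓ 0) μ)
    {Cb : ℝ} (hbdd : ∀ i ω a, |ℓ i ω a| ≤ Cb)
    (k p : ℕ) (hkp : k ≠ p) (a c b e : Fin d) :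
    ∫ ω, (ℓ k ω a * ℓ k ω c) * (ℓ p ω b * ℓ p ω e) ∂μ =
      (∫ ω, ℓ 0 ω a * ℓ 0 ω c ∂μ) * (∫ ω, ℓ 0 ω b * ℓ 0 ω e ∂μ) := by
  have hbdd' : ∀ i ω a, |ℓ i ω a| ≤ |Cb| := fun i ω a => (hbdd i ω a).trans (le_abs_self Cb)
  have hind := hindep.indepFun hkp
  have hXY : IndepFun (fun ω => ℓ k ω a * ℓ k ω c) (fun ω => ℓ p ω b * ℓ p ω e) μ := by
    apply hind.comp (φ := fun v : Fin d → ℝ => v a * v c) (ψ := fun v : Fin d → ℝ => v b * v e)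
    · exact (measurable_pi_apply a).mul (measurable_pi_apply c)
    · exact (measurable_pi_apply b).mul (measurable_pi_apply e)
  have hIX : Integrable (fun ω => ℓ k ω a * ℓ k ω c) μ :=
    aux_int (((measurable_pi_apply a).comp (hmeas k)).mul ((measurable_pi_apply c).comp (hmeas k)))
      (aux_bdd_mul (fun ω => hbdd' k ω a) (fun ω => hbdd' k ω c))
  have hIY : Integrable (fun ω => ℓ p ω b * ℓ p ω e) μ :=
    aux_int (((measurable_pi_apply b).comp (hmeas p)).mul ((measurable_pi_apply e).comp (hmeas p)))
      (aux_bdd_mul (fun ω => hbdd' p ω b) (fun ω => hbdd' p ω e))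
  have hmul : ∫ ω, ℓ k ω a * ℓ k ω c * (ℓ p ω b * ℓ p ω e) ∂μ =
      (∫ ω, ℓ k ω a * ℓ k ω c ∂μ) * ∫ ω, ℓ p ω b * ℓ p ω e ∂μ :=
    hXY.integral_mul_eq_mul_integral hIX.aestronglyMeasurable hIY.aestronglyMeasurable
  rw [hmul]
  have htrans : ∀ (j : ℕ) (x y : Fin d),
      ∫ ω, ℓ j ω x * ℓ j ω y ∂μ = ∫ ω, ℓ 0 ω x * ℓ 0 ω y ∂μ := by
    intro j x y
    have hg : Measurable (fun v : Fin d → ℝ => v x * v y) :=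
      (measurable_pi_apply x).mul (measurable_pi_apply y)
    rw [← integral_map (hmeas j).aemeasurable hg.aestronglyMeasurable, hident j,
      integral_map (hmeas 0).aemeasurable hg.aestronglyMeasurable]
  rw [htrans k a c, htrans p b e]

-- the fourth moment dichotomy
lemma aux_fourth (hmeas : ∀ i, Measurable (ℓ i))
    (hindep : iIndepFun ℓ μ)
    (hident : ∀ i, Measure.map (ℓ i) μ = Measure.map (ℓ 0) μ)
    (hsymm : ∀ i, Measure.map (ℓ i) μ = Measure.map (fun ω => -ℓ i ω) μ)
    {Cb : ℝ} (hbdd : ∀ i ω a, |ℓ i ω a| ≤ Cb)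
    (t i s j : ℕ) (hit : i < t) (hjs : j < s) (a b c e : Fin d) :
    ∫ ω, ℓ t ω a * ℓ i ω b * (ℓ s ω c * ℓ j ω e) ∂μ =
      if t = s ∧ i = j then
        (∫ ω, ℓ 0 ω a * ℓ 0 ω c ∂μ) * (∫ ω, ℓ 0 ω b * ℓ 0 ω e ∂μ) else 0 := by
  by_cases hts : t = s
  · by_cases hij : i = j
    · subst hts; subst hij
      rw [if_pos (⟨rfl, rfl⟩ : t = t ∧ i = i)]
      have hrw : (fun ω => ℓ t ω a * ℓ i ω b * (ℓ t ω c * ℓ i ω e)) =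
          fun ω => (ℓ t ω a * ℓ t ω c) * (ℓ i ω b * ℓ i ω e) := by funext ω; ring
      rw [show ∫ ω, ℓ t ω a * ℓ i ω b * (ℓ t ω c * ℓ i ω e) ∂μ =
          ∫ ω, (ℓ t ω a * ℓ t ω c) * (ℓ i ω b * ℓ i ω e) ∂μ from congrArg _ hrw]
      exact aux_pair hmeas hindep hident hbdd t i hit.ne' a c b e
    · subst hts
      simp only [hij, and_false, if_false]
      have hrw : (fun ω => ℓ t ω a * ℓ i ω b * (ℓ t ω c * ℓ j ω e)) =
          fun ω => ℓ i ω b * (ℓ t ω a * ℓ t ω c * ℓ j ω e) := by funext ω; ring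
      rw [show ∫ ω, ℓ t ω a * ℓ i ω b * (ℓ t ω c * ℓ j ω e) ∂μ =
          ∫ ω, ℓ i ω b * (ℓ t ω a * ℓ t ω c * ℓ j ω e) ∂μ from congrArg _ hrw]
      exact aux_factor_zero hmeas hindep hsymm hbdd i t t j hit.ne hit.ne hij b a c e
  · simp only [hts, false_and, if_false]
    rcases lt_or_gt_of_ne hts with h | h
    · -- t < s : factor out ℓ s
      have hrw : (fun ω => ℓ t ω a * ℓ i ω b * (ℓ s ω c * ℓ j ω e)) =
          fun ω => ℓ s ω c * (ℓ t ω a * ℓ i ω b * ℓ j ω e) := by funext ω; ring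
      rw [show ∫ ω, ℓ t ω a * ℓ i ω b * (ℓ s ω c * ℓ j ω e) ∂μ =
          ∫ ω, ℓ s ω c * (ℓ t ω a * ℓ i ω b * ℓ j ω e) ∂μ from congrArg _ hrw]
      exact aux_factor_zero hmeas hindep hsymm hbdd s t i j
        (ne_of_gt h) (ne_of_gt (hit.trans h)) hjs.ne' c a b e
    · -- s < t : factor out ℓ t
      have hrw : (fun ω => ℓ t ω a * ℓ i ω b * (ℓ s ω c * ℓ j ω e)) =
          fun ω => ℓ t ω a * (ℓ i ω b * ℓ s ω c * ℓ j ω e) := by funext ω; ring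
      rw [show ∫ ω, ℓ t ω a * ℓ i ω b * (ℓ s ω c * ℓ j ω e) ∂μ =
          ∫ ω, ℓ t ω a * (ℓ i ω b * ℓ s ω c * ℓ j ω e) ∂μ from congrArg _ hrw]
      exact aux_factor_zero hmeas hindep hsymm hbdd t i s j
        hit.ne' (ne_of_gt h) (ne_of_gt (hjs.trans h)) a b c e

end aux

lemma sum4_perm {d : ℕ} (G : Fin d → Fin d → Fin d → Fin d → ℝ) :
    ∑ a, ∑ b, ∑ c, ∑ e, G a b c e = ∑ a, ∑ b, ∑ c, ∑ e, G b e c a := by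
  conv_lhs => enter [2, a, 2, b]; rw [Finset.sum_comm]
  conv_lhs => enter [2, a]; rw [Finset.sum_comm]
  rw [Finset.sum_comm]
  conv_lhs => enter [2, e, 2, a]; rw [Finset.sum_comm]

lemma aux_trace_lin {d : ℕ} (C M : Matrix (Fin d) (Fin d) ℝ) :
    Matrix.trace (Cᵀ * M) = ∑ a, ∑ b, C a b * M a b := by
  simp only [Matrix.trace, Matrix.diag, Matrix.mul_apply, Matrix.transpose_apply]
  rw [Finset.sum_comm]

lemma aux_trace_quad {d : ℕ} (C S : Matrix (Fin d) (Fin d) ℝ) (hsymm : Sᵀ = S) :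
    Matrix.trace (Cᵀ * S * C * S) =
      ∑ a, ∑ b, ∑ c, ∑ e, C a b * C c e * (S a c * S b e) := by
  have hs : ∀ a b : Fin d, S b a = S a b := fun a b => by
    rw [← Matrix.transpose_apply S a b, hsymm]
  simp only [Matrix.trace, Matrix.diag, Matrix.mul_apply, Matrix.transpose_apply,
    Finset.sum_mul, Finset.mul_sum]
  rw [sum4_perm]
  apply Finset.sum_congr rfl; intro a _
  apply Finset.sum_congr rfl; intro b _
  apply Finset.sum_congr rfl; intro c _
  apply Finset.sum_congr rfl; intro e _
  rw [hs b e]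
  ring
-- positivity of tr(DᵀSDS)
lemma aux_trace_pos {d : ℕ} {S : Matrix (Fin d) (Fin d) ℝ} (hS : S.PosDef)
    {D : Matrix (Fin d) (Fin d) ℝ} (hD : D ≠ 0) :
    0 < Matrix.trace (Dᵀ * S * D * S) := by
  set Q := (open scoped MatrixOrder in CFC.sqrt S) with hQdef
  have hQQ : Q * Q = S := by rw [hQdef, ← pow_two]; exact (open scoped MatrixOrder in CFC.sq_sqrt S hS.posSemidef.nonneg)
  have hQt : Qᵀ = Q := by
    have := (open scoped MatrixOrder in (CFC.sqrt_nonneg S).posSemidef).isHermitian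
    rwa [Matrix.IsHermitian, Matrix.conjTranspose_eq_transpose_of_trivial] at this
  have hdetQ : IsUnit Q.det := by
    have : Q.det * Q.det = S.det := by rw [← Matrix.det_mul, hQQ]
    have hpos := hS.det_pos
    refine (isUnit_iff_ne_zero).2 ?_
    intro h; rw [h, mul_zero] at this; exact hpos.ne (by rw [← this])
  set E := Q * D * Q with hE
  have hEne : E ≠ 0 := by
    intro h
    apply hD
    have : Q⁻¹ * (Q * D * Q) * Q⁻¹ = Q⁻¹ * (0 : Matrix (Fin d) (Fin d) ℝ) * Q⁻¹ := by rw [← hE, h]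
    rw [show Q⁻¹ * (Q * D * Q) * Q⁻¹ = (Q⁻¹ * Q) * D * (Q * Q⁻¹) by simp only [Matrix.mul_assoc],
      Matrix.nonsing_inv_mul _ hdetQ, Matrix.mul_nonsing_inv _ hdetQ, Matrix.one_mul,
      Matrix.mul_one, Matrix.mul_zero, Matrix.zero_mul] at this
    exact this
  have htr : Matrix.trace (Dᵀ * S * D * S) = Matrix.trace (Eᵀ * E) := by
    rw [hE, Matrix.transpose_mul, Matrix.transpose_mul, hQt, ← hQQ]
    rw [show Dᵀ * (Q * Q) * D * (Q * Q) = (Dᵀ * Q * (Q * D * Q)) * Q by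
      simp only [Matrix.mul_assoc]]
    rw [Matrix.trace_mul_comm]
    simp only [Matrix.mul_assoc]
  rw [htr]
  have hnn : ∀ i : Fin d, 0 ≤ (Eᵀ * E) i i := by
    intro i
    rw [Matrix.mul_apply]
    exact Finset.sum_nonneg fun j _ => by simp [Matrix.transpose_apply, mul_self_nonneg]
  have : Matrix.trace (Eᵀ * E) ≠ 0 := by
    intro h
    apply hEne
    have hz : ∀ i ∈ Finset.univ, (Eᵀ * E) i i = 0 := by
      intro i _
      have := (Finset.sum_eq_zero_iff_of_nonneg (fun i _ => hnn i)).1 h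
      exact this i (Finset.mem_univ i)
    ext j i
    have := hz i (Finset.mem_univ i)
    rw [Matrix.mul_apply] at this
    have h2 := (Finset.sum_eq_zero_iff_of_nonneg (fun j _ => by
      simp [Matrix.transpose_apply, mul_self_nonneg])).1 this j (Finset.mem_univ j)
    simp only [Matrix.transpose_apply] at h2
    simpa using mul_self_eq_zero.1 h2
  exact lt_of_le_of_ne (Finset.sum_nonneg fun i _ => hnn i) (Ne.symm this)

section aux2
variable {Ω : Type*} [MeasurableSpace Ω]

/-- abbreviation for the norm factor -/
noncomputable def auxB {d : ℕ} (ℓ : ℕ → Ω → Fin d → ℝ) (T : ℕ) (ω : Ω) : ℝ :=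
  Real.sqrt (∑ c, (∑ t ∈ Finset.range T, ℓ t ω c) ^ 2)

/-- abbreviation for the bilinear sums -/
def auxG {d : ℕ} (ℓ : ℕ → Ω → Fin d → ℝ) (T : ℕ) (a b : Fin d) (ω : Ω) : ℝ :=
  ∑ t ∈ Finset.range T, ∑ i ∈ Finset.range t, ℓ t ω a * ℓ i ω b

lemma auxB_apply {d : ℕ} (ℓ : ℕ → Ω → Fin d → ℝ) (T : ℕ) (ω : Ω) :
    auxB ℓ T ω = Real.sqrt (∑ c, (∑ t ∈ Finset.range T, ℓ t ω c) ^ 2) := rfl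

lemma auxG_apply {d : ℕ} (ℓ : ℕ → Ω → Fin d → ℝ) (T : ℕ) (a b : Fin d) (ω : Ω) :
    auxG ℓ T a b ω = ∑ t ∈ Finset.range T, ∑ i ∈ Finset.range t, ℓ t ω a * ℓ i ω b := rfl

lemma aux_abs_sum {ι : Type*} (s : Finset ι) (g : ι → ℝ) {K : ℝ}
    (h : ∀ x ∈ s, |g x| ≤ K) : |∑ x ∈ s, g x| ≤ s.card * K := by
  calc |∑ x ∈ s, g x| ≤ ∑ x ∈ s, |g x| := Finset.abs_sum_le_sum_abs _ _
    _ ≤ ∑ _x ∈ s, K := Finset.sum_le_sum h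
    _ = s.card * K := by rw [Finset.sum_const, nsmul_eq_mul]

end aux2

/-- The regret-loss, as a function of the linear predictor matrix `C`, equals the displayed
convex quadratic `(T(T−1)/2)tr(CᵀΣCΣ) + 2tr(CᵀM) + R²E‖Σ_t ℓ_t‖₂²`, and it is uniquely
minimized at `C* = −(2/(T(T−1))) Σ⁻¹ M Σ⁻¹`. -/
theorem stmt_14 {Ω : Type*} [MeasurableSpace Ω] (μ : Measure Ω) [IsProbabilityMeasure μ]
    (d T : ℕ) (hd : 0 < d) (hT : 2 ≤ T) (R : ℝ) (hR : 0 < R)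
    (ℓ : ℕ → Ω → Fin d → ℝ) (hmeas : ∀ i, Measurable (ℓ i))
    (hindep : iIndepFun ℓ μ)
    (hident : ∀ i, Measure.map (ℓ i) μ = Measure.map (ℓ 0) μ)
    (hsymm : ∀ i, Measure.map (ℓ i) μ = Measure.map (fun ω => -ℓ i ω) μ)
    (Cb : ℝ) (hbdd : ∀ i ω a, |ℓ i ω a| ≤ Cb)
    (S : Matrix (Fin d) (Fin d) ℝ) (hS : ∀ a b, S a b = ∫ ω, ℓ 0 ω a * ℓ 0 ω b ∂μ)
    (hSpd : S.PosDef)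
    (M : Matrix (Fin d) (Fin d) ℝ)
    (hM : ∀ a b, M a b = R * ∫ ω, Real.sqrt (∑ c, (∑ t ∈ range T, ℓ t ω c) ^ 2) *
      (∑ t ∈ range T, ∑ i ∈ range t, ℓ t ω a * ℓ i ω b) ∂μ)
    (f : Matrix (Fin d) (Fin d) ℝ → ℝ)
    (hf : ∀ C, f C = ∫ ω, ((∑ t ∈ range T, ∑ i ∈ range t, ℓ t ω ⬝ᵥ (C *ᵥ ℓ i ω)) +
      R * Real.sqrt (∑ c, (∑ t ∈ range T, ℓ t ω c) ^ 2)) ^ 2 ∂μ) :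
    (∀ C, f C = ((T : ℝ) * ((T : ℝ) - 1) / 2) * Matrix.trace (Cᵀ * S * C * S) +
        2 * Matrix.trace (Cᵀ * M) +
        R ^ 2 * ∫ ω, ∑ c, (∑ t ∈ range T, ℓ t ω c) ^ 2 ∂μ) ∧
    (∀ C, C ≠ -((2 / ((T : ℝ) * ((T : ℝ) - 1))) • (S⁻¹ * M * S⁻¹)) →
      f (-((2 / ((T : ℝ) * ((T : ℝ) - 1))) • (S⁻¹ * M * S⁻¹))) < f C) := by
  -- basic bounds and measurability
  set K := |Cb| with hK
  have hbdd' : ∀ i ω a, |ℓ i ω a| ≤ K := fun i ω a => (hbdd i ω a).trans (le_abs_self Cb)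
  have hKnn : (0:ℝ) ≤ K := abs_nonneg _
  have hmc : ∀ t a, Measurable (fun ω => ℓ t ω a) :=
    fun t a => (measurable_pi_apply a).comp (hmeas t)
  set B : Ω → ℝ := auxB ℓ T with hBdef
  set G : Fin d → Fin d → Ω → ℝ := auxG ℓ T with hGdef
  set KG : ℝ := (T:ℝ) * ((T:ℝ) * (K * K)) with hKG
  have hGmeas : ∀ a b, Measurable (G a b) := by
    intro a b
    rw [hGdef]
    exact Finset.measurable_sum _ fun t _ =>
      Finset.measurable_sum _ fun i _ => (hmc t a).mul (hmc i b)
  have hGbdd : ∀ a b ω, |G a b ω| ≤ KG := by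
    intro a b ω
    rw [hGdef, hKG]
    have h1 : ∀ t ∈ range T, |∑ i ∈ range t, ℓ t ω a * ℓ i ω b| ≤ (T:ℝ) * (K * K) := by
      intro t ht
      have := aux_abs_sum (range t) (fun i => ℓ t ω a * ℓ i ω b)
        (fun i _ => aux_bdd_mul (fun _ => hbdd' t ω a) (fun _ => hbdd' i ω b) ω)
      rw [Finset.card_range] at this
      refine this.trans ?_
      have ht' : (t:ℝ) ≤ (T:ℝ) := Nat.cast_le.mpr (Nat.le_of_lt (Finset.mem_range.mp ht))
      exact mul_le_mul_of_nonneg_right ht' (mul_nonneg hKnn hKnn)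
    have := aux_abs_sum (range T) _ h1
    rwa [Finset.card_range] at this
  have hsum_sq_bdd : ∀ ω, |∑ c, (∑ t ∈ range T, ℓ t ω c) ^ 2| ≤
      (d:ℝ) * (((T:ℝ) * K) ^ 2) := by
    intro ω
    have h1 : ∀ c : Fin d, c ∈ Finset.univ → |(∑ t ∈ range T, ℓ t ω c) ^ 2| ≤ ((T:ℝ) * K) ^ 2 := by
      intro c _
      have hb : |∑ t ∈ range T, ℓ t ω c| ≤ (T:ℝ) * K := by
        have := aux_abs_sum (range T) (fun t => ℓ t ω c) (fun t _ => hbdd' t ω c)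
        rwa [Finset.card_range] at this
      rw [abs_pow]
      exact pow_le_pow_left₀ (abs_nonneg _) hb 2
    have := aux_abs_sum Finset.univ (fun c : Fin d => (∑ t ∈ range T, ℓ t ω c) ^ 2) h1
    rwa [Finset.card_univ, Fintype.card_fin] at this
  have hsqmeas : Measurable (fun ω => ∑ c, (∑ t ∈ range T, ℓ t ω c) ^ 2) :=
    Finset.measurable_sum _ fun c _ =>
      (Finset.measurable_sum _ fun t _ => hmc t c).pow_const 2
  have hBmeas : Measurable B := by
    rw [hBdef]
    exact Measurable.sqrt hsqmeas
  have hBnn : ∀ ω, 0 ≤ B ω := fun ω => Real.sqrt_nonneg _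
  set KB : ℝ := Real.sqrt ((d:ℝ) * (((T:ℝ) * K) ^ 2)) with hKB
  have hBbdd : ∀ ω, |B ω| ≤ KB := by
    intro ω
    rw [hBdef, auxB_apply, abs_of_nonneg (Real.sqrt_nonneg _), hKB]
    exact Real.sqrt_le_sqrt ((le_abs_self _).trans (hsum_sq_bdd ω))
  have hB2 : ∀ ω, B ω * B ω = ∑ c, (∑ t ∈ range T, ℓ t ω c) ^ 2 := by
    intro ω
    rw [hBdef, auxB_apply]
    exact Real.mul_self_sqrt (Finset.sum_nonneg fun c _ => sq_nonneg _)
  -- integrability facts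
  have hInt4 : ∀ (t i s j : ℕ) (a b c e : Fin d),
      Integrable (fun ω => ℓ t ω a * ℓ i ω b * (ℓ s ω c * ℓ j ω e)) μ := by
    intro t i s j a b c e
    exact aux_int (((hmc t a).mul (hmc i b)).mul ((hmc s c).mul (hmc j e)))
      (aux_bdd_mul (aux_bdd_mul (fun ω => hbdd' t ω a) (fun ω => hbdd' i ω b))
        (aux_bdd_mul (fun ω => hbdd' s ω c) (fun ω => hbdd' j ω e)))
  have hIntGG : ∀ a b c e : Fin d, Integrable (fun ω => G a b ω * G c e ω) μ :=
    fun a b c e => aux_int ((hGmeas a b).mul (hGmeas c e))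
      (aux_bdd_mul (hGbdd a b) (hGbdd c e))
  have hIntGB : ∀ a b : Fin d, Integrable (fun ω => G a b ω * B ω) μ :=
    fun a b => aux_int ((hGmeas a b).mul hBmeas) (aux_bdd_mul (hGbdd a b) hBbdd)
  have hIntSq : Integrable (fun ω => ∑ c, (∑ t ∈ range T, ℓ t ω c) ^ 2) μ :=
    aux_int hsqmeas hsum_sq_bdd
  -- symmetric S
  have hSsym : Sᵀ = S := by
    ext a b
    rw [Matrix.transpose_apply, hS, hS]
    exact integral_congr_ae (Filter.Eventually.of_forall fun ω => mul_comm _ _)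
  -- Gauss sum
  have hT1 : (1:ℝ) ≤ (T:ℝ) := by exact_mod_cast Nat.one_le_of_lt hT
  have hNsum : (∑ t ∈ range T, (t:ℝ)) = (T:ℝ) * ((T:ℝ) - 1) / 2 := by
    have h2 : (∑ i ∈ range T, i) * 2 = T * (T - 1) := Finset.sum_range_id_mul_two T
    have : ((∑ i ∈ range T, i : ℕ) : ℝ) * 2 = (T:ℝ) * ((T:ℝ) - 1) := by
      rw [← Nat.cast_ofNat (n := 2), ← Nat.cast_mul, h2, Nat.cast_mul,
        Nat.cast_sub (Nat.one_le_of_lt hT), Nat.cast_one]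
    push_cast at this ⊢
    linarith
  -- second moments of G
  have hGG : ∀ a b c e : Fin d, ∫ ω, G a b ω * G c e ω ∂μ =
      (∑ t ∈ range T, (t:ℝ)) * (S a c * S b e) := by
    intro a b c e
    have hexp : (fun ω => G a b ω * G c e ω) = fun ω => ∑ t ∈ range T, ∑ i ∈ range t,
        ∑ s ∈ range T, ∑ j ∈ range s, ℓ t ω a * ℓ i ω b * (ℓ s ω c * ℓ j ω e) := by
      funext ω
      rw [hGdef, auxG_apply, auxG_apply, Finset.sum_mul]
      refine Finset.sum_congr rfl fun t _ => ?_
      rw [Finset.sum_mul]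
      refine Finset.sum_congr rfl fun i _ => ?_
      rw [Finset.mul_sum]
      refine Finset.sum_congr rfl fun s _ => ?_
      rw [Finset.mul_sum]
    rw [congrArg (integral μ) hexp]
    rw [integral_finset_sum _ (fun t _ => integrable_finset_sum _ fun i _ =>
      integrable_finset_sum _ fun s _ => integrable_finset_sum _ fun j _ => hInt4 t i s j a b c e)]
    have hpush : ∀ t ∈ range T, (∫ ω, (∑ i ∈ range t, ∑ s ∈ range T, ∑ j ∈ range s,
          ℓ t ω a * ℓ i ω b * (ℓ s ω c * ℓ j ω e)) ∂μ) =
        ∑ i ∈ range t, ∑ s ∈ range T, ∑ j ∈ range s,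
          ∫ ω, ℓ t ω a * ℓ i ω b * (ℓ s ω c * ℓ j ω e) ∂μ := by
      intro t _
      rw [integral_finset_sum _ (fun i _ => integrable_finset_sum _ fun s _ =>
        integrable_finset_sum _ fun j _ => hInt4 t i s j a b c e)]
      refine Finset.sum_congr rfl fun i _ => ?_
      rw [integral_finset_sum _ (fun s _ => integrable_finset_sum _ fun j _ =>
        hInt4 t i s j a b c e)]
      refine Finset.sum_congr rfl fun s _ => ?_
      rw [integral_finset_sum _ (fun j _ => hInt4 t i s j a b c e)]
    rw [Finset.sum_congr rfl hpush]
    have hval : ∀ t ∈ range T, ∀ i ∈ range t, (∑ s ∈ range T, ∑ j ∈ range s,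
        ∫ ω, ℓ t ω a * ℓ i ω b * (ℓ s ω c * ℓ j ω e) ∂μ) = S a c * S b e := by
      intro t ht i hi
      have hit : i < t := Finset.mem_range.mp hi
      have hinner : ∀ s ∈ range T, (∑ j ∈ range s,
          ∫ ω, ℓ t ω a * ℓ i ω b * (ℓ s ω c * ℓ j ω e) ∂μ) =
          if t = s then S a c * S b e else 0 := by
        intro s _
        have hterm : ∀ j ∈ range s, (∫ ω, ℓ t ω a * ℓ i ω b * (ℓ s ω c * ℓ j ω e) ∂μ) =
            if t = s ∧ i = j then S a c * S b e else 0 := by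
          intro j hj
          rw [aux_fourth hmeas hindep hident hsymm hbdd t i s j hit (Finset.mem_range.mp hj)
            a b c e, ← hS a c, ← hS b e]
        rw [Finset.sum_congr rfl hterm]
        by_cases hts : t = s
        · subst hts
          rw [if_pos rfl]
          simp only [true_and]
          rw [Finset.sum_ite_eq (range t) i (fun _ => S a c * S b e), if_pos hi]
        · rw [if_neg hts]
          refine Finset.sum_eq_zero fun j _ => ?_
          rw [if_neg (fun h => hts h.1)]
      rw [Finset.sum_congr rfl hinner, Finset.sum_ite_eq (range T) t (fun _ => S a c * S b e),
        if_pos ht]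
    calc (∑ t ∈ range T, ∑ i ∈ range t, ∑ s ∈ range T, ∑ j ∈ range s,
          ∫ ω, ℓ t ω a * ℓ i ω b * (ℓ s ω c * ℓ j ω e) ∂μ)
        = ∑ t ∈ range T, ∑ _i ∈ range t, S a c * S b e := by
          refine Finset.sum_congr rfl fun t ht => Finset.sum_congr rfl fun i hi => hval t ht i hi
      _ = ∑ t ∈ range T, (t:ℝ) * (S a c * S b e) := by
          refine Finset.sum_congr rfl fun t _ => ?_
          rw [Finset.sum_const, Finset.card_range, nsmul_eq_mul]
      _ = (∑ t ∈ range T, (t:ℝ)) * (S a c * S b e) := by rw [Finset.sum_mul]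
  -- cross moment with B
  have hGB : ∀ a b : Fin d, ∫ ω, G a b ω * B ω ∂μ = M a b / R := by
    intro a b
    have hcomm : (fun ω => G a b ω * B ω) = fun ω => Real.sqrt (∑ c, (∑ t ∈ range T,
        ℓ t ω c) ^ 2) * (∑ t ∈ range T, ∑ i ∈ range t, ℓ t ω a * ℓ i ω b) := by
      funext ω
      rw [hGdef, hBdef, auxG_apply, auxB_apply, mul_comm]
    rw [congrArg (integral μ) hcomm, eq_div_iff hR.ne', mul_comm, ← hM a b]
  -- Part 1
  have part1 : ∀ C, f C = ((T : ℝ) * ((T : ℝ) - 1) / 2) * Matrix.trace (Cᵀ * S * C * S) +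
      2 * Matrix.trace (Cᵀ * M) +
      R ^ 2 * ∫ ω, ∑ c, (∑ t ∈ range T, ℓ t ω c) ^ 2 ∂μ := by
    intro C
    set AA : Ω → ℝ := fun ω => ∑ a, ∑ b, C a b * G a b ω with hAAdef
    set MC : ℝ := ∑ a, ∑ b, |C a b| with hMCdef
    have hCentry : ∀ a b : Fin d, |C a b| ≤ MC := by
      intro a b
      rw [hMCdef]
      calc |C a b| ≤ ∑ b', |C a b'| :=
            Finset.single_le_sum (fun b' _ => abs_nonneg (C a b')) (Finset.mem_univ b)
        _ ≤ ∑ a', ∑ b', |C a' b'| :=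
            Finset.single_le_sum (f := fun a' => ∑ b', |C a' b'|)
              (fun a' _ => Finset.sum_nonneg fun b' _ => abs_nonneg _) (Finset.mem_univ a)
    have hAAmeas : Measurable AA := by
      rw [hAAdef]
      exact Finset.measurable_sum _ fun a _ => Finset.measurable_sum _ fun b _ =>
        (hGmeas a b).const_mul _
    have hAAbdd : ∀ ω, |AA ω| ≤ (d:ℝ) * ((d:ℝ) * (MC * KG)) := by
      intro ω
      rw [hAAdef]
      have h1 : ∀ a : Fin d, a ∈ Finset.univ → |∑ b, C a b * G a b ω| ≤ (d:ℝ) * (MC * KG) := by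
        intro a _
        have := aux_abs_sum Finset.univ (fun b => C a b * G a b ω)
          (fun b _ => aux_bdd_mul (g := fun _ : Ω => C a b) (fun _ => hCentry a b)
            (hGbdd a b) ω)
        rwa [Finset.card_univ, Fintype.card_fin] at this
      have := aux_abs_sum Finset.univ (fun a => ∑ b, C a b * G a b ω) h1
      rwa [Finset.card_univ, Fintype.card_fin] at this
    have hIntAA2 : Integrable (fun ω => AA ω * AA ω) μ :=
      aux_int (hAAmeas.mul hAAmeas) (aux_bdd_mul hAAbdd hAAbdd)
    have hIntAB : Integrable (fun ω => AA ω * B ω) μ :=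
      aux_int (hAAmeas.mul hBmeas) (aux_bdd_mul hAAbdd hBbdd)
    have hrw1 : ∀ ω, AA ω = ∑ t ∈ range T, ∑ i ∈ range t, ℓ t ω ⬝ᵥ (C *ᵥ ℓ i ω) := by
      intro ω
      show (∑ a, ∑ b, C a b * G a b ω) = _
      have h1 : (∑ a, ∑ b, C a b * G a b ω) = ∑ a, ∑ b, ∑ t ∈ range T, ∑ i ∈ range t,
          C a b * (ℓ t ω a * ℓ i ω b) := by
        refine Finset.sum_congr rfl fun a _ => Finset.sum_congr rfl fun b _ => ?_
        rw [hGdef, auxG_apply, Finset.mul_sum]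
        refine Finset.sum_congr rfl fun t _ => ?_
        rw [Finset.mul_sum]
      rw [h1]
      conv_lhs => enter [2, a]; rw [Finset.sum_comm]
      conv_lhs => rw [Finset.sum_comm]
      conv_lhs => enter [2, t, 2, a]; rw [Finset.sum_comm]
      conv_lhs => enter [2, t]; rw [Finset.sum_comm]
      refine Finset.sum_congr rfl fun t _ => Finset.sum_congr rfl fun i _ => ?_
      simp only [dotProduct, Matrix.mulVec, Finset.mul_sum]
      refine Finset.sum_congr rfl fun a _ => Finset.sum_congr rfl fun b _ => by ring
    have hpt : (fun ω => ((∑ t ∈ range T, ∑ i ∈ range t, ℓ t ω ⬝ᵥ (C *ᵥ ℓ i ω)) +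
        R * Real.sqrt (∑ c, (∑ t ∈ range T, ℓ t ω c) ^ 2)) ^ 2) =
        fun ω => AA ω * AA ω + ((2*R) * (AA ω * B ω) +
          R^2 * (∑ c, (∑ t ∈ range T, ℓ t ω c) ^ 2)) := by
      funext ω
      rw [← hrw1 ω]
      have hb : Real.sqrt (∑ c, (∑ t ∈ range T, ℓ t ω c) ^ 2) = B ω := rfl
      rw [hb, ← hB2 ω]
      ring
    have hA2 : ∫ ω, AA ω * AA ω ∂μ =
        ((T : ℝ) * ((T : ℝ) - 1) / 2) * Matrix.trace (Cᵀ * S * C * S) := by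
      have hexp : (fun ω => AA ω * AA ω) = fun ω => ∑ a, ∑ b, ∑ c, ∑ e,
          (C a b * C c e) * (G a b ω * G c e ω) := by
        funext ω
        show (∑ a, ∑ b, C a b * G a b ω) * (∑ a, ∑ b, C a b * G a b ω) = _
        rw [Finset.sum_mul]
        refine Finset.sum_congr rfl fun a _ => ?_
        rw [Finset.sum_mul]
        refine Finset.sum_congr rfl fun b _ => ?_
        rw [Finset.mul_sum]
        refine Finset.sum_congr rfl fun c _ => ?_
        rw [Finset.mul_sum]
        refine Finset.sum_congr rfl fun e _ => ?_
        ring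
      rw [congrArg (integral μ) hexp]
      rw [integral_finset_sum _ (fun a _ => integrable_finset_sum _ fun b _ =>
        integrable_finset_sum _ fun c _ => integrable_finset_sum _ fun e _ =>
        (hIntGG a b c e).const_mul _)]
      have hpush : ∀ a : Fin d, a ∈ Finset.univ → (∫ ω, (∑ b, ∑ c, ∑ e,
          (C a b * C c e) * (G a b ω * G c e ω)) ∂μ) = ∑ b, ∑ c, ∑ e,
          (∑ t ∈ range T, (t:ℝ)) * (C a b * C c e * (S a c * S b e)) := by
        intro a _
        rw [integral_finset_sum _ (fun b _ => integrable_finset_sum _ fun c _ =>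
          integrable_finset_sum _ fun e _ => (hIntGG a b c e).const_mul _)]
        refine Finset.sum_congr rfl fun b _ => ?_
        rw [integral_finset_sum _ (fun c _ => integrable_finset_sum _ fun e _ =>
          (hIntGG a b c e).const_mul _)]
        refine Finset.sum_congr rfl fun c _ => ?_
        rw [integral_finset_sum _ (fun e _ => (hIntGG a b c e).const_mul _)]
        refine Finset.sum_congr rfl fun e _ => ?_
        rw [integral_const_mul, hGG a b c e]
        ring
      rw [Finset.sum_congr rfl hpush]
      simp only [← Finset.mul_sum]
      rw [hNsum, aux_trace_quad C S hSsym]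
    have hABfin : (2*R) * ∫ ω, AA ω * B ω ∂μ = 2 * Matrix.trace (Cᵀ * M) := by
      have hexp : (fun ω => AA ω * B ω) = fun ω => ∑ a, ∑ b, C a b * (G a b ω * B ω) := by
        funext ω
        show (∑ a, ∑ b, C a b * G a b ω) * B ω = _
        rw [Finset.sum_mul]
        refine Finset.sum_congr rfl fun a _ => ?_
        rw [Finset.sum_mul]
        refine Finset.sum_congr rfl fun b _ => ?_
        rw [mul_assoc]
      rw [congrArg (integral μ) hexp]
      rw [integral_finset_sum _ (fun a _ => integrable_finset_sum _ fun b _ =>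
        (hIntGB a b).const_mul (C a b))]
      have hpush : ∀ a : Fin d, a ∈ Finset.univ → (∫ ω, (∑ b, C a b * (G a b ω * B ω)) ∂μ) =
          ∑ b, C a b * (M a b / R) := by
        intro a _
        rw [integral_finset_sum _ (fun b _ => (hIntGB a b).const_mul _)]
        refine Finset.sum_congr rfl fun b _ => ?_
        rw [integral_const_mul, hGB a b]
      rw [Finset.sum_congr rfl hpush]
      have hdiv : ∑ a, ∑ b, C a b * (M a b / R) = (∑ a, ∑ b, C a b * M a b) / R := by
        rw [Finset.sum_div]
        refine Finset.sum_congr rfl fun a _ => ?_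
        rw [Finset.sum_div]
        refine Finset.sum_congr rfl fun b _ => ?_
        rw [mul_div_assoc]
      rw [hdiv, ← aux_trace_lin C M]
      field_simp
    have h2int : Integrable (fun ω => 2*R*(AA ω * B ω)) μ := hIntAB.const_mul _
    have h3int : Integrable (fun ω => R^2 * (∑ c, (∑ t ∈ range T, ℓ t ω c) ^ 2)) μ :=
      hIntSq.const_mul _
    have hsplit1 : ∫ ω, (AA ω * AA ω + (2*R*(AA ω * B ω) +
        R^2 * (∑ c, (∑ t ∈ range T, ℓ t ω c) ^ 2))) ∂μ =
        (∫ ω, AA ω * AA ω ∂μ) + ∫ ω, (2*R*(AA ω * B ω) +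
        R^2 * (∑ c, (∑ t ∈ range T, ℓ t ω c) ^ 2)) ∂μ :=
      integral_add hIntAA2 (h2int.add h3int)
    have hsplit2 : ∫ ω, (2*R*(AA ω * B ω) + R^2 * (∑ c, (∑ t ∈ range T, ℓ t ω c) ^ 2)) ∂μ =
        (∫ ω, 2*R*(AA ω * B ω) ∂μ) + ∫ ω, R^2 * (∑ c, (∑ t ∈ range T, ℓ t ω c) ^ 2) ∂μ :=
      integral_add h2int h3int
    rw [hf C, congrArg (integral μ) hpt, hsplit1, hsplit2,
      integral_const_mul, integral_const_mul, hA2, hABfin]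
    ring
  refine ⟨part1, ?_⟩
  -- Part 2
  intro C hC
  set Cs : Matrix (Fin d) (Fin d) ℝ :=
    -((2 / ((T : ℝ) * ((T : ℝ) - 1))) • (S⁻¹ * M * S⁻¹)) with hCsdef
  have h2T : (2:ℝ) ≤ (T:ℝ) := by exact_mod_cast hT
  have hTTpos : 0 < (T:ℝ) * ((T:ℝ) - 1) := by nlinarith
  have hκpos : 0 < (T:ℝ) * ((T:ℝ) - 1) / 2 := by linarith
  have hdet : IsUnit S.det := hSpd.det_pos.ne'.isUnit
  have hSCsS : S * Cs * S = -((2 / ((T:ℝ) * ((T:ℝ) - 1))) • M) := by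
    rw [hCsdef, Matrix.mul_neg, Matrix.neg_mul]
    congr 1
    rw [Matrix.mul_smul, Matrix.smul_mul]
    congr 1
    rw [show S * (S⁻¹ * M * S⁻¹) * S = (S * S⁻¹) * M * (S⁻¹ * S) by
      simp only [Matrix.mul_assoc], Matrix.mul_nonsing_inv _ hdet,
      Matrix.nonsing_inv_mul _ hdet, Matrix.one_mul, Matrix.mul_one]
  have hMeq : M = -((((T:ℝ) * ((T:ℝ) - 1) / 2)) • (S * Cs * S)) := by
    rw [hSCsS, smul_neg, neg_neg, smul_smul]
    have h1 : ((T:ℝ) * ((T:ℝ) - 1) / 2) * (2 / ((T:ℝ) * ((T:ℝ) - 1))) = 1 := by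
      field_simp
      exact div_self (by linarith)
    rw [h1, one_smul]
  have htrM : ∀ X : Matrix (Fin d) (Fin d) ℝ, Matrix.trace (Xᵀ * M) =
      -(((T:ℝ) * ((T:ℝ) - 1) / 2) * Matrix.trace (Xᵀ * S * Cs * S)) := by
    intro X
    conv_lhs => rw [hMeq]
    rw [Matrix.mul_neg, Matrix.trace_neg, Matrix.mul_smul, Matrix.trace_smul, smul_eq_mul]
    rw [show Xᵀ * (S * Cs * S) = Xᵀ * S * Cs * S by simp only [Matrix.mul_assoc]]
  have hswap : Matrix.trace (Cᵀ * S * Cs * S) = Matrix.trace (Csᵀ * S * C * S) := by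
    calc Matrix.trace (Cᵀ * S * Cs * S) = Matrix.trace ((Cᵀ * S * Cs * S)ᵀ) :=
          (Matrix.trace_transpose _).symm
      _ = Matrix.trace (S * (Csᵀ * (S * C))) := by
          simp only [Matrix.transpose_mul, Matrix.transpose_transpose, hSsym,
            Matrix.mul_assoc]
      _ = Matrix.trace ((Csᵀ * (S * C)) * S) := Matrix.trace_mul_comm _ _
      _ = Matrix.trace (Csᵀ * S * C * S) := by simp only [Matrix.mul_assoc]
  have hexpand : Matrix.trace ((C - Cs)ᵀ * S * (C - Cs) * S) =
      Matrix.trace (Cᵀ * S * C * S) - Matrix.trace (Cᵀ * S * Cs * S) -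
      Matrix.trace (Csᵀ * S * C * S) + Matrix.trace (Csᵀ * S * Cs * S) := by
    simp only [Matrix.transpose_sub, Matrix.sub_mul, Matrix.mul_sub, Matrix.trace_sub]
    ring
  rw [hswap] at hexpand
  have hpos : 0 < Matrix.trace ((C - Cs)ᵀ * S * (C - Cs) * S) :=
    aux_trace_pos hSpd (sub_ne_zero.mpr hC)
  rw [part1 C, part1 Cs, htrM C, htrM Cs, hswap]
  nlinarith [mul_pos hκpos hpos, hexpand, hpos, hκpos]
end

section
/- Let T ≥ 2, R > 0, and let ℓ_1, …, ℓ_T be i.i.d. copies of a bounded random vector Z on ℝ^d that is symmetric about the origin, has positive-definite covariance Σ := E[ZZᵀ], and whose support contains an open ball around the origin. For A, C ∈ ℝ^{d×d} and β, δ ∈ ℝ^d define f(A, β, C, δ) := E[ ( Σ_{t=1}^T Σ_{i=1}^{t−1} ⟨ℓ_t, A ℓ_i ℓ_iᵀ β + C ℓ_i + δ⟩ + R ‖Σ_{t=1}^T ℓ_t‖₂ )² ]. Then f attains its global minimum at (A, β, C, δ) = (O, 0, C*, 0), where C* := −(2R/(T(T−1))) Σ^{−1} E[ ‖Σ_{j=1}^T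 ℓ_j‖₂ · Σ_{t=1}^T Σ_{i=1}^{t−1} ℓ_t ℓ_iᵀ ] Σ^{−1}; moreover, every global minimizer (A, β, C, δ) of f satisfies A ℓ ℓᵀ β + C ℓ + δ = C* ℓ for almost every ℓ distributed as Z, i.e., all global minimizers induce the same prediction map (ℓ_1, …, ℓ_t) ↦ Σ_{i=1}^t C* ℓ_i. -/
open MeasureTheory ProbabilityTheory Finset Matrix

private lemma aux_integrable_comp {Ω α : Type*} [MeasurableSpace Ω] [MeasurableSpace α]
    [TopologicalSpace α] [OpensMeasurableSpace α] (μ : Measure Ω) [IsProbabilityMeasure μ]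
    {F : α → ℝ} (hF : Continuous F) {X : Ω → α} (hX : Measurable X) {K : Set α}
    (hK : IsCompact K) (hXK : ∀ ω, X ω ∈ K) : Integrable (fun ω => F (X ω)) μ := by
  obtain ⟨B, hB⟩ := hK.exists_bound_of_continuousOn hF.continuousOn
  exact Integrable.mono' (integrable_const B)
    ((hF.measurable.comp hX).aestronglyMeasurable) (ae_of_all _ fun ω => hB _ (hXK ω))

private lemma aux_pairconv {T : ℕ} (a : ℕ → ℕ → ℝ) :
    ∑ t ∈ Finset.range T, ∑ i ∈ Finset.range t, a t i
      = ∑ p ∈ Finset.univ.filter (fun p : Fin T × Fin T => p.2 < p.1), a p.1 p.2 := by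
  rw [Finset.sum_filter, Fintype.sum_prod_type,
    ← Fin.sum_univ_eq_sum_range (fun t => ∑ i ∈ Finset.range t, a t i) T]
  refine Finset.sum_congr rfl fun t _ => ?_
  have h1 : ∀ i : Fin T, (if i < t then a ↑t ↑i else 0)
      = (fun j : ℕ => if j < (t : ℕ) then a ↑t j else 0) ↑i := by
    intro i; simp only [Fin.lt_def]
  simp only [h1]
  rw [Fin.sum_univ_eq_sum_range (fun j => if j < (t : ℕ) then a ↑t j else 0) T,
    ← Finset.sum_filter]
  have h2 : (Finset.range T).filter (fun j => j < (t : ℕ)) = Finset.range (t : ℕ) := by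
    ext j; simp only [Finset.mem_filter, Finset.mem_range]
    exact ⟨fun h => h.2, fun h => ⟨h.trans t.isLt, h⟩⟩
  rw [h2]

private lemma aux_factor4 {d T : ℕ} (m : Measure (Fin d → ℝ)) [IsProbabilityMeasure m]
    (f g h k : (Fin d → ℝ) → ℝ)
    (hf0 : ∫ y, f y ∂m = 0) (hh0 : ∫ y, h y ∂m = 0)
    (t i t' i' : Fin T) (hit : i < t) (hi't' : i' < t') :
    ∫ x : Fin T → Fin d → ℝ, f (x t) * g (x i) * h (x t') * k (x i')
        ∂(Measure.pi fun _ => m) =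
      if t = t' then
        (if i = i' then (∫ y, f y * h y ∂m) * (∫ y, g y * k y ∂m)
          else (∫ y, f y * h y ∂m) * ((∫ y, g y ∂m) * (∫ y, k y ∂m)))
      else 0 := by
  classical
  letI : MeasureSpace (Fin d → ℝ) := ⟨m⟩
  set F : Fin T → (Fin d → ℝ) → ℝ := fun s y =>
    (if s = t then f y else 1) * (if s = i then g y else 1) *
      (if s = t' then h y else 1) * (if s = i' then k y else 1) with hF
  have hprod : ∀ x : Fin T → Fin d → ℝ,
      f (x t) * g (x i) * h (x t') * k (x i') = ∏ s, F s (x s) := by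
    intro x
    simp only [hF]
    rw [Finset.prod_mul_distrib, Finset.prod_mul_distrib, Finset.prod_mul_distrib]
    rw [Finset.prod_ite_eq' Finset.univ t (fun s => f (x s)),
      Finset.prod_ite_eq' Finset.univ i (fun s => g (x s)),
      Finset.prod_ite_eq' Finset.univ t' (fun s => h (x s)),
      Finset.prod_ite_eq' Finset.univ i' (fun s => k (x s))]
    simp
  have hpi : (Measure.pi fun _ : Fin T => m) = (volume : Measure (Fin T → Fin d → ℝ)) :=
    volume_pi.symm
  have hmain : ∫ x : Fin T → Fin d → ℝ, f (x t) * g (x i) * h (x t') * k (x i')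
      ∂(Measure.pi fun _ => m) = ∏ s, ∫ y, F s y ∂m := by
    rw [hpi]
    simp_rw [hprod]
    exact MeasureTheory.integral_fintype_prod_eq_prod F
  rw [hmain]
  have hit' : i ≠ t := ne_of_lt hit
  have hi'ne : i' ≠ t' := ne_of_lt hi't'
  by_cases htt : t = t'
  · subst htt
    by_cases hii : i = i'
    · subst hii
      have hFs : ∀ s, (∫ y, F s y ∂m)
          = (if s = t then ∫ y, f y * h y ∂m else 1) *
            (if s = i then ∫ y, g y * k y ∂m else 1) := by
        intro s
        by_cases h1 : s = t
        · subst h1; simp [hF, Ne.symm hit']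
        · by_cases h2 : s = i
          · subst h2; simp [hF, hit']
          · simp [hF, h1, h2]
      simp only [hFs]
      rw [Finset.prod_mul_distrib,
        Finset.prod_ite_eq' Finset.univ t (fun _ => ∫ y, f y * h y ∂m),
        Finset.prod_ite_eq' Finset.univ i (fun _ => ∫ y, g y * k y ∂m)]
      simp
    · -- t = t', i ≠ i'
      have h1 : i' ≠ t := hi'ne
      have hFs : ∀ s, (∫ y, F s y ∂m)
          = (if s = t then ∫ y, f y * h y ∂m else 1) *
            ((if s = i then ∫ y, g y ∂m else 1) * (if s = i' then ∫ y, k y ∂m else 1)) := by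
        intro s
        by_cases e1 : s = t
        · subst e1; simp [hF, Ne.symm hit', Ne.symm h1]
        · by_cases e2 : s = i
          · subst e2; simp [hF, hit', hii]
          · by_cases e3 : s = i'
            · subst e3; simp [hF, h1, Ne.symm hii]
            · simp [hF, e1, e2, e3]
      simp only [hFs]
      rw [Finset.prod_mul_distrib, Finset.prod_mul_distrib,
        Finset.prod_ite_eq' Finset.univ t (fun _ => ∫ y, f y * h y ∂m),
        Finset.prod_ite_eq' Finset.univ i (fun _ => ∫ y, g y ∂m),
        Finset.prod_ite_eq' Finset.univ i' (fun _ => ∫ y, k y ∂m)]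
      simp [hii]
  · rw [if_neg htt]
    rcases lt_or_gt_of_ne (fun hE : t = t' => htt hE) with hlt | hlt
    · refine Finset.prod_eq_zero (Finset.mem_univ t') ?_
      have e1 : t' ≠ t := fun hE => htt hE.symm
      have e2 : t' ≠ i := (hit.trans hlt).ne'
      have e3 : t' ≠ i' := Ne.symm hi'ne
      simp [hF, e1, e2, e3, hh0]
    · refine Finset.prod_eq_zero (Finset.mem_univ t) ?_
      have e2 : t ≠ i := Ne.symm hit'
      have e3 : t ≠ i' := fun hE => absurd ((hE ▸ hi't').trans hlt) (lt_irrefl t)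
      simp [hF, htt, e2, e3, hf0]

set_option maxHeartbeats 1600000 in
/-- Regret-loss–trained single-layer linear self-attention implements an online-gradient-
descent–type update: the regret-loss `f(A, β, C, δ)` attains its global minimum at
`(O, 0, C*, 0)` with `C* = −(2R/(T(T−1))) Σ⁻¹ E[‖Σ_j ℓ_j‖₂ Σ_t Σ_{i<t} ℓ_t ℓ_iᵀ] Σ⁻¹`,
and every global minimizer induces the same prediction map `ℓ ↦ C* ℓ` almost surely. -/
theorem stmt_15 {Ω : Type*} [MeasurableSpace Ω] (μ : Measure Ω) [IsProbabilityMeasure μ]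
    (d T : ℕ) (hd : 0 < d) (hT : 2 ≤ T) (R : ℝ) (hR : 0 < R)
    (ℓ : ℕ → Ω → Fin d → ℝ) (hmeas : ∀ i, Measurable (ℓ i))
    (hindep : iIndepFun ℓ μ)
    (hident : ∀ i, Measure.map (ℓ i) μ = Measure.map (ℓ 0) μ)
    (hsymm : ∀ i, Measure.map (ℓ i) μ = Measure.map (fun ω => -ℓ i ω) μ)
    (Cb : ℝ) (hbdd : ∀ i ω a, |ℓ i ω a| ≤ Cb)
    (S : Matrix (Fin d) (Fin d) ℝ) (hS : ∀ a b, S a b = ∫ ω, ℓ 0 ω a * ℓ 0 ω b ∂μ)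
    (hSpd : S.PosDef)
    (hsupp : ∃ r > (0 : ℝ), ∀ x : Fin d → ℝ, ‖x‖ < r → ∀ ε > (0 : ℝ),
      0 < Measure.map (ℓ 0) μ (Metric.ball x ε))
    (Cstar : Matrix (Fin d) (Fin d) ℝ)
    (hCstar : Cstar = -((2 * R / ((T : ℝ) * ((T : ℝ) - 1))) •
      (S⁻¹ * (Matrix.of fun a b =>
        ∫ ω, Real.sqrt (∑ c, (∑ t ∈ range T, ℓ t ω c) ^ 2) *
          (∑ t ∈ range T, ∑ i ∈ range t, ℓ t ω a * ℓ i ω b) ∂μ) * S⁻¹)))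
    (f : Matrix (Fin d) (Fin d) ℝ → (Fin d → ℝ) → Matrix (Fin d) (Fin d) ℝ →
      (Fin d → ℝ) → ℝ)
    (hf : ∀ A β C δ, f A β C δ = ∫ ω,
      ((∑ t ∈ range T, ∑ i ∈ range t,
          ℓ t ω ⬝ᵥ ((ℓ i ω ⬝ᵥ β) • (A *ᵥ ℓ i ω) + C *ᵥ ℓ i ω + δ)) +
        R * Real.sqrt (∑ c, (∑ t ∈ range T, ℓ t ω c) ^ 2)) ^ 2 ∂μ) :
    (∀ A β C δ, f 0 0 Cstar 0 ≤ f A β C δ) ∧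
    (∀ A β C δ, (∀ A' β' C' δ', f A β C δ ≤ f A' β' C' δ') →
      ∀ᵐ ω ∂μ, (ℓ 0 ω ⬝ᵥ β) • (A *ᵥ ℓ 0 ω) + C *ᵥ ℓ 0 ω + δ = Cstar *ᵥ ℓ 0 ω) := by
  classical
  -- ## Setup
  set m : Measure (Fin d → ℝ) := Measure.map (ℓ 0) μ with hm
  haveI hmP : IsProbabilityMeasure m := Measure.isProbabilityMeasure_map (hmeas 0).aemeasurable
  set X : Ω → (Fin T → Fin d → ℝ) := fun ω t => ℓ t ω with hXdef
  have hX : Measurable X := measurable_pi_lambda _ fun t => hmeas t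
  set ν : Measure (Fin T → Fin d → ℝ) := Measure.pi fun _ => m with hνdef
  haveI : IsProbabilityMeasure ν := by rw [hνdef]; infer_instance
  -- joint law
  have hjoint : Measure.map X μ = ν := by
    rw [hνdef]
    refine (Measure.pi_eq fun s hs => ?_).symm
    rw [Measure.map_apply hX (MeasurableSet.univ_pi hs)]
    set s' : ℕ → Set (Fin d → ℝ) := fun j => if h : j < T then s ⟨j, h⟩ else Set.univ with hs'
    have hs'm : ∀ j, MeasurableSet (s' j) := by
      intro j; simp only [hs']
      split_ifs with h
      · exact hs _
      · exact MeasurableSet.univ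
    have hXpre : X ⁻¹' Set.pi Set.univ s = ⋂ j ∈ Finset.range T, ℓ j ⁻¹' s' j := by
      ext ω
      simp only [Set.mem_preimage, Set.mem_pi, Set.mem_univ, forall_true_left,
        Set.mem_iInter, Finset.mem_range, hs']
      constructor
      · intro hmem j hj
        rw [dif_pos hj]
        exact hmem ⟨j, hj⟩
      · intro hmem t
        have h2 := hmem t t.isLt
        rw [dif_pos t.isLt] at h2
        simpa using h2
    rw [hXpre, hindep.measure_inter_preimage_eq_mul (Finset.range T) (sets := s')
      (fun j _ => hs'm j)]
    rw [← Fin.prod_univ_eq_prod_range (fun j => μ (ℓ j ⁻¹' s' j)) T]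
    refine Finset.prod_congr rfl fun t _ => ?_
    have h3 : s' ↑t = s t := by
      simp only [hs', t.isLt, dif_pos]
    rw [h3, ← Measure.map_apply (hmeas ↑t) (hs t), hident]
  -- compactness toolkit
  have hIμ : ∀ F : (Fin T → Fin d → ℝ) → ℝ, Continuous F →
      Integrable (fun ω => F (X ω)) μ := by
    intro F hF
    refine aux_integrable_comp μ hF hX
      (isCompact_univ_pi fun _ => isCompact_univ_pi fun _ => isCompact_Icc
        (a := -Cb) (b := Cb)) ?_
    intro ω
    refine Set.mem_univ_pi.2 fun t => Set.mem_univ_pi.2 fun a => ?_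
    exact abs_le.1 (hbdd t ω a)
  have hTr : ∀ F : (Fin T → Fin d → ℝ) → ℝ, Continuous F →
      ∫ x, F x ∂ν = ∫ ω, F (X ω) ∂μ := by
    intro F hF
    rw [← hjoint, integral_map hX.aemeasurable hF.aestronglyMeasurable]
  have hIν : ∀ F : (Fin T → Fin d → ℝ) → ℝ, Continuous F → Integrable F ν := by
    intro F hF
    rw [← hjoint]
    exact (integrable_map_measure hF.aestronglyMeasurable hX.aemeasurable).2 (hIμ F hF)
  have hIℓ0 : ∀ F : (Fin d → ℝ) → ℝ, Continuous F →
      Integrable (fun ω => F (ℓ 0 ω)) μ := by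
    intro F hF
    refine aux_integrable_comp μ hF (hmeas 0)
      (isCompact_univ_pi fun _ => isCompact_Icc (a := -Cb) (b := Cb)) ?_
    intro ω
    exact Set.mem_univ_pi.2 fun a => abs_le.1 (hbdd 0 ω a)
  have hIm : ∀ F : (Fin d → ℝ) → ℝ, Continuous F → Integrable F m := by
    intro F hF
    rw [hm]
    exact (integrable_map_measure hF.aestronglyMeasurable (hmeas 0).aemeasurable).2 (hIℓ0 F hF)
  have hTm : ∀ F : (Fin d → ℝ) → ℝ, Continuous F →
      ∫ y, F y ∂m = ∫ ω, F (ℓ 0 ω) ∂μ := by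
    intro F hF
    rw [hm, integral_map (hmeas 0).aemeasurable hF.aestronglyMeasurable]
  -- symmetry
  have hnegm : Measure.map (fun y : Fin d → ℝ => -y) m = m := by
    rw [hm, Measure.map_map measurable_neg (hmeas 0)]
    exact (hsymm 0).symm
  have hflipm : ∀ F : (Fin d → ℝ) → ℝ, Continuous F →
      ∫ y, F (-y) ∂m = ∫ y, F y ∂m := by
    intro F hF
    conv_rhs => rw [← hnegm]
    rw [integral_map measurable_neg.aemeasurable hF.aestronglyMeasurable]
  have hnegν : Measure.map (fun x : Fin T → Fin d → ℝ => -x) ν = ν := by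
    have h1 : MeasurePreserving (fun y : Fin d → ℝ => -y) m m := ⟨measurable_neg, hnegm⟩
    have h2 := measurePreserving_pi (fun _ : Fin T => m) (fun _ : Fin T => m)
      (fun _ => h1)
    exact h2.map_eq
  have hflipν : ∀ F : (Fin T → Fin d → ℝ) → ℝ, Continuous F →
      ∫ x, F (-x) ∂ν = ∫ x, F x ∂ν := by
    intro F hF
    conv_rhs => rw [← hnegν]
    rw [integral_map measurable_neg.aemeasurable hF.aestronglyMeasurable]
  -- moments
  have hmean : ∀ a : Fin d, ∫ y, y a ∂m = 0 := by
    intro a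
    have h1 := hflipm (fun y => y a) (continuous_apply a)
    simp only [Pi.neg_apply, integral_neg] at h1
    linarith
  have hsec : ∀ a b : Fin d, ∫ y, y a * y b ∂m = S a b := by
    intro a b
    rw [hTm (fun y => y a * y b) (by fun_prop), hS]
  have hSsymm : ∀ a b, S a b = S b a := by
    intro a b; rw [hS, hS]; congr 1; ext ω; ring
  -- ## pairs
  set P : Finset (Fin T × Fin T) := Finset.univ.filter (fun p : Fin T × Fin T => p.2 < p.1)
    with hP
  have hPmem : ∀ p : Fin T × Fin T, p ∈ P → p.2 < p.1 := by
    intro p hp; rw [hP] at hp; exact (Finset.mem_filter.1 hp).2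
  have hPcard : (P.card : ℝ) = (T : ℝ) * ((T : ℝ) - 1) / 2 := by
    have h0 : ∀ t : Fin T, (∑ i : Fin T, if i < t then (1 : ℕ) else 0) = (t : ℕ) := by
      intro t
      have e : ∀ i : Fin T, (if i < t then (1 : ℕ) else 0)
          = (fun j : ℕ => if j < (t : ℕ) then 1 else 0) ↑i := by
        intro i; simp only [Fin.lt_def]
      simp only [e]
      rw [Fin.sum_univ_eq_sum_range (fun j => if j < (t : ℕ) then (1 : ℕ) else 0) T,
        ← Finset.sum_filter]
      have h2 : (Finset.range T).filter (fun j => j < (t : ℕ)) = Finset.range (t : ℕ) := by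
        ext j; simp only [Finset.mem_filter, Finset.mem_range]
        exact ⟨fun h => h.2, fun h => ⟨h.trans t.isLt, h⟩⟩
      rw [h2]; simp
    have h1 : P.card = ∑ t ∈ Finset.range T, t := by
      rw [hP, Finset.card_filter, Fintype.sum_prod_type]
      simp only [h0]
      exact Fin.sum_univ_eq_sum_range (fun j => j) T
    have h2 := congrArg (fun n : ℕ => (n : ℝ)) (Finset.sum_range_id_mul_two T)
    have h3 : 1 ≤ T := by omega
    push_cast [Nat.cast_sub h3] at h2
    rw [h1]
    push_cast
    linarith
  have hPpos : (0 : ℝ) < P.card := by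
    have : ((⟨1, by omega⟩ : Fin T), (⟨0, by omega⟩ : Fin T)) ∈ P := by
      rw [hP, Finset.mem_filter]
      exact ⟨Finset.mem_univ _, by simp only [Fin.lt_def]; omega⟩
    have := Finset.card_pos.2 ⟨_, this⟩
    exact_mod_cast this
  -- generic continuity of pair sums
  have hgc : ∀ (W : (Fin d → ℝ) → (Fin d → ℝ)), (∀ a, Continuous fun y => W y a) →
      Continuous fun x : Fin T → Fin d → ℝ => ∑ p ∈ P, x p.1 ⬝ᵥ W (x p.2) := by
    intro W hW
    refine continuous_finset_sum _ fun p _ => ?_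
    show Continuous fun x : Fin T → Fin d → ℝ => ∑ a, x p.1 a * W (x p.2) a
    refine continuous_finset_sum _ fun a _ => ?_
    exact ((continuous_apply a).comp (continuous_apply p.1)).fun_mul
      ((hW a).comp (continuous_apply p.2))
  have hnc : Continuous fun x : Fin T → Fin d → ℝ =>
      Real.sqrt (∑ c, (∑ t, x t c) ^ 2) := by
    refine Real.continuous_sqrt.comp ?_
    fun_prop
  -- ## the master 4-point expansion
  have hterm : ∀ (V W : (Fin d → ℝ) → (Fin d → ℝ)),
      (∀ a, Continuous fun y => V y a) → (∀ a, Continuous fun y => W y a) →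
      ∀ p q : Fin T × Fin T, p ∈ P → q ∈ P →
      ∫ x, (x p.1 ⬝ᵥ V (x p.2)) * (x q.1 ⬝ᵥ W (x q.2)) ∂ν
        = if p = q then ∑ a, ∑ b, S a b * ∫ y, V y a * W y b ∂m
          else if p.1 = q.1 then
            ∑ a, ∑ b, S a b * ((∫ y, V y a ∂m) * (∫ y, W y b ∂m))
          else 0 := by
    intro V W hVc hWc p q hp hq
    have hit := hPmem p hp
    have hi't' := hPmem q hq
    have hexp : ∀ x : Fin T → Fin d → ℝ, (x p.1 ⬝ᵥ V (x p.2)) * (x q.1 ⬝ᵥ W (x q.2))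
        = ∑ a, ∑ b, x p.1 a * V (x p.2) a * x q.1 b * W (x q.2) b := by
      intro x
      rw [show (x p.1 ⬝ᵥ V (x p.2)) = ∑ a, x p.1 a * V (x p.2) a from rfl,
        show (x q.1 ⬝ᵥ W (x q.2)) = ∑ b, x q.1 b * W (x q.2) b from rfl,
        Finset.sum_mul_sum]
      exact Finset.sum_congr rfl fun a _ => Finset.sum_congr rfl fun b _ => by ring
    have hint : ∀ (a b : Fin d), Integrable
        (fun x : Fin T → Fin d → ℝ => x p.1 a * V (x p.2) a * x q.1 b * W (x q.2) b) ν := by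
      intro a b
      refine hIν _ ?_
      exact ((((continuous_apply a).comp (continuous_apply p.1)).fun_mul
        ((hVc a).comp (continuous_apply p.2))).fun_mul
        ((continuous_apply b).comp (continuous_apply q.1))).fun_mul
        ((hWc b).comp (continuous_apply q.2))
    have step1 : ∫ x, (x p.1 ⬝ᵥ V (x p.2)) * (x q.1 ⬝ᵥ W (x q.2)) ∂ν
        = ∑ a, ∑ b, ∫ x, x p.1 a * V (x p.2) a * x q.1 b * W (x q.2) b ∂ν := by
      rw [integral_congr_ae (Filter.Eventually.of_forall hexp)]
      rw [integral_finset_sum _ (fun a _ => integrable_finset_sum _ (fun b _ => hint a b))]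
      exact Finset.sum_congr rfl fun a _ =>
        integral_finset_sum _ (fun b _ => hint a b)
    have step2 : ∀ a b : Fin d, ∫ x, x p.1 a * V (x p.2) a * x q.1 b * W (x q.2) b ∂ν
        = if p.1 = q.1 then
            (if p.2 = q.2 then (∫ y, y a * y b ∂m) * (∫ y, V y a * W y b ∂m)
              else (∫ y, y a * y b ∂m) * ((∫ y, V y a ∂m) * (∫ y, W y b ∂m)))
          else 0 := by
      intro a b
      rw [hνdef]
      exact aux_factor4 m (fun y => y a) (fun y => V y a) (fun y => y b) (fun y => W y b)
        (hmean a) (hmean b) p.1 p.2 q.1 q.2 hit hi't'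
    rw [step1]
    simp only [step2]
    by_cases h1 : p.1 = q.1
    · by_cases h2 : p.2 = q.2
      · have hpq : p = q := Prod.ext h1 h2
        simp only [h1, h2, hpq, if_true, if_pos rfl]
        exact Finset.sum_congr rfl fun a _ => Finset.sum_congr rfl fun b _ => by
          rw [hsec]
      · have hpq : p ≠ q := fun h => h2 (congrArg Prod.snd h)
        simp only [h1, h2, hpq, if_true, if_false, ite_false, ite_true]
        exact Finset.sum_congr rfl fun a _ => Finset.sum_congr rfl fun b _ => by
          rw [hsec]
    · have hpq : p ≠ q := fun h => h1 (congrArg Prod.fst h)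
      simp only [h1, hpq, if_false, ite_false]
      simp
  -- ## step A : rewrite f as an integral over ν
  have stepA : ∀ (A' : Matrix (Fin d) (Fin d) ℝ) (β' : Fin d → ℝ)
      (C' : Matrix (Fin d) (Fin d) ℝ) (δ' : Fin d → ℝ),
      f A' β' C' δ' = ∫ x : Fin T → Fin d → ℝ,
        ((∑ p ∈ P, x p.1 ⬝ᵥ ((x p.2 ⬝ᵥ β') • (A' *ᵥ x p.2) + C' *ᵥ x p.2 + δ'))
          + R * Real.sqrt (∑ c, (∑ t, x t c) ^ 2)) ^ 2 ∂ν := by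
    intro A' β' C' δ'
    have hWc : ∀ a, Continuous fun y : Fin d → ℝ =>
        ((y ⬝ᵥ β') • (A' *ᵥ y) + C' *ᵥ y + δ') a := by
      intro a
      show Continuous fun y : Fin d → ℝ =>
        (∑ c, y c * β' c) * (∑ c, A' a c * y c) + (∑ c, C' a c * y c) + δ' a
      fun_prop
    have hFc : Continuous fun x : Fin T → Fin d → ℝ =>
        ((∑ p ∈ P, x p.1 ⬝ᵥ ((x p.2 ⬝ᵥ β') • (A' *ᵥ x p.2) + C' *ᵥ x p.2 + δ'))
          + R * Real.sqrt (∑ c, (∑ t, x t c) ^ 2)) ^ 2 :=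
      ((hgc _ hWc).add (continuous_const.mul hnc)).pow 2
    rw [hf, hTr _ hFc]
    refine integral_congr_ae (Filter.Eventually.of_forall fun ω => ?_)
    dsimp only
    have e1 := aux_pairconv (T := T)
      (fun t i => ℓ t ω ⬝ᵥ ((ℓ i ω ⬝ᵥ β') • (A' *ᵥ ℓ i ω) + C' *ᵥ ℓ i ω + δ'))
    rw [← hP] at e1
    have e2 : ∀ c : Fin d, (∑ t ∈ range T, ℓ t ω c) = ∑ t : Fin T, X ω t c := by
      intro c
      rw [hXdef]
      exact (Fin.sum_univ_eq_sum_range (fun t => ℓ t ω c) T).symm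
    rw [e1]
    simp only [e2, hXdef]
  -- mean of linear images vanishes
  have hC0 : ∀ (M : Matrix (Fin d) (Fin d) ℝ) (b : Fin d), ∫ y, (M *ᵥ y) b ∂m = 0 := by
    intro M b
    calc ∫ y, (M *ᵥ y) b ∂m = ∫ y, ∑ e, M b e * y e ∂m := rfl
      _ = ∑ e, ∫ y, M b e * y e ∂m := by
          exact integral_finset_sum _ fun e _ =>
            (hIm (fun y => y e) (continuous_apply e)).const_mul _
      _ = 0 := by
          simp only [integral_const_mul, hmean, mul_zero, Finset.sum_const_zero]
  -- the G matrix transfer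
  set Gmat : Matrix (Fin d) (Fin d) ℝ := Matrix.of fun a b =>
      ∫ ω, Real.sqrt (∑ c, (∑ t ∈ range T, ℓ t ω c) ^ 2) *
        (∑ t ∈ range T, ∑ i ∈ range t, ℓ t ω a * ℓ i ω b) ∂μ with hGmat
  have hGm : ∀ a c : Fin d,
      ∫ x : Fin T → Fin d → ℝ, Real.sqrt (∑ c', (∑ t, x t c') ^ 2) *
        (∑ p ∈ P, x p.1 a * x p.2 c) ∂ν = Gmat a c := by
    intro a c
    have hFc : Continuous fun x : Fin T → Fin d → ℝ =>
        Real.sqrt (∑ c', (∑ t, x t c') ^ 2) * (∑ p ∈ P, x p.1 a * x p.2 c) := by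
      refine hnc.mul (continuous_finset_sum _ fun p _ => ?_)
      exact ((continuous_apply a).comp (continuous_apply p.1)).fun_mul
        ((continuous_apply c).comp (continuous_apply p.2))
    rw [hTr _ hFc, hGmat, Matrix.of_apply]
    refine integral_congr_ae (Filter.Eventually.of_forall fun ω => ?_)
    dsimp only
    have e1 := aux_pairconv (T := T) (fun t i => ℓ t ω a * ℓ i ω c)
    rw [← hP] at e1
    have e2 : ∀ c' : Fin d, (∑ t ∈ range T, ℓ t ω c') = ∑ t : Fin T, X ω t c' := by
      intro c'
      rw [hXdef]
      exact (Fin.sum_univ_eq_sum_range (fun t => ℓ t ω c') T).symm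
    rw [← e1]
    simp only [e2, hXdef]
  -- matrix identity
  have hdet : IsUnit S.det := isUnit_iff_ne_zero.mpr (ne_of_gt hSpd.det_pos)
  have hSCS : ∀ a c : Fin d, (S * Cstar * S) a c
      = -((2 * R / ((T : ℝ) * ((T : ℝ) - 1))) * Gmat a c) := by
    have h1 : S * Cstar * S = -((2 * R / ((T : ℝ) * ((T : ℝ) - 1))) • Gmat) := by
      rw [hCstar]
      rw [Matrix.mul_neg, Matrix.neg_mul, Matrix.mul_smul, Matrix.smul_mul]
      congr 1
      congr 1
      rw [show S * (S⁻¹ * Gmat * S⁻¹) * S = S * S⁻¹ * Gmat * (S⁻¹ * S) by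
        simp only [Matrix.mul_assoc]]
      rw [Matrix.mul_nonsing_inv S hdet, Matrix.nonsing_inv_mul S hdet, Matrix.one_mul,
        Matrix.mul_one]
    intro a c
    rw [h1]
    simp [Matrix.neg_apply, Matrix.smul_apply, smul_eq_mul]
  have hk : (P.card : ℝ) * (2 * R / ((T : ℝ) * ((T : ℝ) - 1))) = R := by
    have h2 : (2 : ℝ) ≤ (T : ℝ) := by exact_mod_cast hT
    have hne1 : (T : ℝ) ≠ 0 := by linarith
    have hne2 : (T : ℝ) - 1 ≠ 0 := by linarith
    rw [hPcard]
    field_simp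
  -- ## key decomposition
  have key : ∀ (A : Matrix (Fin d) (Fin d) ℝ) (β : Fin d → ℝ)
      (C : Matrix (Fin d) (Fin d) ℝ) (δ : Fin d → ℝ),
      f A β C δ = f 0 0 Cstar 0 + ∫ x : Fin T → Fin d → ℝ,
        (∑ p ∈ P, x p.1 ⬝ᵥ ((x p.2 ⬝ᵥ β) • (A *ᵥ x p.2) + (C - Cstar) *ᵥ x p.2 + δ)) ^ 2 ∂ν := by
    intro A β C δ
    set Dm : (Fin d → ℝ) → Fin d → ℝ :=
      fun y => (y ⬝ᵥ β) • (A *ᵥ y) + (C - Cstar) *ᵥ y + δ with hDm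
    have hDc : ∀ a, Continuous fun y => Dm y a := by
      intro a
      show Continuous fun y : Fin d → ℝ =>
        (∑ c, y c * β c) * (∑ c, A a c * y c) + (∑ c, (C - Cstar) a c * y c) + δ a
      fun_prop
    have hCstarc : ∀ a, Continuous fun y : Fin d → ℝ => (Cstar *ᵥ y) a := by
      intro a
      show Continuous fun y : Fin d → ℝ => ∑ c, Cstar a c * y c
      fun_prop
    have hgDc : Continuous fun x : Fin T → Fin d → ℝ => ∑ p ∈ P, x p.1 ⬝ᵥ Dm (x p.2) :=
      hgc Dm hDc
    have hgCc : Continuous fun x : Fin T → Fin d → ℝ => ∑ p ∈ P, x p.1 ⬝ᵥ (Cstar *ᵥ x p.2) :=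
      hgc _ hCstarc
    -- the cross term vanishes
    have crossZero : ∫ x : Fin T → Fin d → ℝ,
        ((∑ p ∈ P, x p.1 ⬝ᵥ (Cstar *ᵥ x p.2)) + R * Real.sqrt (∑ c, (∑ t, x t c) ^ 2))
          * (∑ p ∈ P, x p.1 ⬝ᵥ Dm (x p.2)) ∂ν = 0 := by
      -- first summand : E[g_D g_{C*}]
      have t1 : ∫ x : Fin T → Fin d → ℝ,
          (∑ p ∈ P, x p.1 ⬝ᵥ Dm (x p.2)) * (∑ q ∈ P, x q.1 ⬝ᵥ (Cstar *ᵥ x q.2)) ∂ν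
          = (P.card : ℝ) * ∑ a, ∑ b, S a b * ∫ y, Dm y a * (Cstar *ᵥ y) b ∂m := by
        have e : ∀ x : Fin T → Fin d → ℝ,
            (∑ p ∈ P, x p.1 ⬝ᵥ Dm (x p.2)) * (∑ q ∈ P, x q.1 ⬝ᵥ (Cstar *ᵥ x q.2))
            = ∑ p ∈ P, ∑ q ∈ P, (x p.1 ⬝ᵥ Dm (x p.2)) * (x q.1 ⬝ᵥ (Cstar *ᵥ x q.2)) :=
          fun x => Finset.sum_mul_sum _ _ _ _
        have hintpq : ∀ p q : Fin T × Fin T, Integrable (fun x : Fin T → Fin d → ℝ =>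
            (x p.1 ⬝ᵥ Dm (x p.2)) * (x q.1 ⬝ᵥ (Cstar *ᵥ x q.2))) ν := by
          intro p q
          refine hIν _ ?_
          refine Continuous.mul ?_ ?_
          · show Continuous fun x : Fin T → Fin d → ℝ => ∑ a, x p.1 a * Dm (x p.2) a
            refine continuous_finset_sum _ fun a _ => ?_
            exact ((continuous_apply a).comp (continuous_apply p.1)).fun_mul
              ((hDc a).comp (continuous_apply p.2))
          · show Continuous fun x : Fin T → Fin d → ℝ => ∑ a, x q.1 a * (Cstar *ᵥ x q.2) a
            refine continuous_finset_sum _ fun a _ => ?_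
            exact ((continuous_apply a).comp (continuous_apply q.1)).fun_mul
              ((hCstarc a).comp (continuous_apply q.2))
        rw [integral_congr_ae (Filter.Eventually.of_forall e),
          integral_finset_sum _ (fun p _ => integrable_finset_sum _ fun q _ => hintpq p q)]
        have e2 : ∀ p ∈ P, ∫ x : Fin T → Fin d → ℝ,
            (∑ q ∈ P, (x p.1 ⬝ᵥ Dm (x p.2)) * (x q.1 ⬝ᵥ (Cstar *ᵥ x q.2))) ∂ν
            = ∑ q ∈ P, if p = q then
                ∑ a, ∑ b, S a b * ∫ y, Dm y a * (Cstar *ᵥ y) b ∂m else 0 := by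
          intro p hp
          rw [integral_finset_sum _ (fun q _ => hintpq p q)]
          refine Finset.sum_congr rfl fun q hq => ?_
          rw [hterm Dm (fun y => Cstar *ᵥ y) hDc hCstarc p q hp hq]
          by_cases h1 : p = q
          · simp [h1]
          · simp only [h1, if_false, ite_false]
            split_ifs with h2
            · simp [hC0]
            · rfl
        rw [Finset.sum_congr rfl e2]
        have e3 : ∀ p ∈ P, (∑ q ∈ P, if p = q then
            (∑ a, ∑ b, S a b * ∫ y, Dm y a * (Cstar *ᵥ y) b ∂m) else 0)
            = ∑ a, ∑ b, S a b * ∫ y, Dm y a * (Cstar *ᵥ y) b ∂m := by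
          intro p hp
          rw [Finset.sum_ite_eq P p (fun _ =>
            ∑ a, ∑ b, S a b * ∫ y, Dm y a * (Cstar *ᵥ y) b ∂m), if_pos hp]
        rw [Finset.sum_congr rfl e3, Finset.sum_const, nsmul_eq_mul]
      -- evaluate the inner m-integral
      have hJ : ∀ a b : Fin d, ∫ y, Dm y a * (Cstar *ᵥ y) b ∂m
          = ∑ c, ∑ e, (C - Cstar) a c * Cstar b e * S c e := by
        intro a b
        have hsplit : ∀ y : Fin d → ℝ, Dm y a * (Cstar *ᵥ y) b
            = (((y ⬝ᵥ β) • (A *ᵥ y) + δ) a) * ((Cstar *ᵥ y) b)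
              + (((C - Cstar) *ᵥ y) a) * ((Cstar *ᵥ y) b) := by
          intro y
          simp only [hDm, Pi.add_apply, Pi.smul_apply, smul_eq_mul]
          ring
        have hc1 : Continuous fun y : Fin d → ℝ =>
            (((y ⬝ᵥ β) • (A *ᵥ y) + δ) a) * ((Cstar *ᵥ y) b) := by
          show Continuous fun y : Fin d → ℝ =>
            ((∑ c, y c * β c) * (∑ c, A a c * y c) + δ a) * (∑ c, Cstar b c * y c)
          fun_prop
        have hc2 : Continuous fun y : Fin d → ℝ =>
            (((C - Cstar) *ᵥ y) a) * ((Cstar *ᵥ y) b) := by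
          show Continuous fun y : Fin d → ℝ =>
            (∑ c, (C - Cstar) a c * y c) * (∑ c, Cstar b c * y c)
          fun_prop
        rw [integral_congr_ae (Filter.Eventually.of_forall hsplit),
          integral_add (hIm _ hc1) (hIm _ hc2)]
        have hoddint : ∫ y, (((y ⬝ᵥ β) • (A *ᵥ y) + δ) a) * ((Cstar *ᵥ y) b) ∂m = 0 := by
          have hodd : ∀ y : Fin d → ℝ,
              (((-y ⬝ᵥ β) • (A *ᵥ -y) + δ) a) * ((Cstar *ᵥ -y) b)
              = -((((y ⬝ᵥ β) • (A *ᵥ y) + δ) a) * ((Cstar *ᵥ y) b)) := by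
            intro y
            rw [neg_dotProduct, Matrix.mulVec_neg, Matrix.mulVec_neg, smul_neg,
              neg_smul, neg_neg]
            simp only [Pi.add_apply, Pi.neg_apply, Pi.smul_apply, smul_eq_mul]
            ring
          have h2 := hflipm _ hc1
          rw [integral_congr_ae (Filter.Eventually.of_forall hodd), integral_neg] at h2
          linarith
        rw [hoddint, zero_add]
        have hptw : ∀ y : Fin d → ℝ, (((C - Cstar) *ᵥ y) a) * ((Cstar *ᵥ y) b)
            = ∑ c, ∑ e, (C - Cstar) a c * Cstar b e * (y c * y e) := by
          intro y
          show (∑ c, (C - Cstar) a c * y c) * (∑ e, Cstar b e * y e) = _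
          rw [Finset.sum_mul_sum]
          exact Finset.sum_congr rfl fun c _ => Finset.sum_congr rfl fun e _ => by ring
        have hice : ∀ c e : Fin d, Integrable
            (fun y : Fin d → ℝ => (C - Cstar) a c * Cstar b e * (y c * y e)) m := by
          intro c e
          exact (hIm _ (((continuous_apply c).mul (continuous_apply e)))).const_mul _
        rw [integral_congr_ae (Filter.Eventually.of_forall hptw),
          integral_finset_sum _ (fun c _ => integrable_finset_sum _ fun e _ => hice c e)]
        refine Finset.sum_congr rfl fun c _ => ?_
        rw [integral_finset_sum _ (fun e _ => hice c e)]
        refine Finset.sum_congr rfl fun e _ => ?_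
        rw [integral_const_mul, hsec]
      -- algebraic reorganization of t1's value
      have hW0 : (∑ a, ∑ b, S a b * ∫ y, Dm y a * (Cstar *ᵥ y) b ∂m)
          = ∑ a, ∑ c, (C - Cstar) a c * (S * Cstar * S) a c := by
        simp only [hJ]
        have hM : ∀ a c : Fin d, (S * Cstar * S) a c
            = ∑ e, (∑ b, S a b * Cstar b e) * S e c := by
          intro a c
          rw [Matrix.mul_apply]
          exact Finset.sum_congr rfl fun e _ => by rw [Matrix.mul_apply]
        simp only [hM, Finset.mul_sum, Finset.sum_mul]
        refine Finset.sum_congr rfl fun a _ => ?_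
        rw [Finset.sum_comm]
        refine Finset.sum_congr rfl fun c _ => ?_
        rw [Finset.sum_comm]
        refine Finset.sum_congr rfl fun e _ => ?_
        refine Finset.sum_congr rfl fun b _ => ?_
        rw [hSsymm c e]
        ring
      -- second summand : E[n g_D]
      have t2 : ∫ x : Fin T → Fin d → ℝ,
          Real.sqrt (∑ c, (∑ t, x t c) ^ 2) * (∑ p ∈ P, x p.1 ⬝ᵥ Dm (x p.2)) ∂ν
          = ∑ a, ∑ c, (C - Cstar) a c * Gmat a c := by
        have hint1 : ∀ p : Fin T × Fin T, Integrable (fun x : Fin T → Fin d → ℝ =>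
            Real.sqrt (∑ c, (∑ t, x t c) ^ 2) * (x p.1 ⬝ᵥ Dm (x p.2))) ν := by
          intro p
          refine hIν _ (hnc.mul ?_)
          show Continuous fun x : Fin T → Fin d → ℝ => ∑ a, x p.1 a * Dm (x p.2) a
          refine continuous_finset_sum _ fun a _ => ?_
          exact ((continuous_apply a).comp (continuous_apply p.1)).fun_mul
            ((hDc a).comp (continuous_apply p.2))
        rw [integral_congr_ae (Filter.Eventually.of_forall fun x : Fin T → Fin d → ℝ =>
          Finset.mul_sum P (fun p => x p.1 ⬝ᵥ Dm (x p.2))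
            (Real.sqrt (∑ c, (∑ t, x t c) ^ 2))),
          integral_finset_sum _ (fun p _ => hint1 p)]
        have hsplitp : ∀ p ∈ P, ∫ x : Fin T → Fin d → ℝ,
            Real.sqrt (∑ c, (∑ t, x t c) ^ 2) * (x p.1 ⬝ᵥ Dm (x p.2)) ∂ν
            = ∫ x : Fin T → Fin d → ℝ,
              Real.sqrt (∑ c, (∑ t, x t c) ^ 2) * (x p.1 ⬝ᵥ ((C - Cstar) *ᵥ x p.2)) ∂ν := by
          intro p _
          have hpt : ∀ x : Fin T → Fin d → ℝ,
              Real.sqrt (∑ c, (∑ t, x t c) ^ 2) * (x p.1 ⬝ᵥ Dm (x p.2))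
              = Real.sqrt (∑ c, (∑ t, x t c) ^ 2) *
                  (x p.1 ⬝ᵥ ((x p.2 ⬝ᵥ β) • (A *ᵥ x p.2) + δ))
                + Real.sqrt (∑ c, (∑ t, x t c) ^ 2) *
                  (x p.1 ⬝ᵥ ((C - Cstar) *ᵥ x p.2)) := by
            intro x
            have hDm2 : Dm (x p.2) = ((x p.2 ⬝ᵥ β) • (A *ᵥ x p.2) + δ)
                + (C - Cstar) *ᵥ x p.2 := by
              simp only [hDm]; abel
            rw [hDm2, dotProduct_add, mul_add]
          have hce : Continuous fun x : Fin T → Fin d → ℝ =>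
              Real.sqrt (∑ c, (∑ t, x t c) ^ 2) *
                (x p.1 ⬝ᵥ ((x p.2 ⬝ᵥ β) • (A *ᵥ x p.2) + δ)) := by
            refine hnc.mul ?_
            show Continuous fun x : Fin T → Fin d → ℝ =>
              ∑ a, x p.1 a * ((∑ c, x p.2 c * β c) * (∑ c, A a c * x p.2 c) + δ a)
            refine continuous_finset_sum _ fun a _ => ?_
            refine ((continuous_apply a).comp (continuous_apply p.1)).fun_mul ?_
            fun_prop
          have hcl : Continuous fun x : Fin T → Fin d → ℝ =>
              Real.sqrt (∑ c, (∑ t, x t c) ^ 2) *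
                (x p.1 ⬝ᵥ ((C - Cstar) *ᵥ x p.2)) := by
            refine hnc.mul ?_
            show Continuous fun x : Fin T → Fin d → ℝ =>
              ∑ a, x p.1 a * (∑ c, (C - Cstar) a c * x p.2 c)
            refine continuous_finset_sum _ fun a _ => ?_
            exact ((continuous_apply a).comp (continuous_apply p.1)).fun_mul (by fun_prop)
          rw [integral_congr_ae (Filter.Eventually.of_forall hpt),
            integral_add (hIν _ hce) (hIν _ hcl)]
          have hzero : ∫ x : Fin T → Fin d → ℝ,
              Real.sqrt (∑ c, (∑ t, x t c) ^ 2) *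
                (x p.1 ⬝ᵥ ((x p.2 ⬝ᵥ β) • (A *ᵥ x p.2) + δ)) ∂ν = 0 := by
            have hodd : ∀ x : Fin T → Fin d → ℝ,
                Real.sqrt (∑ c, (∑ t, (-x) t c) ^ 2) *
                  ((-x) p.1 ⬝ᵥ (((-x) p.2 ⬝ᵥ β) • (A *ᵥ (-x) p.2) + δ))
                = -(Real.sqrt (∑ c, (∑ t, x t c) ^ 2) *
                    (x p.1 ⬝ᵥ ((x p.2 ⬝ᵥ β) • (A *ᵥ x p.2) + δ))) := by
              intro x
              have hn : Real.sqrt (∑ c, (∑ t, (-x) t c) ^ 2)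
                  = Real.sqrt (∑ c, (∑ t, x t c) ^ 2) := by
                congr 1
                refine Finset.sum_congr rfl fun c _ => ?_
                simp [Finset.sum_neg_distrib]
              rw [hn]
              have he : (((-x) p.2 ⬝ᵥ β) • (A *ᵥ (-x) p.2) + δ)
                  = ((x p.2 ⬝ᵥ β) • (A *ᵥ x p.2) + δ) := by
                simp only [Pi.neg_apply]
                rw [neg_dotProduct, Matrix.mulVec_neg, neg_smul, smul_neg, neg_neg]
              rw [he]
              simp only [Pi.neg_apply]
              rw [neg_dotProduct]
              ring
            have h2 := hflipν _ hce
            rw [integral_congr_ae (Filter.Eventually.of_forall hodd), integral_neg] at h2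
            linarith
          rw [hzero, zero_add]
        rw [Finset.sum_congr rfl hsplitp]
        have hintl : ∀ p : Fin T × Fin T, Integrable (fun x : Fin T → Fin d → ℝ =>
            Real.sqrt (∑ c, (∑ t, x t c) ^ 2) * (x p.1 ⬝ᵥ ((C - Cstar) *ᵥ x p.2))) ν := by
          intro p
          refine hIν _ (hnc.mul ?_)
          show Continuous fun x : Fin T → Fin d → ℝ =>
            ∑ a, x p.1 a * (∑ c, (C - Cstar) a c * x p.2 c)
          refine continuous_finset_sum _ fun a _ => ?_
          exact ((continuous_apply a).comp (continuous_apply p.1)).fun_mul (by fun_prop)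
        rw [← integral_finset_sum _ (fun p _ => hintl p)]
        have halg : ∀ x : Fin T → Fin d → ℝ,
            (∑ p ∈ P, Real.sqrt (∑ c, (∑ t, x t c) ^ 2) *
              (x p.1 ⬝ᵥ ((C - Cstar) *ᵥ x p.2)))
            = ∑ a, ∑ c, (C - Cstar) a c *
                (Real.sqrt (∑ c', (∑ t, x t c') ^ 2) * (∑ p ∈ P, x p.1 a * x p.2 c)) := by
          intro x
          have hexp : ∀ p : Fin T × Fin T,
              Real.sqrt (∑ c, (∑ t, x t c) ^ 2) * (x p.1 ⬝ᵥ ((C - Cstar) *ᵥ x p.2))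
              = ∑ a, ∑ c, (C - Cstar) a c *
                  (Real.sqrt (∑ c', (∑ t, x t c') ^ 2) * (x p.1 a * x p.2 c)) := by
            intro p
            rw [show (x p.1 ⬝ᵥ ((C - Cstar) *ᵥ x p.2))
              = ∑ a, x p.1 a * (∑ c, (C - Cstar) a c * x p.2 c) from rfl]
            rw [Finset.mul_sum]
            refine Finset.sum_congr rfl fun a _ => ?_
            rw [Finset.mul_sum, Finset.mul_sum]
            refine Finset.sum_congr rfl fun c _ => by ring
          rw [Finset.sum_congr rfl (fun p _ => hexp p), Finset.sum_comm]
          refine Finset.sum_congr rfl fun a _ => ?_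
          rw [Finset.sum_comm]
          refine Finset.sum_congr rfl fun c _ => ?_
          rw [← Finset.mul_sum, ← Finset.mul_sum]
        rw [integral_congr_ae (Filter.Eventually.of_forall halg)]
        have hintac : ∀ a c : Fin d, Integrable (fun x : Fin T → Fin d → ℝ =>
            (C - Cstar) a c *
              (Real.sqrt (∑ c', (∑ t, x t c') ^ 2) * (∑ p ∈ P, x p.1 a * x p.2 c))) ν := by
          intro a c
          refine (hIν _ (hnc.mul (continuous_finset_sum _ fun p _ => ?_))).const_mul _
          exact ((continuous_apply a).comp (continuous_apply p.1)).fun_mul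
            ((continuous_apply c).comp (continuous_apply p.2))
        rw [integral_finset_sum _ (fun a _ => integrable_finset_sum _ fun c _ => hintac a c)]
        refine Finset.sum_congr rfl fun a _ => ?_
        rw [integral_finset_sum _ (fun c _ => hintac a c)]
        refine Finset.sum_congr rfl fun c _ => ?_
        rw [integral_const_mul, hGm a c]
      -- assemble the cross term
      have hsplit1 : ∀ x : Fin T → Fin d → ℝ,
          ((∑ p ∈ P, x p.1 ⬝ᵥ (Cstar *ᵥ x p.2)) + R * Real.sqrt (∑ c, (∑ t, x t c) ^ 2))
            * (∑ p ∈ P, x p.1 ⬝ᵥ Dm (x p.2))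
          = (∑ p ∈ P, x p.1 ⬝ᵥ Dm (x p.2)) * (∑ q ∈ P, x q.1 ⬝ᵥ (Cstar *ᵥ x q.2))
            + R * (Real.sqrt (∑ c, (∑ t, x t c) ^ 2) * (∑ p ∈ P, x p.1 ⬝ᵥ Dm (x p.2))) := by
        intro x; ring
      rw [integral_congr_ae (Filter.Eventually.of_forall hsplit1),
        integral_add (hIν _ (hgDc.fun_mul hgCc)) ((hIν _ (hnc.fun_mul hgDc)).const_mul R),
        integral_const_mul, t1, hW0, t2]
      have hzero : ∀ a c : Fin d,
          (P.card : ℝ) * (S * Cstar * S) a c + R * Gmat a c = 0 := by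
        intro a c
        rw [hSCS a c]
        linear_combination (-(Gmat a c)) * hk
      rw [Finset.mul_sum, Finset.mul_sum, ← Finset.sum_add_distrib]
      refine Finset.sum_eq_zero fun a _ => ?_
      rw [Finset.mul_sum, Finset.mul_sum, ← Finset.sum_add_distrib]
      refine Finset.sum_eq_zero fun c _ => ?_
      linear_combination ((C - Cstar) a c) * hzero a c
    -- put the decomposition together
    have hMsplit : ∀ (y : Fin d → ℝ),
        (y ⬝ᵥ β) • (A *ᵥ y) + C *ᵥ y + δ = Cstar *ᵥ y + Dm y := by
      intro y
      simp only [hDm]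
      rw [Matrix.sub_mulVec]
      abel
    have hpt : ∀ x : Fin T → Fin d → ℝ,
        ((∑ p ∈ P, x p.1 ⬝ᵥ ((x p.2 ⬝ᵥ β) • (A *ᵥ x p.2) + C *ᵥ x p.2 + δ))
          + R * Real.sqrt (∑ c, (∑ t, x t c) ^ 2)) ^ 2
        = ((∑ p ∈ P, x p.1 ⬝ᵥ (Cstar *ᵥ x p.2)) + R * Real.sqrt (∑ c, (∑ t, x t c) ^ 2)) ^ 2
          + (2 * (((∑ p ∈ P, x p.1 ⬝ᵥ (Cstar *ᵥ x p.2))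
              + R * Real.sqrt (∑ c, (∑ t, x t c) ^ 2)) * (∑ p ∈ P, x p.1 ⬝ᵥ Dm (x p.2)))
            + (∑ p ∈ P, x p.1 ⬝ᵥ Dm (x p.2)) ^ 2) := by
      intro x
      have e : (∑ p ∈ P, x p.1 ⬝ᵥ ((x p.2 ⬝ᵥ β) • (A *ᵥ x p.2) + C *ᵥ x p.2 + δ))
          = (∑ p ∈ P, x p.1 ⬝ᵥ (Cstar *ᵥ x p.2)) + ∑ p ∈ P, x p.1 ⬝ᵥ Dm (x p.2) := by
        rw [← Finset.sum_add_distrib]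
        refine Finset.sum_congr rfl fun p _ => ?_
        rw [hMsplit (x p.2), dotProduct_add]
      rw [e]; ring
    have hbasec : Continuous fun x : Fin T → Fin d → ℝ =>
        (∑ p ∈ P, x p.1 ⬝ᵥ (Cstar *ᵥ x p.2)) + R * Real.sqrt (∑ c, (∑ t, x t c) ^ 2) :=
      hgCc.add (continuous_const.mul hnc)
    have hbase : f 0 0 Cstar 0 = ∫ x : Fin T → Fin d → ℝ,
        ((∑ p ∈ P, x p.1 ⬝ᵥ (Cstar *ᵥ x p.2))
          + R * Real.sqrt (∑ c, (∑ t, x t c) ^ 2)) ^ 2 ∂ν := by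
      rw [stepA 0 0 Cstar 0]
      refine integral_congr_ae (Filter.Eventually.of_forall fun x => ?_)
      have e : ∀ p : Fin T × Fin T,
          (x p.2 ⬝ᵥ (0 : Fin d → ℝ)) • ((0 : Matrix (Fin d) (Fin d) ℝ) *ᵥ x p.2)
            + Cstar *ᵥ x p.2 + (0 : Fin d → ℝ) = Cstar *ᵥ x p.2 := by
        intro p
        rw [Matrix.zero_mulVec, smul_zero, zero_add, add_zero]
      simp only [e]
    rw [stepA A β C δ, integral_congr_ae (Filter.Eventually.of_forall hpt),
      integral_add (hIν _ (hbasec.fun_pow 2))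
        (hIν _ ((continuous_const.fun_mul (hbasec.fun_mul hgDc)).fun_add (hgDc.fun_pow 2))),
      integral_add (hIν _ (continuous_const.fun_mul (hbasec.fun_mul hgDc))) (hIν _ (hgDc.fun_pow 2)),
      integral_const_mul, hbase]
    linarith [crossZero]
  -- ## second moment expansion of the gap
  have key2 : ∀ (A : Matrix (Fin d) (Fin d) ℝ) (β : Fin d → ℝ)
      (C : Matrix (Fin d) (Fin d) ℝ) (δ : Fin d → ℝ), ∃ K2 : ℝ, 0 ≤ K2 ∧
      ∫ x : Fin T → Fin d → ℝ,
        (∑ p ∈ P, x p.1 ⬝ᵥ ((x p.2 ⬝ᵥ β) • (A *ᵥ x p.2) + (C - Cstar) *ᵥ x p.2 + δ)) ^ 2 ∂ν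
      = (P.card : ℝ) * ∫ y, (fun y' => (y' ⬝ᵥ β) • (A *ᵥ y') + (C - Cstar) *ᵥ y' + δ) y ⬝ᵥ
            (S *ᵥ (fun y' => (y' ⬝ᵥ β) • (A *ᵥ y') + (C - Cstar) *ᵥ y' + δ) y) ∂m
        + K2 * ((fun a => ∫ y, ((y ⬝ᵥ β) • (A *ᵥ y) + (C - Cstar) *ᵥ y + δ) a ∂m) ⬝ᵥ
            (S *ᵥ fun a => ∫ y, ((y ⬝ᵥ β) • (A *ᵥ y) + (C - Cstar) *ᵥ y + δ) a ∂m)) := by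
    intro A β C δ
    set Dm : (Fin d → ℝ) → Fin d → ℝ :=
      fun y => (y ⬝ᵥ β) • (A *ᵥ y) + (C - Cstar) *ᵥ y + δ with hDm
    have hDc : ∀ a, Continuous fun y => Dm y a := by
      intro a
      show Continuous fun y : Fin d → ℝ =>
        (∑ c, y c * β c) * (∑ c, A a c * y c) + (∑ c, (C - Cstar) a c * y c) + δ a
      fun_prop
    set W0 : ℝ := ∑ a, ∑ b, S a b * ∫ y, Dm y a * Dm y b ∂m with hW0
    set W1 : ℝ := ∑ a, ∑ b, S a b * ((∫ y, Dm y a ∂m) * (∫ y, Dm y b ∂m)) with hW1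
    set K2 : ℝ := ∑ p ∈ P, ∑ q ∈ P, if (¬p = q ∧ p.1 = q.1) then (1 : ℝ) else 0 with hK2
    refine ⟨K2, ?_, ?_⟩
    · refine Finset.sum_nonneg fun p _ => Finset.sum_nonneg fun q _ => ?_
      split_ifs <;> norm_num
    have hintpq : ∀ p q : Fin T × Fin T, Integrable (fun x : Fin T → Fin d → ℝ =>
        (x p.1 ⬝ᵥ Dm (x p.2)) * (x q.1 ⬝ᵥ Dm (x q.2))) ν := by
      intro p q
      refine hIν _ (Continuous.mul ?_ ?_)
      · show Continuous fun x : Fin T → Fin d → ℝ => ∑ a, x p.1 a * Dm (x p.2) a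
        refine continuous_finset_sum _ fun a _ => ?_
        exact ((continuous_apply a).comp (continuous_apply p.1)).fun_mul
          ((hDc a).comp (continuous_apply p.2))
      · show Continuous fun x : Fin T → Fin d → ℝ => ∑ a, x q.1 a * Dm (x q.2) a
        refine continuous_finset_sum _ fun a _ => ?_
        exact ((continuous_apply a).comp (continuous_apply q.1)).fun_mul
          ((hDc a).comp (continuous_apply q.2))
    have e : ∀ x : Fin T → Fin d → ℝ, (∑ p ∈ P, x p.1 ⬝ᵥ Dm (x p.2)) ^ 2
        = ∑ p ∈ P, ∑ q ∈ P, (x p.1 ⬝ᵥ Dm (x p.2)) * (x q.1 ⬝ᵥ Dm (x q.2)) := by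
      intro x
      rw [sq, Finset.sum_mul_sum]
    have step : ∫ x : Fin T → Fin d → ℝ, (∑ p ∈ P, x p.1 ⬝ᵥ Dm (x p.2)) ^ 2 ∂ν
        = ∑ p ∈ P, ∑ q ∈ P, ((if p = q then W0 else 0)
            + (if (¬p = q ∧ p.1 = q.1) then W1 else 0)) := by
      rw [integral_congr_ae (Filter.Eventually.of_forall e),
        integral_finset_sum _ (fun p _ => integrable_finset_sum _ fun q _ => hintpq p q)]
      refine Finset.sum_congr rfl fun p hp => ?_
      rw [integral_finset_sum _ (fun q _ => hintpq p q)]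
      refine Finset.sum_congr rfl fun q hq => ?_
      rw [hterm Dm Dm hDc hDc p q hp hq]
      by_cases h1 : p = q
      · simp [h1, hW0]
      · simp only [h1, if_false, ite_false, not_false_iff, true_and]
        by_cases h2 : p.1 = q.1
        · simp [h1, h2, hW1]
        · simp [h1, h2]
    rw [step]
    have e2 : (∑ p ∈ P, ∑ q ∈ P, ((if p = q then W0 else 0)
        + (if (¬p = q ∧ p.1 = q.1) then W1 else 0)))
        = (P.card : ℝ) * W0 + K2 * W1 := by
      rw [Finset.sum_congr rfl (fun p _ => Finset.sum_add_distrib), Finset.sum_add_distrib]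
      congr 1
      · have e3 : ∀ p ∈ P, (∑ q ∈ P, if p = q then W0 else 0) = W0 := by
          intro p hp
          rw [Finset.sum_ite_eq P p (fun _ => W0), if_pos hp]
        rw [Finset.sum_congr rfl e3, Finset.sum_const, nsmul_eq_mul]
      · rw [hK2, Finset.sum_mul]
        refine Finset.sum_congr rfl fun p _ => ?_
        rw [Finset.sum_mul]
        refine Finset.sum_congr rfl fun q _ => ?_
        split_ifs <;> simp
    rw [e2]
    congr 1
    · congr 1
      have hptw : ∀ y : Fin d → ℝ, Dm y ⬝ᵥ (S *ᵥ Dm y)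
          = ∑ a, ∑ b, S a b * (Dm y a * Dm y b) := by
        intro y
        show (∑ a, Dm y a * (∑ b, S a b * Dm y b)) = _
        refine Finset.sum_congr rfl fun a _ => ?_
        rw [Finset.mul_sum]
        exact Finset.sum_congr rfl fun b _ => by ring
      have hintab : ∀ a b : Fin d, Integrable
          (fun y : Fin d → ℝ => S a b * (Dm y a * Dm y b)) m :=
        fun a b => (hIm _ ((hDc a).mul (hDc b))).const_mul _
      rw [integral_congr_ae (Filter.Eventually.of_forall hptw),
        integral_finset_sum _ (fun a _ => integrable_finset_sum _ fun b _ => hintab a b)]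
      rw [hW0]
      refine Finset.sum_congr rfl fun a _ => ?_
      rw [integral_finset_sum _ (fun b _ => hintab a b)]
      refine Finset.sum_congr rfl fun b _ => ?_
      rw [integral_const_mul]
    · congr 1
      rw [hW1]
      show _ = ∑ a, (∫ y, Dm y a ∂m) * (∑ b, S a b * ∫ y, Dm y b ∂m)
      refine Finset.sum_congr rfl fun a _ => ?_
      rw [Finset.mul_sum]
      refine Finset.sum_congr rfl fun b _ => by ring
  -- ## conclusion
  constructor
  · intro A β C δ
    rw [key A β C δ]
    have h := integral_nonneg (μ := ν) (f := fun x : Fin T → Fin d → ℝ =>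
      (∑ p ∈ P, x p.1 ⬝ᵥ ((x p.2 ⬝ᵥ β) • (A *ᵥ x p.2) + (C - Cstar) *ᵥ x p.2 + δ)) ^ 2)
      (fun x => sq_nonneg _)
    linarith
  · intro A β C δ hmin
    obtain ⟨K2, hK2, hkey2⟩ := key2 A β C δ
    have h1 : f A β C δ ≤ f 0 0 Cstar 0 := hmin 0 0 Cstar 0
    have h2 := key A β C δ
    have hge : 0 ≤ ∫ x : Fin T → Fin d → ℝ,
        (∑ p ∈ P, x p.1 ⬝ᵥ ((x p.2 ⬝ᵥ β) • (A *ᵥ x p.2) + (C - Cstar) *ᵥ x p.2 + δ)) ^ 2 ∂ν :=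
      integral_nonneg fun x => sq_nonneg _
    have hI0 : ∫ x : Fin T → Fin d → ℝ,
        (∑ p ∈ P, x p.1 ⬝ᵥ ((x p.2 ⬝ᵥ β) • (A *ᵥ x p.2) + (C - Cstar) *ᵥ x p.2 + δ)) ^ 2 ∂ν
        = 0 := by linarith
    rw [hI0] at hkey2
    set Dm : (Fin d → ℝ) → Fin d → ℝ :=
      fun y => (y ⬝ᵥ β) • (A *ᵥ y) + (C - Cstar) *ᵥ y + δ with hDm
    have hDc : ∀ a, Continuous fun y => Dm y a := by
      intro a
      show Continuous fun y : Fin d → ℝ =>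
        (∑ c, y c * β c) * (∑ c, A a c * y c) + (∑ c, (C - Cstar) a c * y c) + δ a
      fun_prop
    have hstar : ∀ v : Fin d → ℝ, star v = v := fun v => funext fun i => star_trivial _
    have hQnonneg : 0 ≤ ∫ y, Dm y ⬝ᵥ (S *ᵥ Dm y) ∂m := by
      refine integral_nonneg fun y => ?_
      have := hSpd.posSemidef.dotProduct_mulVec_nonneg (Dm y)
      rwa [hstar] at this
    have hqnonneg : 0 ≤ (fun a => ∫ y, Dm y a ∂m) ⬝ᵥ (S *ᵥ fun a => ∫ y, Dm y a ∂m) := by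
      have := hSpd.posSemidef.dotProduct_mulVec_nonneg (fun a => ∫ y, Dm y a ∂m)
      rwa [hstar] at this
    have hQ0 : ∫ y, Dm y ⬝ᵥ (S *ᵥ Dm y) ∂m = 0 := by
      have hcardQ : (P.card : ℝ) * ∫ y, Dm y ⬝ᵥ (S *ᵥ Dm y) ∂m ≤ 0 := by
        linarith [mul_nonneg hK2 hqnonneg]
      have hcardQ2 : 0 ≤ (P.card : ℝ) * ∫ y, Dm y ⬝ᵥ (S *ᵥ Dm y) ∂m :=
        mul_nonneg (le_of_lt hPpos) hQnonneg
      have := le_antisymm hcardQ hcardQ2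
      rcases mul_eq_zero.1 this with h | h
      · exact absurd h (ne_of_gt hPpos)
      · exact h
    have hDScont : Continuous fun y => Dm y ⬝ᵥ (S *ᵥ Dm y) := by
      show Continuous fun y => ∑ a, Dm y a * (∑ b, S a b * Dm y b)
      refine continuous_finset_sum _ fun a _ => ?_
      exact (hDc a).mul (continuous_finset_sum _ fun b _ => continuous_const.mul (hDc b))
    have hae_m : ∀ᵐ y ∂m, Dm y ⬝ᵥ (S *ᵥ Dm y) = 0 := by
      have h := (integral_eq_zero_iff_of_nonneg (fun y => by
        have := hSpd.posSemidef.dotProduct_mulVec_nonneg (Dm y); rwa [hstar] at this) (hIm _ hDScont)).1 hQ0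
      exact h.mono fun y hy => hy
    have hae_m2 : ∀ᵐ y ∂m, Dm y = 0 := by
      refine hae_m.mono fun y hy => ?_
      by_contra hne
      have := hSpd.dotProduct_mulVec_pos hne
      rw [hstar, hy] at this
      exact lt_irrefl 0 this
    have hset : MeasurableSet {y : Fin d → ℝ | Dm y = 0} := by
      have hDmc : Continuous Dm := continuous_pi hDc
      exact (isClosed_eq hDmc continuous_const).measurableSet
    have hae_μ : ∀ᵐ ω ∂μ, Dm (ℓ 0 ω) = 0 := by
      rw [hm] at hae_m2
      exact (ae_map_iff (hmeas 0).aemeasurable hset).1 hae_m2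
    refine hae_μ.mono fun ω hω => ?_
    simp only [hDm] at hω
    rw [← sub_eq_zero,
      show (ℓ 0 ω ⬝ᵥ β) • (A *ᵥ ℓ 0 ω) + C *ᵥ ℓ 0 ω + δ - Cstar *ᵥ ℓ 0 ω
        = (ℓ 0 ω ⬝ᵥ β) • (A *ᵥ ℓ 0 ω) + (C - Cstar) *ᵥ ℓ 0 ω + δ from by
          rw [Matrix.sub_mulVec]; abel]
    exact hω
end
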